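/- arXiv:1402.7215 — 12 statements merged into one kernel-verified Lean document; each statement's English description precedes it below -/
import Mathlib

section
/- Let x1 < x2, let a, k1, kbar1 : [x1,x2] → ℝ be continuous and strictly positive, let the inheritance kernel be the separable kernel k(x,y) = k1(x)·kbar1(y), let β ≥ 0, K, μ > 0, and set w = (μ·∫_{x1}^{x2} k1(x)/a(x) dx)/(K·∫_{x1}^{x2} k1(x) dx). If β·w < 1, then the model admits a unique positive stationary state (z*, F*); moreover it is given explicitly by z*(x) = μ·k1(x)/(K·(1−βw)·a(x)·∫_{x1}^{x2} k1(s) ds), Z* = ∫_{x1}^{x2} z*(x) dx = w/(1−βw), and F* = (1/(1−βw))·∫_{x1}^{x2} k1(x)·kbar1(x)/a(x) dx. -/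
open MeasureTheory Set

lemma aux_setIntegral_pos {x1 x2 : ℝ} (hx : x1 < x2) {f : ℝ → ℝ}
    (hfi : IntegrableOn f (Icc x1 x2))
    (hf : ∀ᵐ x ∂(volume.restrict (Icc x1 x2)), 0 < f x) :
    0 < ∫ x in Icc x1 x2, f x := by
  set μ := volume.restrict (Icc x1 x2) with hμ
  have hnn : 0 ≤ᵐ[μ] f := hf.mono fun x h => h.le
  rw [integral_pos_iff_support_of_nonneg_ae hnn hfi]
  have h2 : ∀ᵐ x ∂μ, x ∈ Function.support f := hf.mono fun x h => h.ne'
  have h0 : μ (Function.support f)ᶜ = 0 := by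
    simpa [Function.support, Set.compl_setOf] using (ae_iff.mp h2)
  have huniv : μ Set.univ ≤ μ (Function.support f) + μ (Function.support f)ᶜ := by
    calc μ Set.univ = μ (Function.support f ∪ (Function.support f)ᶜ) := by
          rw [Set.union_compl_self]
      _ ≤ _ := measure_union_le _ _
  have hμuniv : 0 < μ Set.univ := by
    rw [hμ, Measure.restrict_apply_univ, Real.volume_Icc]
    exact ENNReal.ofReal_pos.mpr (by linarith)
  rw [h0, add_zero] at huniv
  exact lt_of_lt_of_le hμuniv huniv

lemma aux_setIntegral_pos' {x1 x2 : ℝ} (hx : x1 < x2) {f : ℝ → ℝ}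
    (hfC : ContinuousOn f (Icc x1 x2)) (hfP : ∀ x ∈ Icc x1 x2, 0 < f x) :
    0 < ∫ x in Icc x1 x2, f x := by
  refine aux_setIntegral_pos hx (hfC.integrableOn_Icc) ?_
  filter_upwards [ae_restrict_mem measurableSet_Icc] with x hxm
  exact hfP x hxm

/-- A positive stationary state of the structured predator–prey model
on the trait interval `[x1, x2]` with kernel `k`, vulnerability `a`,
saturation `β`, conversion coefficient `K` and predator mortality `μ`. -/
def IsPositiveStationaryState (x1 x2 β K μ : ℝ) (k : ℝ → ℝ → ℝ) (a : ℝ → ℝ)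
    (z : ℝ → ℝ) (F : ℝ) : Prop :=
  IntegrableOn z (Icc x1 x2) ∧
  (∀ᵐ x ∂(volume.restrict (Icc x1 x2)), 0 < z x) ∧
  0 < F ∧
  (∀ᵐ x ∂(volume.restrict (Icc x1 x2)),
    (∫ y in Icc x1 x2, k x y * z y)
      = F * a x * z x / (1 + β * ∫ s in Icc x1 x2, z s)) ∧
  μ / K = (∫ x in Icc x1 x2, a x * z x) / (1 + β * ∫ s in Icc x1 x2, z s)

/-- for the separable kernel `k(x,y) = k1(x)·kbar1(y)` and `β·w < 1`,
the model has a unique positive stationary state, given by the explicit formulas. -/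
theorem separable_kernel_unique_positive_stationary_state
    (x1 x2 : ℝ) (hx : x1 < x2)
    (a k1 kbar1 : ℝ → ℝ)
    (haC : ContinuousOn a (Icc x1 x2)) (haP : ∀ x ∈ Icc x1 x2, 0 < a x)
    (hk1C : ContinuousOn k1 (Icc x1 x2)) (hk1P : ∀ x ∈ Icc x1 x2, 0 < k1 x)
    (hkbar1C : ContinuousOn kbar1 (Icc x1 x2))
    (hkbar1P : ∀ x ∈ Icc x1 x2, 0 < kbar1 x)
    (β K μ : ℝ) (hβ : 0 ≤ β) (hK : 0 < K) (hμ : 0 < μ)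
    (w : ℝ)
    (hw : w = (μ * ∫ x in Icc x1 x2, k1 x / a x) / (K * ∫ x in Icc x1 x2, k1 x))
    (hβw : β * w < 1)
    (zstar : ℝ → ℝ)
    (hzstar : zstar = fun x =>
      μ * k1 x / (K * (1 - β * w) * a x * ∫ s in Icc x1 x2, k1 s))
    (Fstar : ℝ)
    (hFstar : Fstar = (1 / (1 - β * w)) * ∫ x in Icc x1 x2, k1 x * kbar1 x / a x) :
    IsPositiveStationaryState x1 x2 β K μ (fun x y => k1 x * kbar1 y) a zstar Fstar ∧
    (∫ x in Icc x1 x2, zstar x) = w / (1 - β * w) ∧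
    (∀ z F, IsPositiveStationaryState x1 x2 β K μ (fun x y => k1 x * kbar1 y) a z F →
      F = Fstar ∧ z =ᵐ[volume.restrict (Icc x1 x2)] zstar) := by
  set I1 : ℝ := ∫ x in Icc x1 x2, k1 x with hI1def
  set Ia : ℝ := ∫ x in Icc x1 x2, k1 x / a x with hIadef
  set Ib : ℝ := ∫ x in Icc x1 x2, k1 x * kbar1 x / a x with hIbdef
  set D0 : ℝ := 1 - β * w with hD0def
  clear_value I1 Ia Ib D0
  have haNe : ∀ x ∈ Icc x1 x2, a x ≠ 0 := fun x hx => (haP x hx).ne'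
  have hI1 : 0 < I1 := by rw [hI1def]; exact aux_setIntegral_pos' hx hk1C hk1P
  have hIa : 0 < Ia := by
    rw [hIadef]
    exact aux_setIntegral_pos' hx (hk1C.div haC haNe)
      (fun x hx => div_pos (hk1P x hx) (haP x hx))
  have hIb : 0 < Ib := by
    rw [hIbdef]
    exact aux_setIntegral_pos' hx ((hk1C.mul hkbar1C).div haC haNe)
      (fun x hx => div_pos (mul_pos (hk1P x hx) (hkbar1P x hx)) (haP x hx))
  have hD0 : 0 < D0 := by rw [hD0def]; linarith
  have hw' : w * (K * I1) = μ * Ia := by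
    rw [hw]; field_simp
  -- Z* computation
  have hZ : (∫ x in Icc x1 x2, zstar x) = w / D0 := by
    simp only [hzstar]
    have h1 : ∀ y : ℝ, μ * k1 y / (K * D0 * a y * I1)
        = (μ / (K * D0 * I1)) * (k1 y / a y) := fun y => by ring
    simp only [h1]
    rw [integral_const_mul, ← hIadef, div_mul_eq_mul_div,
      div_eq_div_iff (by positivity) hD0.ne']
    linear_combination (-D0) * hw'
  have hplus : 1 + β * (w / D0) = 1 / D0 := by
    have hne : (1 : ℝ) - β * w ≠ 0 := by have := hD0.ne'; rwa [hD0def] at this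
    rw [hD0def]; field_simp; ring
  -- integrability and positivity of zstar
  have hzC : ContinuousOn zstar (Icc x1 x2) := by
    rw [hzstar]
    exact (continuousOn_const.mul hk1C).div
      (((continuousOn_const.mul haC).mul continuousOn_const))
      (fun x hx => mul_ne_zero (mul_ne_zero (mul_ne_zero hK.ne' hD0.ne')
        (haNe x hx)) hI1.ne')
  have hzi : IntegrableOn zstar (Icc x1 x2) := hzC.integrableOn_Icc
  have hzpos : ∀ x ∈ Icc x1 x2, 0 < zstar x := by
    intro x hxm
    simp only [hzstar]
    exact div_pos (mul_pos hμ (hk1P x hxm))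
      (mul_pos (mul_pos (mul_pos hK hD0) (haP x hxm)) hI1)
  have hFpos : 0 < Fstar := by
    rw [hFstar]; exact mul_pos (by positivity) hIb
  have hCz : (∫ y in Icc x1 x2, kbar1 y * zstar y)
      = (μ / (K * D0 * I1)) * Ib := by
    simp only [hzstar]
    have h1 : ∀ y : ℝ, kbar1 y * (μ * k1 y / (K * D0 * a y * I1))
        = (μ / (K * D0 * I1)) * (k1 y * kbar1 y / a y) := fun y => by ring
    simp only [h1]
    rw [integral_const_mul, ← hIbdef]
  refine ⟨⟨hzi, ?_, hFpos, ?_, ?_⟩, hZ, ?_⟩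
  · filter_upwards [ae_restrict_mem measurableSet_Icc] with x hxm
    exact hzpos x hxm
  · -- stationary equation
    filter_upwards [ae_restrict_mem measurableSet_Icc] with x hxm
    simp only [mul_assoc]
    rw [integral_const_mul, hCz, hZ, hplus, hFstar]
    simp only [hzstar]
    have hax := haNe x hxm
    field_simp
  · -- consistency equation
    have hA : (∫ x in Icc x1 x2, a x * zstar x) = μ / (K * D0) := by
      rw [setIntegral_congr_fun measurableSet_Icc
        (show EqOn (fun x => a x * zstar x)
          (fun x => (μ / (K * D0 * I1)) * k1 x) (Icc x1 x2) by
            intro y hy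
            have hay := haNe y hy
            simp only [hzstar]
            field_simp)]
      rw [integral_const_mul, ← hI1def]
      field_simp
    rw [hA, hZ, hplus]
    field_simp
  · -- uniqueness
    rintro z F ⟨hzi', hzp', hFp', heq', hcons'⟩
    set Z : ℝ := ∫ s in Icc x1 x2, z s with hZdef
    set D : ℝ := 1 + β * Z with hDdef
    have hZnn : 0 ≤ Z := by
      rw [hZdef]
      exact integral_nonneg_of_ae (hzp'.mono fun x h => h.le)
    have hD : 0 < D := by
      have h1 : 0 ≤ β * Z := mul_nonneg hβ hZnn
      rw [hDdef]; linarith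
    set C : ℝ := ∫ y in Icc x1 x2, kbar1 y * z y with hCdef
    clear_value Z D C
    have hCi : IntegrableOn (fun y => kbar1 y * z y) (Icc x1 x2) :=
      hzi'.continuousOn_mul hkbar1C isCompact_Icc
    have hC : 0 < C := by
      rw [hCdef]
      refine aux_setIntegral_pos hx hCi ?_
      filter_upwards [hzp', ae_restrict_mem measurableSet_Icc] with y h1 h2
      exact mul_pos (hkbar1P y h2) h1
    -- pointwise form of z
    have hzform : ∀ᵐ x ∂(volume.restrict (Icc x1 x2)),
        z x = D * C * k1 x / (F * a x) := by
      filter_upwards [heq', ae_restrict_mem measurableSet_Icc] with x h1 h2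
      have hax := haNe x h2
      simp only [mul_assoc] at h1
      rw [integral_const_mul, ← hCdef] at h1
      rw [eq_div_iff (mul_ne_zero hFp'.ne' hax)]
      field_simp [hD.ne'] at h1
      linear_combination -h1
    have hIz : Z = (D * C / F) * Ia := by
      have h2 : ∀ᵐ x ∂(volume.restrict (Icc x1 x2)),
          z x = (D * C / F) * (k1 x / a x) :=
        hzform.mono fun x h => by rw [h]; ring
      rw [hZdef, integral_congr_ae h2, integral_const_mul, ← hIadef]
    have hIaz : (∫ x in Icc x1 x2, a x * z x) = (D * C / F) * I1 := by
      have h2 : ∀ᵐ x ∂(volume.restrict (Icc x1 x2)),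
          a x * z x = (D * C / F) * k1 x := by
        filter_upwards [hzform, ae_restrict_mem measurableSet_Icc] with x h hm
        have hax := haNe x hm
        rw [h]; field_simp
      rw [integral_congr_ae h2, integral_const_mul, ← hI1def]
    have hICb : C = (D * C / F) * Ib := by
      have h2 : ∀ᵐ x ∂(volume.restrict (Icc x1 x2)),
          kbar1 x * z x = (D * C / F) * (k1 x * kbar1 x / a x) := by
        filter_upwards [hzform, ae_restrict_mem measurableSet_Icc] with x h hm
        rw [h]; ring
      conv_lhs => rw [hCdef]
      rw [integral_congr_ae h2, integral_const_mul, ← hIbdef]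
    have hFD : F = D * Ib := by
      have h := hICb
      field_simp [hFp'.ne'] at h
      have h2 : C * F = C * (D * Ib) := by linear_combination C * h
      exact mul_left_cancel₀ hC.ne' h2
    have hmuF : μ * F = K * (C * I1) := by
      have h := hcons'
      rw [hIaz] at h
      field_simp [hK.ne', hFp'.ne', hD.ne'] at h
      have h2 : D * (μ * F) = D * (K * (C * I1)) := by linear_combination D * h
      exact mul_left_cancel₀ hD.ne' h2
    have h3 : Z * F = D * C * Ia := by
      have h := hIz
      field_simp [hFp'.ne'] at h
      linear_combination h
    have h4 : Z * F * μ = D * w * (μ * F) := by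
      calc Z * F * μ = D * C * Ia * μ := by linear_combination μ * h3
        _ = D * C * (w * (K * I1)) := by linear_combination (-(D * C)) * hw'
        _ = D * w * (K * (C * I1)) := by ring
        _ = D * w * (μ * F) := by rw [← hmuF]
    have h5 : Z = D * w := by
      have hne : F * μ ≠ 0 := mul_ne_zero hFp'.ne' hμ.ne'
      have h6 : Z * (F * μ) = (D * w) * (F * μ) := by linear_combination h4
      exact mul_right_cancel₀ hne h6
    have hD1 : D * D0 = 1 := by
      linear_combination hDdef + β * h5 + D * hD0def
    have hFeq : F = Fstar := by
      rw [hFD, hFstar]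
      have hDval : D = 1 / D0 := by rw [eq_div_iff hD0.ne']; exact hD1
      rw [hDval]
    refine ⟨hFeq, ?_⟩
    filter_upwards [hzform, ae_restrict_mem measurableSet_Icc] with x h1 hm
    rw [h1]
    simp only [hzstar]
    have hax := haNe x hm
    rw [div_eq_div_iff (mul_ne_zero hFp'.ne' hax)
      (mul_ne_zero (mul_ne_zero (mul_ne_zero hK.ne' hD0.ne') hax) hI1.ne')]
    linear_combination (C * K * I1 * k1 x * a x) * hD1 - (k1 x * a x) * hmuF
end

section
/- Let n ≥ 1, let α ∈ ℝⁿ with α_i > 0 for all i, and let κ be an n×n real matrix with κ_{j,i} > 0 for all i, j. Then there exists a vector Z ∈ ℝⁿ with Z_j > 0 for all j such that Z_j · (Σ_{i=1}^{n} α_i Z_i) = Σ_{i=1}^{n} κ_{j,i} Z_i for every j = 1, …, n. -/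
open Finset

lemma perron_aux (n : ℕ) (hn : 1 ≤ n)
    (κ : Fin n → Fin n → ℝ) (hκ : ∀ j i, 0 < κ j i) :
    ∃ (lam : ℝ) (x : Fin n → ℝ), 0 < lam ∧ (∀ j, 0 < x j) ∧
      ∀ j, ∑ i, κ j i * x i = lam * x j := by
  have hn' : 0 < n := hn
  haveI : Nonempty (Fin n) := ⟨⟨0, hn'⟩⟩
  set T : ℝ := ∑ j, ∑ i, κ j i with hT_def
  have hrow_pos : ∀ j, 0 < ∑ i, κ j i := fun j =>
    Finset.sum_pos (fun i _ => hκ j i) Finset.univ_nonempty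
  have hT_pos : 0 < T := Finset.sum_pos (fun j _ => hrow_pos j) Finset.univ_nonempty
  have hrow_le : ∀ j, ∑ i, κ j i ≤ T :=
    fun j => Finset.single_le_sum (fun j _ => (hrow_pos j).le) (mem_univ j)
  set R : ℝ := n * T with hR_def
  have hR_nonneg : 0 ≤ R := by positivity
  set S : Set (ℝ × (Fin n → ℝ)) :=
    {p | (0 ≤ p.1 ∧ p.1 ≤ R) ∧ (∀ i, 0 ≤ p.2 i) ∧ (∑ i, p.2 i) = 1 ∧
      ∀ j, p.1 * p.2 j ≤ ∑ i, κ j i * p.2 i} with hS_def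
  -- closedness
  have h1 : IsClosed {p : ℝ × (Fin n → ℝ) | 0 ≤ p.1 ∧ p.1 ≤ R} :=
    (isClosed_le continuous_const continuous_fst).inter
      (isClosed_le continuous_fst continuous_const)
  have h2 : IsClosed {p : ℝ × (Fin n → ℝ) | ∀ i, 0 ≤ p.2 i} := by
    rw [Set.setOf_forall]
    exact isClosed_iInter fun i =>
      isClosed_le continuous_const ((continuous_apply i).comp continuous_snd)
  have h3 : IsClosed {p : ℝ × (Fin n → ℝ) | (∑ i, p.2 i) = 1} :=
    isClosed_eq (continuous_finset_sum _ fun i _ =>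
      (continuous_apply i).comp continuous_snd) continuous_const
  have h4 : IsClosed {p : ℝ × (Fin n → ℝ) |
      ∀ j, p.1 * p.2 j ≤ ∑ i, κ j i * p.2 i} := by
    rw [Set.setOf_forall]
    exact isClosed_iInter fun j =>
      isClosed_le (continuous_fst.mul ((continuous_apply j).comp continuous_snd))
        (continuous_finset_sum _ fun i _ =>
          continuous_const.mul ((continuous_apply i).comp continuous_snd))
  have hSclosed : IsClosed S := h1.inter (h2.inter (h3.inter h4))
  -- S is contained in a compact box
  have hsub : S ⊆ Set.Icc ((0 : ℝ), (0 : Fin n → ℝ)) (R, 1) := by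
    rintro ⟨lam, x⟩ ⟨⟨hl0, hlR⟩, hx0, hxs, _⟩
    constructor
    · exact ⟨hl0, fun i => hx0 i⟩
    · refine ⟨hlR, fun i => ?_⟩
      have := Finset.single_le_sum (fun i _ => hx0 i) (mem_univ i)
      simpa [hxs] using this
  have hScompact : IsCompact S :=
    (isCompact_Icc).of_isClosed_subset hSclosed hsub
  -- S is nonempty, and in fact contains a point with positive first coordinate
  set lam0 : ℝ := (univ : Finset (Fin n)).inf' Finset.univ_nonempty (fun j => ∑ i, κ j i)
    with hlam0_def
  have hlam0_pos : 0 < lam0 := by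
    rw [hlam0_def, Finset.lt_inf'_iff]
    exact fun j _ => hrow_pos j
  have hlam0_le : ∀ j, lam0 ≤ ∑ i, κ j i := fun j =>
    Finset.inf'_le _ (mem_univ j)
  have hx0mem : (lam0, fun _ : Fin n => (n : ℝ)⁻¹) ∈ S := by
    have hninv : (0:ℝ) < (n : ℝ)⁻¹ := by positivity
    refine ⟨⟨hlam0_pos.le, ?_⟩, fun i => hninv.le, ?_, fun j => ?_⟩
    · calc lam0 ≤ ∑ i, κ ⟨0, hn'⟩ i := hlam0_le _
        _ ≤ T := hrow_le _
        _ ≤ R := le_mul_of_one_le_left hT_pos.le (by exact_mod_cast hn)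
    · simp [Finset.sum_const, Finset.card_univ]
      field_simp
    · have : (∑ i, κ j i * (n : ℝ)⁻¹) = (∑ i, κ j i) * (n : ℝ)⁻¹ := by
        rw [Finset.sum_mul]
      rw [this]
      exact mul_le_mul_of_nonneg_right (hlam0_le j) hninv.le
  obtain ⟨p, hpS, hpmax⟩ := hScompact.exists_isMaxOn ⟨_, hx0mem⟩
    continuous_fst.continuousOn
  obtain ⟨⟨hl0, hlR⟩, hx0, hxs, hineq⟩ := hpS
  set lam := p.1 with hlam_def
  set x := p.2 with hx_def
  have hlam_pos : 0 < lam := lt_of_lt_of_le hlam0_pos (hpmax hx0mem)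
  -- the nonlinear image
  set y : Fin n → ℝ := fun j => ∑ i, κ j i * x i with hy_def
  have hxex : ∃ i, 0 < x i := by
    by_contra h
    push_neg at h
    have : ∑ i, x i = 0 :=
      Finset.sum_eq_zero fun i _ => le_antisymm (h i) (hx0 i)
    rw [hxs] at this; norm_num at this
  obtain ⟨i0, hi0⟩ := hxex
  have hy_pos : ∀ j, 0 < y j := fun j =>
    Finset.sum_pos' (fun i _ => mul_nonneg (hκ j i).le (hx0 i))
      ⟨i0, mem_univ i0, mul_pos (hκ j i0) hi0⟩
  -- the maximizer satisfies the eigenvalue equation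
  have heq : ∀ j, y j = lam * x j := by
    by_contra h
    push_neg at h
    obtain ⟨j0, hj0⟩ := h
    have hj0lt : lam * x j0 < y j0 := lt_of_le_of_ne (hineq j0) (Ne.symm hj0)
    have hstrict : ∀ j, lam * y j < ∑ i, κ j i * y i := by
      intro j
      have key : ∑ i, κ j i * y i - lam * y j = ∑ i, κ j i * (y i - lam * x i) := by
        rw [hy_def]
        simp only []
        rw [Finset.mul_sum, ← Finset.sum_sub_distrib]
        exact Finset.sum_congr rfl fun i _ => by ring
      have hpos : 0 < ∑ i, κ j i * (y i - lam * x i) :=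
        Finset.sum_pos' (fun i _ => mul_nonneg (hκ j i).le (by linarith [hineq i]))
          ⟨j0, mem_univ j0, mul_pos (hκ j j0) (by linarith)⟩
      linarith [key, hpos]
    set r : ℝ := (univ : Finset (Fin n)).inf' Finset.univ_nonempty
      (fun j => (∑ i, κ j i * y i) / y j) with hr_def
    have hlam_lt_r : lam < r := by
      rw [hr_def, Finset.lt_inf'_iff]
      intro j _
      rw [lt_div_iff₀ (hy_pos j)]
      calc lam * y j < ∑ i, κ j i * y i := hstrict j
        _ = (∑ i, κ j i * y i) := rfl
    have hr_le : ∀ j, r * y j ≤ ∑ i, κ j i * y i := by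
      intro j
      have := Finset.inf'_le (fun j => (∑ i, κ j i * y i) / y j) (mem_univ j)
      rw [← hr_def] at this
      calc r * y j ≤ ((∑ i, κ j i * y i) / y j) * y j :=
            mul_le_mul_of_nonneg_right this (hy_pos j).le
        _ = ∑ i, κ j i * y i := div_mul_cancel₀ _ (hy_pos j).ne'
    set s : ℝ := ∑ i, y i with hs_def
    have hs_pos : 0 < s := Finset.sum_pos (fun i _ => hy_pos i) Finset.univ_nonempty
    set y' : Fin n → ℝ := fun i => y i / s with hy'_def
    have hy'_pos : ∀ i, 0 < y' i := fun i => div_pos (hy_pos i) hs_pos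
    have hy'_sum : ∑ i, y' i = 1 := by
      rw [hy'_def]; simp only []
      rw [← Finset.sum_div, ← hs_def, div_self hs_pos.ne']
    have hy'_ineq : ∀ j, r * y' j ≤ ∑ i, κ j i * y' i := by
      intro j
      have : ∑ i, κ j i * y' i = (∑ i, κ j i * y i) / s := by
        rw [Finset.sum_div]
        exact Finset.sum_congr rfl fun i _ => by rw [hy'_def]; ring
      rw [this]
      calc r * y' j = (r * y j) / s := by rw [hy'_def]; ring
        _ ≤ (∑ i, κ j i * y i) / s := by gcongr; exact hr_le j
    have hrR : r ≤ R := by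
      obtain ⟨j1, _, hj1⟩ := Finset.exists_le_of_sum_le (Finset.univ_nonempty (α := Fin n))
        (by
          rw [hy'_sum, Finset.sum_const, Finset.card_univ, Fintype.card_fin,
            nsmul_eq_mul]
          field_simp; exact le_rfl : ∑ _i : Fin n, (n:ℝ)⁻¹ ≤ ∑ i, y' i)
      have hy'le1 : ∀ i, y' i ≤ 1 := by
        intro i
        have := Finset.single_le_sum (fun i _ => (hy'_pos i).le) (mem_univ i)
        simpa [hy'_sum] using this
      have h5 : r * (n:ℝ)⁻¹ ≤ T := by
        calc r * (n:ℝ)⁻¹ ≤ r * y' j1 :=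
              mul_le_mul_of_nonneg_left hj1 (by linarith)
          _ ≤ ∑ i, κ j1 i * y' i := hy'_ineq j1
          _ ≤ ∑ i, κ j1 i := Finset.sum_le_sum fun i _ => by
              nlinarith [hκ j1 i, hy'le1 i, hy'_pos i]
          _ ≤ T := hrow_le j1
      have hnpos : (0:ℝ) < n := by exact_mod_cast hn'
      rw [hR_def]
      calc r = r * (n:ℝ)⁻¹ * n := by field_simp
        _ ≤ T * n := mul_le_mul_of_nonneg_right h5 hnpos.le
        _ = n * T := by ring
    have hmem : (r, y') ∈ S :=
      ⟨⟨by linarith, hrR⟩, fun i => (hy'_pos i).le, hy'_sum, hy'_ineq⟩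
    have : r ≤ lam := hpmax hmem
    linarith
  -- positivity of x
  have hx_pos : ∀ j, 0 < x j := by
    intro j
    have h := hy_pos j
    rw [heq j] at h
    nlinarith [hlam_pos]
  exact ⟨lam, x, hlam_pos, hx_pos, fun j => heq j⟩

/-- For `n ≥ 1`, strictly positive `α ∈ ℝⁿ` and a strictly positive
`n × n` matrix `κ`, the nonlinear system `Z_j · (Σ_i α_i Z_i) = Σ_i κ_{j,i} Z_i`
has a strictly positive solution `Z`. -/
theorem finite_rank_scalar_system_has_positive_solution
    (n : ℕ) (hn : 1 ≤ n)
    (α : Fin n → ℝ) (hα : ∀ i, 0 < α i)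
    (κ : Fin n → Fin n → ℝ) (hκ : ∀ j i, 0 < κ j i) :
    ∃ Z : Fin n → ℝ, (∀ j, 0 < Z j) ∧
      ∀ j, Z j * (∑ i, α i * Z i) = ∑ i, κ j i * Z i := by
  have hn' : 0 < n := hn
  haveI : Nonempty (Fin n) := ⟨⟨0, hn'⟩⟩
  obtain ⟨lam, x, hlam, hx, heig⟩ := perron_aux n hn κ hκ
  set a : ℝ := ∑ i, α i * x i with ha_def
  have ha : 0 < a := Finset.sum_pos (fun i _ => mul_pos (hα i) (hx i))
    Finset.univ_nonempty
  set c : ℝ := lam / a with hc_def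
  have hc : 0 < c := div_pos hlam ha
  have hca : c * a = lam := div_mul_cancel₀ _ ha.ne'
  refine ⟨fun j => c * x j, fun j => mul_pos hc (hx j), fun j => ?_⟩
  have h1 : ∑ i, α i * (c * x i) = c * a := by
    rw [ha_def, Finset.mul_sum]
    exact Finset.sum_congr rfl fun i _ => by ring
  have h2 : ∑ i, κ j i * (c * x i) = c * ∑ i, κ j i * x i := by
    rw [Finset.mul_sum]
    exact Finset.sum_congr rfl fun i _ => by ring
  rw [h1, h2, heig j, hca]
  ring
end

section
/- Let x1 < x2, let k_i, kbar_i : [x1,x2] → ℝ (i = 1,…,n) be continuous and nonnegative, let a : [x1,x2] → ℝ be continuous and strictly positive, and let the inheritance kernel be k(x,y) = Σ_{i=1}^{n} k_i(x) kbar_i(y). Assume κ_{i,j} := ∫_{x1}^{x2} kbar_i(x) k_j(x)/a(x) dx > 0 for all i, j = 1,…,n and Σ_{i=1}^{n} k_i(x) > 0 for every x ∈ [x1,x2]. Then for β = 0 the model admits a strictly positive stationary state: there exist F* > 0 and z* ∈ L¹(x1,x2) with z*(x) > 0 for a.e. x such that ∫_{x1}^{x2} k(x,y) z*(y) dy = F*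 a(x) z*(x) for a.e. x and μ/K = ∫_{x1}^{x2} a(x) z*(x) dx. -/
open MeasureTheory Set Finset

attribute [local instance] Matrix.linftyOpNormedRing Matrix.linftyOpNormedAlgebra

open Matrix in
theorem perron_exists {n : ℕ} (hn : 0 < n) (B : Matrix (Fin n) (Fin n) ℝ)
    (hB : ∀ i j, 0 < B i j) :
    ∃ r : ℝ, 0 < r ∧ ∃ c : Fin n → ℝ, (∀ i, 0 < c i) ∧ B *ᵥ c = r • c := by
  classical
  have hne : Nonempty (Fin n) := ⟨⟨0, hn⟩⟩
  -- monotonicity and positivity helpers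
  have hmono : ∀ {p q : Fin n → ℝ}, (∀ i, q i ≤ p i) → ∀ i, (B *ᵥ q) i ≤ (B *ᵥ p) i := by
    intro p q h i
    simp only [Matrix.mulVec, dotProduct]
    exact Finset.sum_le_sum fun j _ => mul_le_mul_of_nonneg_left (h j) (hB i j).le
  have hpos : ∀ (d : Fin n → ℝ), (∀ i, 0 ≤ d i) → d ≠ 0 → ∀ i, 0 < (B *ᵥ d) i := by
    intro d hd hd0 i
    obtain ⟨j, hj⟩ : ∃ j, d j ≠ 0 := by
      by_contra h; push_neg at h; exact hd0 (funext h)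
    exact Finset.sum_pos' (fun j _ => mul_nonneg (hB i j).le (hd j))
      ⟨j, Finset.mem_univ j, mul_pos (hB i j) ((hd j).lt_of_ne (Ne.symm hj))⟩
  set Bc : Matrix (Fin n) (Fin n) ℂ := B.map (fun x : ℝ => (x : ℂ)) with hBcdef
  haveI : CompleteSpace (Matrix (Fin n) (Fin n) ℂ) := FiniteDimensional.complete ℂ _
  haveI : Nontrivial (Matrix (Fin n) (Fin n) ℂ) := by infer_instance
  obtain ⟨ζ, hζmem, hζmax⟩ := spectrum.exists_nnnorm_eq_spectralRadius Bc
  -- eigenvector for ζ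
  have hdet : (algebraMap ℂ (Matrix (Fin n) (Fin n) ℂ) ζ - Bc).det = 0 := by
    have := spectrum.mem_iff.mp hζmem
    by_contra hd
    exact this ((Matrix.isUnit_iff_isUnit_det _).mpr (isUnit_iff_ne_zero.mpr hd))
  obtain ⟨v, hv0, hv⟩ := Matrix.exists_mulVec_eq_zero_iff.mpr hdet
  have hv2 : Bc *ᵥ v = ζ • v := by
    have h1 : algebraMap ℂ (Matrix (Fin n) (Fin n) ℂ) ζ = ζ • (1 : Matrix (Fin n) (Fin n) ℂ) :=
      Algebra.algebraMap_eq_smul_one ζ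
    rw [Matrix.sub_mulVec, h1, Matrix.smul_mulVec, Matrix.one_mulVec, sub_eq_zero] at hv
    exact hv.symm
  set ρ : ℝ := ‖ζ‖ with hρdef
  have hρ0 : 0 ≤ ρ := norm_nonneg ζ
  set u : Fin n → ℝ := fun i => ‖v i‖ with hudef
  have hu0 : ∀ i, 0 ≤ u i := fun i => norm_nonneg _
  have hune : u ≠ 0 := by
    intro h
    apply hv0
    funext i
    have := congrFun h i
    simpa [hudef] using this
  have hentry : ∀ i, ρ * u i ≤ (B *ᵥ u) i := by
    intro i
    have h3 : (Bc *ᵥ v) i = ∑ j, (B i j : ℂ) * v j := by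
      simp [hBcdef, Matrix.mulVec, dotProduct, Matrix.map_apply]
    have h2 : ‖(Bc *ᵥ v) i‖ = ρ * u i := by
      rw [hv2]
      show ‖ζ * v i‖ = ρ * u i
      rw [norm_mul]
    calc ρ * u i = ‖∑ j, (B i j : ℂ) * v j‖ := by rw [← h3, h2]
      _ ≤ ∑ j, ‖(B i j : ℂ) * v j‖ := norm_sum_le _ _
      _ = ∑ j, B i j * u j := by
          refine Finset.sum_congr rfl fun j _ => ?_
          rw [norm_mul, Complex.norm_real, Real.norm_eq_abs, abs_of_nonneg (hB i j).le]
      _ = (B *ᵥ u) i := rfl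
  -- claim B *ᵥ u = ρ • u
  have hkey : B *ᵥ u = ρ • u := by
    by_contra hne2
    obtain ⟨w, hwdef⟩ : ∃ w : Fin n → ℝ, w = B *ᵥ u := ⟨_, rfl⟩
    have hw : ∀ i, 0 < w i := by rw [hwdef]; exact hpos u hu0 hune
    have hentry' : ∀ i, ρ * u i ≤ w i := by rw [hwdef]; exact hentry
    have hne2' : w ≠ ρ • u := by rw [hwdef]; exact hne2
    have hd : ∀ i, 0 ≤ (w - ρ • u) i := fun i => by
      simpa [sub_nonneg] using hentry' i
    have hd0 : (w - ρ • u) ≠ 0 := fun h => hne2' (by rwa [sub_eq_zero] at h)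
    have hstrict : ∀ i, ρ * w i < (B *ᵥ w) i := by
      intro i
      have h1 := hpos _ hd hd0 i
      have h2 : B *ᵥ (w - ρ • u) = B *ᵥ w - ρ • w := by
        rw [Matrix.mulVec_sub, Matrix.mulVec_smul, hwdef]
      rw [h2] at h1
      have := h1
      simp only [Pi.sub_apply, Pi.smul_apply, smul_eq_mul, sub_pos] at this
      exact this
    -- the Collatz–Wielandt value
    set s : ℝ := Finset.univ.inf' (Finset.univ_nonempty) (fun i => (B *ᵥ w) i / w i) with hsdef
    have hsρ : ρ < s := by
      rw [hsdef, Finset.lt_inf'_iff]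
      exact fun i _ => (lt_div_iff₀ (hw i)).mpr (by simpa [mul_comm] using hstrict i)
    have hs0 : 0 < s := lt_of_le_of_lt hρ0 hsρ
    have hsw : ∀ i, s * w i ≤ (B *ᵥ w) i := by
      intro i
      have : s ≤ (B *ᵥ w) i / w i := Finset.inf'_le _ (Finset.mem_univ i)
      exact (le_div_iff₀ (hw i)).mp this |>.trans_eq rfl
    -- iterate
    have hiter : ∀ m : ℕ, ∀ i, s ^ m * w i ≤ ((B ^ m) *ᵥ w) i := by
      intro m
      induction m with
      | zero => intro i; simp [Matrix.one_mulVec]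
      | succ m ih =>
          intro i
          have h1 : (B ^ (m + 1)) *ᵥ w = B *ᵥ ((B ^ m) *ᵥ w) := by
            rw [Matrix.mulVec_mulVec, ← pow_succ']
          have h2 : ∀ i, (B *ᵥ (fun j => s ^ m * w j)) i ≤ (B *ᵥ ((B ^ m) *ᵥ w)) i :=
            hmono ih
          have h3 : (B *ᵥ (fun j => s ^ m * w j)) i = s ^ m * (B *ᵥ w) i := by
            have : (fun j => s ^ m * w j) = (s ^ m) • w := by funext j; simp
            rw [this, Matrix.mulVec_smul]; simp
          have h4 : s ^ (m + 1) * w i ≤ s ^ m * (B *ᵥ w) i := by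
            have h5 := mul_le_mul_of_nonneg_left (hsw i) (pow_nonneg hs0.le m)
            calc s ^ (m + 1) * w i = s ^ m * (s * w i) := by ring
              _ ≤ s ^ m * (B *ᵥ w) i := h5
          rw [h1]
          exact h4.trans (h3 ▸ h2 i)
    -- pass to complex matrices and norms
    set wc : Fin n → ℂ := fun i => (w i : ℂ) with hwcdef
    have hcast : ∀ (m : ℕ) (i : Fin n), ((Bc ^ m) *ᵥ wc) i = ((((B ^ m) *ᵥ w) i : ℝ) : ℂ) := by
      intro m i
      have hpow : Bc ^ m = (B ^ m).map (fun x : ℝ => (x : ℂ)) := by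
        have h1 : Bc = Complex.ofRealHom.mapMatrix B := rfl
        have h2 : (B ^ m).map (fun x : ℝ => (x : ℂ)) = Complex.ofRealHom.mapMatrix (B ^ m) := rfl
        rw [h1, h2, map_pow]
      rw [hpow]
      simp only [Matrix.mulVec, dotProduct, Matrix.map_apply, hwcdef]
      push_cast
      rfl
    set i0 : Fin n := ⟨0, hn⟩ with hi0def
    have hwc0 : 0 < ‖wc‖ := by
      have : wc i0 ≠ 0 := by
        simp only [hwcdef]
        exact_mod_cast (hw i0).ne'
      have : wc ≠ 0 := fun h => this (by rw [h]; rfl)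
      exact norm_pos_iff.mpr this
    have hlb : ∀ m : ℕ, s ^ m * w i0 ≤ ‖Bc ^ m‖ * ‖wc‖ := by
      intro m
      have h1 : s ^ m * w i0 ≤ ((B ^ m) *ᵥ w) i0 := hiter m i0
      have h2 : ((B ^ m) *ᵥ w) i0 ≤ ‖((Bc ^ m) *ᵥ wc) i0‖ := by
        rw [hcast m i0, Complex.norm_real, Real.norm_eq_abs]
        exact le_abs_self _
      have h3 : ‖((Bc ^ m) *ᵥ wc) i0‖ ≤ ‖(Bc ^ m) *ᵥ wc‖ := norm_le_pi_norm _ i0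
      have h4 : ‖(Bc ^ m) *ᵥ wc‖ ≤ ‖Bc ^ m‖ * ‖wc‖ := Matrix.linfty_opNorm_mulVec _ _
      linarith
    -- Gelfand
    set t : ℝ := (ρ + s) / 2 with htdef
    have hρt : ρ < t := by rw [htdef]; linarith
    have hts : t < s := by rw [htdef]; linarith
    have ht0 : 0 < t := lt_of_le_of_lt hρ0 hρt
    have hgel := spectrum.pow_norm_pow_one_div_tendsto_nhds_spectralRadius Bc
    rw [← hζmax] at hgel
    have hsr : (‖ζ‖₊ : ENNReal) < ENNReal.ofReal t := by
      rw [show (‖ζ‖₊ : ENNReal) = ENNReal.ofReal ‖ζ‖ from (ENNReal.ofReal_eq_coe_nnreal (norm_nonneg ζ)).symm]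
      exact (ENNReal.ofReal_lt_ofReal_iff ht0).mpr (by exact hρt)
    have hev : ∀ᶠ m : ℕ in Filter.atTop,
        ENNReal.ofReal (‖Bc ^ m‖ ^ (1 / (m : ℝ))) < ENNReal.ofReal t :=
      hgel.eventually_lt_const hsr
    have hgrow : Filter.Tendsto (fun m : ℕ => (s / t) ^ m) Filter.atTop Filter.atTop :=
      tendsto_pow_atTop_atTop_of_one_lt ((one_lt_div ht0).mpr hts)
    have hev2 : ∀ᶠ m : ℕ in Filter.atTop, ‖wc‖ / w i0 ≤ (s / t) ^ m :=
      hgrow.eventually_ge_atTop _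
    obtain ⟨m, hm⟩ := ((Filter.eventually_ge_atTop 1).and (hev.and hev2)).exists
    obtain ⟨hm1, hmlt, hmge⟩ := hm
    -- derive ‖Bc ^ m‖ < t ^ m
    have hx0 : (0 : ℝ) ≤ ‖Bc ^ m‖ := norm_nonneg _
    have hlt : ‖Bc ^ m‖ ^ (1 / (m : ℝ)) < t := (ENNReal.ofReal_lt_ofReal_iff ht0).mp hmlt
    have hm0 : (m : ℝ) ≠ 0 := Nat.cast_ne_zero.mpr (by omega)
    have hxm : ‖Bc ^ m‖ < t ^ m := by
      have h1 : (‖Bc ^ m‖ ^ (1 / (m : ℝ))) ^ (m : ℝ) < t ^ (m : ℝ) :=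
        Real.rpow_lt_rpow (Real.rpow_nonneg hx0 _) hlt (by positivity)
      rwa [← Real.rpow_mul hx0, one_div, inv_mul_cancel₀ hm0, Real.rpow_one,
        Real.rpow_natCast] at h1
    -- contradiction
    have hcross : ‖wc‖ * t ^ m ≤ s ^ m * w i0 := by
      have := hmge
      rw [div_pow, div_le_div_iff₀ (hw i0) (by positivity : (0:ℝ) < t ^ m)] at this
      linarith
    have := hlb m
    nlinarith [mul_lt_mul_of_pos_right hxm hwc0]
  -- conclude
  have hBu := hpos u hu0 hune
  have hρpos : 0 < ρ := by
    obtain ⟨i, hi⟩ : ∃ i, 0 < u i := by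
      by_contra h; push_neg at h
      exact hune (funext fun i => le_antisymm (h i) (hu0 i))
    have := hBu i
    rw [hkey] at this
    simp only [Pi.smul_apply, smul_eq_mul] at this
    nlinarith
  refine ⟨ρ, hρpos, u, fun i => ?_, hkey⟩
  have := hBu i
  rw [hkey] at this
  simp only [Pi.smul_apply, smul_eq_mul] at this
  nlinarith

/-- Lemma 2.1: for a finite-rank kernel
`k(x,y) = Σ_i k_i(x) kbar_i(y)` with `κ_{i,j} = ∫ kbar_i k_j / a > 0` and
`Σ_i k_i > 0`, the model with `β = 0` admits a strictly positive stationary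
state. -/
theorem finite_rank_kernel_positive_stationary_state_beta_zero
    (x1 x2 : ℝ) (hx : x1 < x2) (n : ℕ)
    (k kbar : Fin n → ℝ → ℝ)
    (hkC : ∀ i, ContinuousOn (k i) (Icc x1 x2))
    (hkbarC : ∀ i, ContinuousOn (kbar i) (Icc x1 x2))
    (hkN : ∀ i, ∀ x ∈ Icc x1 x2, 0 ≤ k i x)
    (hkbarN : ∀ i, ∀ x ∈ Icc x1 x2, 0 ≤ kbar i x)
    (a : ℝ → ℝ) (haC : ContinuousOn a (Icc x1 x2))
    (haP : ∀ x ∈ Icc x1 x2, 0 < a x)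
    (K μ : ℝ) (hK : 0 < K) (hμ : 0 < μ)
    (hκ : ∀ i j, 0 < ∫ x in Icc x1 x2, kbar i x * k j x / a x)
    (hksum : ∀ x ∈ Icc x1 x2, 0 < ∑ i, k i x) :
    ∃ (Fstar : ℝ) (zstar : ℝ → ℝ),
      0 < Fstar ∧
      IntegrableOn zstar (Icc x1 x2) ∧
      (∀ᵐ x ∂(volume.restrict (Icc x1 x2)), 0 < zstar x) ∧
      (∀ᵐ x ∂(volume.restrict (Icc x1 x2)),
        (∫ y in Icc x1 x2, (∑ i, k i x * kbar i y) * zstar y)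
          = Fstar * a x * zstar x) ∧
      μ / K = ∫ x in Icc x1 x2, a x * zstar x := by
  classical
  have hx1 : x1 ∈ Icc x1 x2 := ⟨le_refl _, hx.le⟩
  have hn : 0 < n := by
    rcases Nat.eq_zero_or_pos n with h | h
    · exfalso; have h2 := hksum x1 hx1; subst h; simp at h2
    · exact h
  have hmeas : MeasurableSet (Icc x1 x2) := measurableSet_Icc
  have hcpt : IsCompact (Icc x1 x2) := isCompact_Icc
  have haNe : ∀ x ∈ Icc x1 x2, a x ≠ 0 := fun x hxm => (haP x hxm).ne'
  -- the matrix κ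
  set B : Matrix (Fin n) (Fin n) ℝ :=
    Matrix.of (fun i j => ∫ x in Icc x1 x2, kbar i x * k j x / a x) with hBdef
  obtain ⟨r, hr, c, hc, hBc⟩ := perron_exists hn B (fun i j => hκ i j)
  -- the function g = ∑ c i * k i
  set g : ℝ → ℝ := fun x => ∑ i, c i * k i x with hgdef
  have hgC : ContinuousOn g (Icc x1 x2) :=
    continuousOn_finset_sum _ fun i _ => continuousOn_const.mul (hkC i)
  have hgpos : ∀ x ∈ Icc x1 x2, 0 < g x := by
    intro x hxm
    obtain ⟨i, hi⟩ : ∃ i, 0 < k i x := by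
      by_contra h; push_neg at h
      have : ∑ i, k i x ≤ 0 := Finset.sum_nonpos fun i _ => h i
      linarith [hksum x hxm]
    refine Finset.sum_pos' (fun i _ => mul_nonneg (hc i).le (hkN i x hxm)) ?_
    exact ⟨i, Finset.mem_univ i, mul_pos (hc i) hi⟩
  have hgInt : IntegrableOn g (Icc x1 x2) := hgC.integrableOn_compact hcpt
  have hI0 : 0 < ∫ x in Icc x1 x2, g x := by
    refine (setIntegral_pos_iff_support_of_nonneg_ae ?_ hgInt).mpr ?_
    · refine (ae_restrict_iff' hmeas).mpr (Filter.Eventually.of_forall fun x hxm => ?_)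
      simpa using (hgpos x hxm).le
    · refine lt_of_lt_of_le ?_ (measure_mono
        (fun x hxm => (⟨(hgpos x hxm).ne', hxm⟩ :
          x ∈ Function.support g ∩ Icc x1 x2)))
      rw [Real.volume_Icc]
      exact ENNReal.ofReal_pos.mpr (by linarith)
  set I0 : ℝ := ∫ x in Icc x1 x2, g x with hI0def
  set s0 : ℝ := (μ / K) / I0 with hs0def
  have hs0 : 0 < s0 := div_pos (div_pos hμ hK) hI0
  obtain ⟨z, hzdef⟩ : ∃ z : ℝ → ℝ, z = fun x => s0 * (g x / a x) := ⟨_, rfl⟩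
  have hz : ∀ x, z x = s0 * (g x / a x) := fun x => by rw [hzdef]
  have hzC : ContinuousOn z (Icc x1 x2) := by
    rw [hzdef]; exact continuousOn_const.mul (hgC.div haC haNe)
  have hzInt : IntegrableOn z (Icc x1 x2) := hzC.integrableOn_compact hcpt
  -- integrability of the kernel pieces
  have hkerC : ∀ i j, ContinuousOn (fun y => kbar i y * k j y / a y) (Icc x1 x2) :=
    fun i j => ((hkbarC i).mul (hkC j)).div haC haNe
  -- key integral computation
  have hIker : ∀ i, (∫ y in Icc x1 x2, kbar i y * z y) = s0 * (r * c i) := by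
    intro i
    have hptw : ∀ y, kbar i y * z y = ∑ j, (c j * s0) * (kbar i y * k j y / a y) := by
      intro y
      rw [hz, hgdef]
      simp only [Finset.sum_div, Finset.mul_sum]
      exact Finset.sum_congr rfl fun j _ => by ring
    calc (∫ y in Icc x1 x2, kbar i y * z y)
        = ∫ y in Icc x1 x2, ∑ j, (c j * s0) * (kbar i y * k j y / a y) := by
          exact integral_congr_ae (Filter.Eventually.of_forall fun y => hptw y)
      _ = ∑ j, ∫ y in Icc x1 x2, (c j * s0) * (kbar i y * k j y / a y) := by
          refine integral_finset_sum _ fun j _ => ?_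
          exact (continuousOn_const.mul (hkerC i j)).integrableOn_compact hcpt
      _ = ∑ j, (c j * s0) * B i j := by
          exact Finset.sum_congr rfl fun j _ => MeasureTheory.integral_const_mul _ _
      _ = s0 * (B.mulVec c) i := by
          simp only [Matrix.mulVec, dotProduct, Finset.mul_sum]
          exact Finset.sum_congr rfl fun j _ => by ring
      _ = s0 * (r * c i) := by rw [hBc]; rfl
  refine ⟨r, z, hr, hzInt, ?_, ?_, ?_⟩
  · refine (ae_restrict_iff' hmeas).mpr (Filter.Eventually.of_forall fun x hxm => ?_)
    rw [hz]
    exact mul_pos hs0 (div_pos (hgpos x hxm) (haP x hxm))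
  · refine (ae_restrict_iff' hmeas).mpr (Filter.Eventually.of_forall fun x hxm => ?_)
    have hax : a x ≠ 0 := haNe x hxm
    calc (∫ y in Icc x1 x2, (∑ i, k i x * kbar i y) * z y)
        = ∫ y in Icc x1 x2, ∑ i, k i x * (kbar i y * z y) := by
          refine integral_congr_ae (Filter.Eventually.of_forall fun y => ?_)
          show (∑ i, k i x * kbar i y) * z y = ∑ i, k i x * (kbar i y * z y)
          rw [Finset.sum_mul]
          exact Finset.sum_congr rfl fun i _ => by ring
      _ = ∑ i, ∫ y in Icc x1 x2, k i x * (kbar i y * z y) := by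
          refine integral_finset_sum _ fun i _ => ?_
          exact (continuousOn_const.mul ((hkbarC i).mul hzC)).integrableOn_compact hcpt
      _ = ∑ i, k i x * (s0 * (r * c i)) := by
          refine Finset.sum_congr rfl fun i _ => ?_
          rw [MeasureTheory.integral_const_mul, hIker i]
      _ = r * s0 * ∑ i, c i * k i x := by
          rw [Finset.mul_sum]
          exact Finset.sum_congr rfl fun i _ => by ring
      _ = r * a x * z x := by
          rw [hz, hgdef]
          field_simp
  · have hcong : ∀ x ∈ Icc x1 x2, a x * z x = s0 * g x := by
      intro x hxm
      rw [hz]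
      field_simp [haNe x hxm]
    rw [setIntegral_congr_fun hmeas hcong, MeasureTheory.integral_const_mul, ← hI0def,
      hs0def, div_mul_cancel₀ _ hI0.ne']
end

section
/- Let x1 < x2, let k : [x1,x2]² → ℝ be continuous with k(x,y) > 0 for all (x,y), and let A, K, μ > 0. Then there exists exactly one pair (z*, F*) with z* ∈ L¹(x1,x2) strictly positive a.e. and F* > 0 such that F*·A·z*(x) = ∫_{x1}^{x2} k(x,y) z*(y) dy for a.e. x ∈ [x1,x2] and ∫_{x1}^{x2} z*(x) dx = μ/(K·A). -/
open MeasureTheory Set Filter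

namespace Thm22

variable {x1 x2 : ℝ} {k : ℝ → ℝ → ℝ} {m M : ℝ}

/-- the integral operator -/
noncomputable def T (x1 x2 : ℝ) (k : ℝ → ℝ → ℝ) (f : ℝ → ℝ) : ℝ → ℝ :=
  fun x => ∫ y in Icc x1 x2, k x y * f y

lemma kc_right (hkC : ContinuousOn (Function.uncurry k) (Icc x1 x2 ×ˢ Icc x1 x2))
    {x : ℝ} (hxI : x ∈ Icc x1 x2) : ContinuousOn (k x) (Icc x1 x2) := by
  have h : ContinuousOn (fun y => Function.uncurry k (x, y)) (Icc x1 x2) :=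
    hkC.comp (Continuous.continuousOn (by continuity)) (fun y hy => ⟨hxI, hy⟩)
  simpa [Function.uncurry] using h

lemma integrable_integrand
    (hkC : ContinuousOn (Function.uncurry k) (Icc x1 x2 ×ˢ Icc x1 x2))
    (hbd : ∀ x ∈ Icc x1 x2, ∀ y ∈ Icc x1 x2, m ≤ k x y ∧ k x y ≤ M)
    (hm : 0 < m) {f : ℝ → ℝ} (hf : IntegrableOn f (Icc x1 x2))
    {x : ℝ} (hxI : x ∈ Icc x1 x2) :
    IntegrableOn (fun y => k x y * f y) (Icc x1 x2) := by
  have hmeas : AEStronglyMeasurable (fun y => k x y * f y) (volume.restrict (Icc x1 x2)) :=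
    ((kc_right hkC hxI).aestronglyMeasurable measurableSet_Icc).mul hf.aestronglyMeasurable
  refine Integrable.mono' (hf.norm.const_mul M) hmeas ?_
  rw [ae_restrict_iff' measurableSet_Icc]
  filter_upwards with y hy
  have h1 := (hbd x hxI y hy).1
  have h2 := (hbd x hxI y hy).2
  have : |k x y| ≤ M := by rw [abs_of_pos (lt_of_lt_of_le hm h1)]; exact h2
  calc ‖k x y * f y‖ = |k x y| * ‖f y‖ := by rw [norm_mul]; rfl
  _ ≤ M * ‖f y‖ := by
      exact mul_le_mul_of_nonneg_right this (norm_nonneg _)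

end Thm22

namespace Thm22

lemma T_lower
    (hkC : ContinuousOn (Function.uncurry k) (Icc x1 x2 ×ˢ Icc x1 x2))
    (hbd : ∀ x ∈ Icc x1 x2, ∀ y ∈ Icc x1 x2, m ≤ k x y ∧ k x y ≤ M)
    (hm : 0 < m) {f : ℝ → ℝ} (hf : IntegrableOn f (Icc x1 x2))
    (hf0 : ∀ᵐ y ∂(volume.restrict (Icc x1 x2)), 0 ≤ f y)
    {x : ℝ} (hxI : x ∈ Icc x1 x2) :
    m * ∫ y in Icc x1 x2, f y ≤ T x1 x2 k f x := by
  rw [show m * ∫ y in Icc x1 x2, f y = ∫ y in Icc x1 x2, m * f y from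
    (integral_const_mul m f).symm]
  refine integral_mono_ae (hf.const_mul m) (integrable_integrand hkC hbd hm hf hxI) ?_
  rw [EventuallyLE, ae_restrict_iff' measurableSet_Icc] at *
  filter_upwards [hf0] with y h0 hy
  exact mul_le_mul_of_nonneg_right ((hbd x hxI y hy).1) (h0 hy)

lemma T_upper
    (hkC : ContinuousOn (Function.uncurry k) (Icc x1 x2 ×ˢ Icc x1 x2))
    (hbd : ∀ x ∈ Icc x1 x2, ∀ y ∈ Icc x1 x2, m ≤ k x y ∧ k x y ≤ M)
    (hm : 0 < m) {f : ℝ → ℝ} (hf : IntegrableOn f (Icc x1 x2))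
    (hf0 : ∀ᵐ y ∂(volume.restrict (Icc x1 x2)), 0 ≤ f y)
    {x : ℝ} (hxI : x ∈ Icc x1 x2) :
    T x1 x2 k f x ≤ M * ∫ y in Icc x1 x2, f y := by
  rw [show M * ∫ y in Icc x1 x2, f y = ∫ y in Icc x1 x2, M * f y from
    (integral_const_mul M f).symm]
  refine integral_mono_ae (integrable_integrand hkC hbd hm hf hxI) (hf.const_mul M) ?_
  rw [EventuallyLE, ae_restrict_iff' measurableSet_Icc] at *
  filter_upwards [hf0] with y h0 hy
  exact mul_le_mul_of_nonneg_right ((hbd x hxI y hy).2) (h0 hy)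

lemma T_aesm
    (hkC : ContinuousOn (Function.uncurry k) (Icc x1 x2 ×ˢ Icc x1 x2))
    {f : ℝ → ℝ} (hf : IntegrableOn f (Icc x1 x2)) :
    AEStronglyMeasurable (T x1 x2 k f) (volume.restrict (Icc x1 x2)) := by
  have hprod : AEStronglyMeasurable (fun p : ℝ × ℝ => k p.1 p.2 * f p.2)
      ((volume.restrict (Icc x1 x2)).prod (volume.restrict (Icc x1 x2))) := by
    rw [Measure.prod_restrict]
    refine AEStronglyMeasurable.mul ?_ ?_
    · exact hkC.aestronglyMeasurable (measurableSet_Icc.prod measurableSet_Icc)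
    · have h1 : AEStronglyMeasurable (fun p : ℝ × ℝ => f p.2)
          ((volume.restrict (Icc x1 x2)).prod (volume.restrict (Icc x1 x2))) :=
        hf.aestronglyMeasurable.comp_snd
      rwa [Measure.prod_restrict] at h1
  exact hprod.integral_prod_right'

lemma T_integrableOn
    (hkC : ContinuousOn (Function.uncurry k) (Icc x1 x2 ×ˢ Icc x1 x2))
    (hbd : ∀ x ∈ Icc x1 x2, ∀ y ∈ Icc x1 x2, m ≤ k x y ∧ k x y ≤ M)
    (hm : 0 < m) {f : ℝ → ℝ} (hf : IntegrableOn f (Icc x1 x2))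
    (hf0 : ∀ᵐ y ∂(volume.restrict (Icc x1 x2)), 0 ≤ f y) :
    IntegrableOn (T x1 x2 k f) (Icc x1 x2) := by
  refine Integrable.mono' (integrable_const (M * ∫ y in Icc x1 x2, f y)) (T_aesm hkC hf) ?_
  rw [ae_restrict_iff' measurableSet_Icc]
  filter_upwards with x hxI
  have h1 := T_lower hkC hbd hm hf hf0 hxI
  have h2 := T_upper hkC hbd hm hf hf0 hxI
  rw [Real.norm_eq_abs, abs_le]
  constructor
  · refine le_trans ?_ h1
    have hint : 0 ≤ ∫ y in Icc x1 x2, f y := integral_nonneg_of_ae hf0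
    nlinarith [hm.le]
  · exact h2

end Thm22

namespace Thm22

lemma T_sub_linear
    (hkC : ContinuousOn (Function.uncurry k) (Icc x1 x2 ×ˢ Icc x1 x2))
    (hbd : ∀ x ∈ Icc x1 x2, ∀ y ∈ Icc x1 x2, m ≤ k x y ∧ k x y ≤ M)
    (hm : 0 < m) {f g : ℝ → ℝ} (hf : IntegrableOn f (Icc x1 x2))
    (hg : IntegrableOn g (Icc x1 x2)) (c : ℝ) {x : ℝ} (hxI : x ∈ Icc x1 x2) :
    T x1 x2 k (fun y => f y - c * g y) x = T x1 x2 k f x - c * T x1 x2 k g x := by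
  have h1 : IntegrableOn (fun y => k x y * f y) (Icc x1 x2) :=
    integrable_integrand hkC hbd hm hf hxI
  have h2 : IntegrableOn (fun y => k x y * g y) (Icc x1 x2) :=
    integrable_integrand hkC hbd hm hg hxI
  have : T x1 x2 k (fun y => f y - c * g y) x
      = ∫ y in Icc x1 x2, (k x y * f y - c * (k x y * g y)) := by
    unfold T; congr 1; ext y; ring
  rw [this, integral_sub h1 (h2.const_mul c), integral_const_mul]
  rfl

/-- The key one-step contraction lemma. -/
lemma contract_step
    (hkC : ContinuousOn (Function.uncurry k) (Icc x1 x2 ×ˢ Icc x1 x2))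
    (hbd : ∀ x ∈ Icc x1 x2, ∀ y ∈ Icc x1 x2, m ≤ k x y ∧ k x y ≤ M)
    (hm : 0 < m) (hmM : m ≤ M)
    {f g : ℝ → ℝ} (hf : IntegrableOn f (Icc x1 x2)) (hg : IntegrableOn g (Icc x1 x2))
    (hg0 : ∀ᵐ y ∂(volume.restrict (Icc x1 x2)), 0 ≤ g y)
    (hJ : 0 < ∫ y in Icc x1 x2, g y)
    {α β : ℝ}
    (hlo : ∀ᵐ y ∂(volume.restrict (Icc x1 x2)), α * g y ≤ f y)
    (hhi : ∀ᵐ y ∂(volume.restrict (Icc x1 x2)), f y ≤ β * g y) :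
    α ≤ α + (m/M) * ((∫ y in Icc x1 x2, f y)/(∫ y in Icc x1 x2, g y) - α) ∧
    β - (m/M) * (β - (∫ y in Icc x1 x2, f y)/(∫ y in Icc x1 x2, g y)) ≤ β ∧
    (∀ x ∈ Icc x1 x2,
      (α + (m/M) * ((∫ y in Icc x1 x2, f y)/(∫ y in Icc x1 x2, g y) - α)) * T x1 x2 k g x
        ≤ T x1 x2 k f x ∧
      T x1 x2 k f x
        ≤ (β - (m/M) * (β - (∫ y in Icc x1 x2, f y)/(∫ y in Icc x1 x2, g y))) * T x1 x2 k g x) := by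
  set J := ∫ y in Icc x1 x2, g y with hJdef
  set Jf := ∫ y in Icc x1 x2, f y with hJfdef
  have hM : 0 < M := lt_of_lt_of_le hm hmM
  have hJne : J ≠ 0 := ne_of_gt hJ
  -- integral comparisons
  have hJf_lo : α * J ≤ Jf := by
    rw [hJfdef, hJdef, ← integral_const_mul]
    exact integral_mono_ae (hg.const_mul α) hf hlo
  have hJf_hi : Jf ≤ β * J := by
    rw [hJfdef, hJdef, ← integral_const_mul]
    exact integral_mono_ae hf (hg.const_mul β) hhi
  have hq_lo : 0 ≤ Jf / J - α := by
    rw [sub_nonneg, le_div_iff₀ hJ]; linarith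
  have hq_hi : 0 ≤ β - Jf / J := by
    rw [sub_nonneg, div_le_iff₀ hJ]; linarith
  have hmM0 : 0 ≤ m / M := div_nonneg hm.le hM.le
  refine ⟨by nlinarith, by nlinarith, ?_⟩
  intro x hxI
  have hTg_hi : T x1 x2 k g x ≤ M * J := T_upper hkC hbd hm hg hg0 hxI
  constructor
  · -- lower bound
    have hh : IntegrableOn (fun y => f y - α * g y) (Icc x1 x2) := hf.sub (hg.const_mul α)
    have hh0 : ∀ᵐ y ∂(volume.restrict (Icc x1 x2)), 0 ≤ f y - α * g y := by
      filter_upwards [hlo] with y h; linarith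
    have h1 : m * ∫ y in Icc x1 x2, (f y - α * g y) ≤ T x1 x2 k (fun y => f y - α * g y) x :=
      T_lower hkC hbd hm hh hh0 hxI
    have h2 : ∫ y in Icc x1 x2, (f y - α * g y) = Jf - α * J := by
      rw [integral_sub hf (hg.const_mul α), integral_const_mul]
    rw [h2, T_sub_linear hkC hbd hm hf hg α hxI] at h1
    have h3 : (m/M) * (Jf/J - α) * T x1 x2 k g x ≤ (m/M) * (Jf/J - α) * (M * J) :=
      mul_le_mul_of_nonneg_left hTg_hi (by positivity)
    have e1 : Jf / J * J = Jf := div_mul_cancel₀ _ hJne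
    have h4 : (m/M) * (Jf/J - α) * (M * J) = m * (Jf - α * J) := by
      calc (m/M) * (Jf/J - α) * (M * J) = m * (Jf/J * J - α * J) * (M/M) := by ring
      _ = m * (Jf/J * J - α * J) := by rw [div_self hM.ne', mul_one]
      _ = m * (Jf - α * J) := by rw [e1]
    nlinarith
  · -- upper bound
    have hh : IntegrableOn (fun y => β * g y - f y) (Icc x1 x2) := (hg.const_mul β).sub hf
    have hh0 : ∀ᵐ y ∂(volume.restrict (Icc x1 x2)), 0 ≤ β * g y - f y := by
      filter_upwards [hhi] with y h; linarith
    have h1 : m * ∫ y in Icc x1 x2, (β * g y - f y) ≤ T x1 x2 k (fun y => β * g y - f y) x :=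
      T_lower hkC hbd hm hh hh0 hxI
    have h2 : ∫ y in Icc x1 x2, (β * g y - f y) = β * J - Jf := by
      rw [integral_sub (hg.const_mul β) hf, integral_const_mul]
    have h2' : T x1 x2 k (fun y => β * g y - f y) x = β * T x1 x2 k g x - T x1 x2 k f x := by
      have := T_sub_linear hkC hbd hm (f := fun y => β * g y) (g := f)
        (hg.const_mul β) hf 1 hxI
      simp only [one_mul] at this
      rw [show (fun y => β * g y - f y) = (fun y => (fun y => β * g y) y - 1 * f y) from
        by ext y; ring] at this ⊢
      rw [this]
      have : T x1 x2 k (fun y => β * g y) x = β * T x1 x2 k g x := by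
        unfold T; rw [← integral_const_mul]; congr 1; ext y; ring
      rw [this]
    rw [h2, h2'] at h1
    have h3 : (m/M) * (β - Jf/J) * T x1 x2 k g x ≤ (m/M) * (β - Jf/J) * (M * J) :=
      mul_le_mul_of_nonneg_left hTg_hi (by positivity)
    have e1 : Jf / J * J = Jf := div_mul_cancel₀ _ hJne
    have h4 : (m/M) * (β - Jf/J) * (M * J) = m * (β * J - Jf) := by
      calc (m/M) * (β - Jf/J) * (M * J) = m * (β * J - Jf/J * J) * (M/M) := by ring
      _ = m * (β * J - Jf/J * J) := by rw [div_self hM.ne', mul_one]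
      _ = m * (β * J - Jf) := by rw [e1]
    nlinarith

end Thm22

namespace Thm22
variable {x1 x2 : ℝ} {k : ℝ → ℝ → ℝ} {m M : ℝ}

/-- recursive lower-bound sequence -/
noncomputable def aseq (c : ℝ) (u : ℕ → ℝ) (a0 : ℝ) : ℕ → ℝ
  | 0 => a0
  | n+1 => aseq c u a0 n + c * (u n - aseq c u a0 n)

lemma theta_lt_one (hm : 0 < m) (hmM : m ≤ M) : 0 ≤ 1 - m/M ∧ 1 - m/M < 1 := by
  have hM : 0 < M := lt_of_lt_of_le hm hmM
  constructor
  · have : m / M ≤ 1 := (div_le_one hM).2 hmM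
    linarith
  · have : 0 < m / M := div_pos hm hM
    linarith

/-- Core uniqueness lemma for pointwise eigenfunctions. -/
lemma eigen_unique
    (hL : x1 < x2)
    (hkC : ContinuousOn (Function.uncurry k) (Icc x1 x2 ×ˢ Icc x1 x2))
    (hbd : ∀ x ∈ Icc x1 x2, ∀ y ∈ Icc x1 x2, m ≤ k x y ∧ k x y ≤ M)
    (hm : 0 < m) (hmM : m ≤ M)
    {z z' : ℝ → ℝ} {lam lam' c0 : ℝ} (hc0 : 0 < c0)
    (hl : 0 < lam) (hl' : 0 < lam')
    (hz : IntegrableOn z (Icc x1 x2)) (hz' : IntegrableOn z' (Icc x1 x2))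
    (hz0 : ∀ᵐ y ∂(volume.restrict (Icc x1 x2)), 0 ≤ z y)
    (hz0' : ∀ᵐ y ∂(volume.restrict (Icc x1 x2)), 0 ≤ z' y)
    (hzint : (∫ y in Icc x1 x2, z y) = c0)
    (hzint' : (∫ y in Icc x1 x2, z' y) = c0)
    (heig : ∀ x ∈ Icc x1 x2, T x1 x2 k z x = lam * z x)
    (heig' : ∀ x ∈ Icc x1 x2, T x1 x2 k z' x = lam' * z' x) :
    lam = lam' ∧ ∀ x ∈ Icc x1 x2, z x = z' x := by
  have hM : 0 < M := lt_of_lt_of_le hm hmM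
  set θ : ℝ := 1 - m/M with hθdef
  obtain ⟨hθ0, hθ1⟩ := theta_lt_one hm hmM
  set s : ℝ := lam / lam' with hsdef
  have hs : 0 < s := div_pos hl hl'
  set a0 : ℝ := m * lam' / (M * lam) with ha0def
  set b0 : ℝ := M * lam' / (m * lam) with hb0def
  have ha0 : 0 < a0 := by positivity
  have hab0 : a0 ≤ b0 := by
    rw [ha0def, hb0def, div_le_div_iff₀ (by positivity) (by positivity)]
    nlinarith [mul_pos hl hl', mul_le_mul hmM hmM hm.le hM.le]
  set d0 : ℝ := b0 - a0 with hd0def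
  have hd0 : 0 ≤ d0 := by rw [hd0def]; linarith
  set a : ℕ → ℝ := aseq (m/M) (fun n => s^n) a0 with hadef
  set b : ℕ → ℝ := fun n => a n + θ^n * d0 with hbdef
  -- pointwise bounds on z, z'
  have hzlo : ∀ x ∈ Icc x1 x2, m * c0 / lam ≤ z x := by
    intro x hxI
    have h := T_lower hkC hbd hm hz hz0 hxI
    rw [heig x hxI, hzint] at h
    rw [div_le_iff₀ hl]; linarith
  have hzhi : ∀ x ∈ Icc x1 x2, z x ≤ M * c0 / lam := by
    intro x hxI
    have h := T_upper hkC hbd hm hz hz0 hxI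
    rw [heig x hxI, hzint] at h
    rw [le_div_iff₀ hl]; linarith
  have hzlo' : ∀ x ∈ Icc x1 x2, m * c0 / lam' ≤ z' x := by
    intro x hxI
    have h := T_lower hkC hbd hm hz' hz0' hxI
    rw [heig' x hxI, hzint'] at h
    rw [div_le_iff₀ hl']; linarith
  have hzhi' : ∀ x ∈ Icc x1 x2, z' x ≤ M * c0 / lam' := by
    intro x hxI
    have h := T_upper hkC hbd hm hz' hz0' hxI
    rw [heig' x hxI, hzint'] at h
    rw [le_div_iff₀ hl']; linarith
  have hz'posI : ∀ x ∈ Icc x1 x2, 0 ≤ z' x := by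
    intro x hxI
    exact le_trans (by positivity) (hzlo' x hxI)
  have hsl : s * lam' = lam := div_mul_cancel₀ lam hl'.ne'
  have ha_succ : ∀ n, a (n+1) = a n + (m/M) * (s^n - a n) := fun n => by
    rw [hadef]; rfl
  have hb_succ : ∀ n, b (n+1) = b n - (m/M) * (b n - s^n) := fun n => by
    simp only [hbdef, ha_succ n, hθdef, pow_succ]; ring
  have hJ' : 0 < ∫ y in Icc x1 x2, z' y := by rw [hzint']; exact hc0
  -- one step
  have key : ∀ n : ℕ, (∀ x ∈ Icc x1 x2,
      a n * z' x ≤ s^n * z x ∧ s^n * z x ≤ b n * z' x) →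
      ((∀ x ∈ Icc x1 x2,
        a (n+1) * z' x ≤ s^(n+1) * z x ∧ s^(n+1) * z x ≤ b (n+1) * z' x)
        ∧ a n ≤ a (n+1) ∧ b (n+1) ≤ b n) := by
    intro n hn
    have hf : IntegrableOn (fun x => s^n * z x) (Icc x1 x2) := hz.const_mul _
    have hlo : ∀ᵐ y ∂(volume.restrict (Icc x1 x2)), a n * z' y ≤ s^n * z y :=
      (ae_restrict_iff' measurableSet_Icc).2 (Eventually.of_forall fun y hy => (hn y hy).1)
    have hhi : ∀ᵐ y ∂(volume.restrict (Icc x1 x2)), s^n * z y ≤ b n * z' y :=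
      (ae_restrict_iff' measurableSet_Icc).2 (Eventually.of_forall fun y hy => (hn y hy).2)
    obtain ⟨h1, h2, h3⟩ := contract_step hkC hbd hm hmM hf hz' hz0' hJ' hlo hhi
    have hQ : (∫ y in Icc x1 x2, s^n * z y)/(∫ y in Icc x1 x2, z' y) = s^n := by
      rw [integral_const_mul, hzint, hzint']
      field_simp
    rw [hQ] at h1 h2 h3
    rw [← ha_succ n] at h1 h3
    rw [← hb_succ n] at h2 h3
    have hTf : ∀ x ∈ Icc x1 x2, T x1 x2 k (fun y => s^n * z y) x = s^n * (lam * z x) := by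
      intro x hxI
      have : T x1 x2 k (fun y => s^n * z y) x = s^n * T x1 x2 k z x := by
        unfold T; rw [← integral_const_mul]; congr 1; ext y; ring
      rw [this, heig x hxI]
    refine ⟨?_, h1, h2⟩
    intro x hxI
    obtain ⟨hlo2, hhi2⟩ := h3 x hxI
    rw [hTf x hxI, heig' x hxI] at hlo2 hhi2
    constructor
    · rw [← mul_le_mul_iff_of_pos_right hl']
      calc a (n+1) * z' x * lam' = a (n+1) * (lam' * z' x) := by ring
      _ ≤ s^n * (lam * z x) := hlo2
      _ = s^(n+1) * z x * lam' := by rw [pow_succ]; rw [show s^n * s * z x * lam' = s^n * (s * lam' * z x) from by ring, hsl]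
    · rw [← mul_le_mul_iff_of_pos_right hl']
      calc s^(n+1) * z x * lam' = s^n * (lam * z x) := by rw [pow_succ]; rw [show s^n * s * z x * lam' = s^n * (s * lam' * z x) from by ring, hsl]
      _ ≤ b (n+1) * (lam' * z' x) := hhi2
      _ = b (n+1) * z' x * lam' := by ring
  -- the invariant
  have hinv : ∀ n : ℕ, (∀ x ∈ Icc x1 x2,
      a n * z' x ≤ s^n * z x ∧ s^n * z x ≤ b n * z' x) := by
    intro n
    induction n with
    | zero =>
      intro x hxI
      have e1 : a0 * (M * c0 / lam') = m * c0 / lam := by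
        rw [ha0def]; field_simp
      have e2 : b0 * (m * c0 / lam') = M * c0 / lam := by
        rw [hb0def]; field_simp
      have hA0 : a 0 = a0 := by rw [hadef]; rfl
      have hB0 : b 0 = b0 := by simp only [hbdef, pow_zero, one_mul, hd0def]; rw [hadef]; show a0 + (b0 - a0) = b0; ring
      rw [hA0, hB0]
      simp only [pow_zero, one_mul]
      constructor
      · calc a0 * z' x ≤ a0 * (M * c0 / lam') :=
            mul_le_mul_of_nonneg_left (hzhi' x hxI) ha0.le
        _ = m * c0 / lam := e1
        _ ≤ z x := hzlo x hxI
      · have hb0pos : 0 ≤ b0 := le_trans ha0.le hab0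
        calc z x ≤ M * c0 / lam := hzhi x hxI
        _ = b0 * (m * c0 / lam') := e2.symm
        _ ≤ b0 * z' x := mul_le_mul_of_nonneg_left (hzlo' x hxI) hb0pos
    | succ n ih => exact (key n ih).1
  have hmono : ∀ n, a 0 ≤ a n := by
    intro n
    induction n with
    | zero => exact le_refl _
    | succ n ih => exact le_trans ih (key n (hinv n)).2.1
  have hbmono : ∀ n, b n ≤ b 0 := by
    intro n
    induction n with
    | zero => exact le_refl _
    | succ n ih => exact le_trans (key n (hinv n)).2.2 ih
  have hsand : ∀ n, a n ≤ s^n ∧ s^n ≤ b n := by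
    intro n
    have h1 : ∫ y in Icc x1 x2, a n * z' y ≤ ∫ y in Icc x1 x2, s^n * z y := by
      refine integral_mono_ae (hz'.const_mul _) (hz.const_mul _) ?_
      exact (ae_restrict_iff' measurableSet_Icc).2
        (Eventually.of_forall fun y hy => (hinv n y hy).1)
    have h2 : ∫ y in Icc x1 x2, s^n * z y ≤ ∫ y in Icc x1 x2, b n * z' y := by
      refine integral_mono_ae (hz.const_mul _) (hz'.const_mul _) ?_
      exact (ae_restrict_iff' measurableSet_Icc).2
        (Eventually.of_forall fun y hy => (hinv n y hy).2)
    rw [integral_const_mul, integral_const_mul, hzint, hzint'] at h1 h2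
    constructor
    · have := le_of_mul_le_mul_right (by linarith : a n * c0 ≤ s^n * c0) hc0
      exact this
    · exact le_of_mul_le_mul_right (by linarith : s^n * c0 ≤ b n * c0) hc0
  have hA0 : a 0 = a0 := by rw [hadef]; rfl
  have hs1 : s = 1 := by
    by_contra hne
    rcases lt_or_gt_of_ne hne with hlt | hgt
    · have htend : Filter.Tendsto (fun n : ℕ => s^n) Filter.atTop (nhds 0) :=
        tendsto_pow_atTop_nhds_zero_of_lt_one hs.le hlt
      have hev : ∀ᶠ n : ℕ in Filter.atTop, s^n < a0 := htend.eventually_lt_const ha0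
      obtain ⟨n, hn⟩ := hev.exists
      have : a0 ≤ s^n := by rw [← hA0]; exact le_trans (hmono n) (hsand n).1
      linarith
    · have htend : Filter.Tendsto (fun n : ℕ => s^n) Filter.atTop Filter.atTop :=
        tendsto_pow_atTop_atTop_of_one_lt hgt
      have hev := htend.eventually_gt_atTop (b 0)
      obtain ⟨n, hn⟩ := hev.exists
      have : s^n ≤ b 0 := le_trans (hsand n).2 (hbmono n)
      linarith
  have hlamlam : lam = lam' := by
    rw [hsdef, div_eq_one_iff_eq hl'.ne'] at hs1
    exact hs1
  refine ⟨hlamlam, ?_⟩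
  intro x hxI
  have habs : ∀ n : ℕ, |z x - z' x| ≤ θ^n * (d0 * z' x) := by
    intro n
    obtain ⟨hlo2, hhi2⟩ := hinv n x hxI
    rw [hs1, one_pow, one_mul] at hlo2 hhi2
    obtain ⟨hsa, hsb⟩ := hsand n
    rw [hs1, one_pow] at hsa hsb
    have hbma : b n - a n = θ^n * d0 := by simp only [hbdef]; ring
    have hz'x : 0 ≤ z' x := hz'posI x hxI
    rw [abs_sub_le_iff]
    constructor
    · nlinarith [mul_le_mul_of_nonneg_right hsb hz'x]
    · nlinarith [mul_le_mul_of_nonneg_right hsa hz'x]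
  have ht0 : Filter.Tendsto (fun n : ℕ => θ^n * (d0 * z' x)) Filter.atTop (nhds 0) := by
    have := (tendsto_pow_atTop_nhds_zero_of_lt_one hθ0 hθ1).mul_const (d0 * z' x)
    simpa using this
  have h0 : |z x - z' x| ≤ 0 := ge_of_tendsto' ht0 habs
  have he : z x - z' x = 0 := abs_eq_zero.mp (le_antisymm h0 (abs_nonneg _))
  linarith

end Thm22

namespace Thm22
variable {x1 x2 : ℝ} {k : ℝ → ℝ → ℝ} {m M : ℝ}

/-- power iteration sequence -/
noncomputable def fseq (x1 x2 : ℝ) (k : ℝ → ℝ → ℝ) : ℕ → ℝ → ℝ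
  | 0 => fun _ => 1
  | n+1 => T x1 x2 k (fseq x1 x2 k n)

set_option maxHeartbeats 4000000 in
lemma eigen_exists
    (hL : x1 < x2)
    (hkC : ContinuousOn (Function.uncurry k) (Icc x1 x2 ×ˢ Icc x1 x2))
    (hbd : ∀ x ∈ Icc x1 x2, ∀ y ∈ Icc x1 x2, m ≤ k x y ∧ k x y ≤ M)
    (hm : 0 < m) (hmM : m ≤ M) :
    ∃ (z : ℝ → ℝ) (lam : ℝ), 0 < lam ∧ IntegrableOn z (Icc x1 x2) ∧
      (∀ x ∈ Icc x1 x2, m/(M*(x2-x1)) ≤ z x ∧ z x ≤ M/(m*(x2-x1))) ∧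
      (∀ x ∈ Icc x1 x2, T x1 x2 k z x = lam * z x) ∧
      (∫ y in Icc x1 x2, z y) = 1 := by
  have hM : 0 < M := lt_of_lt_of_le hm hmM
  set L : ℝ := x2 - x1 with hLdef
  have hLpos : 0 < L := by rw [hLdef]; linarith
  have hvol : (volume (Icc x1 x2)).toReal = L := by
    rw [Real.volume_Icc, ENNReal.toReal_ofReal hLpos.le]
  have hvol' : volume.real (Icc x1 x2) = L := hvol
  obtain ⟨hθ0, hθ1⟩ := theta_lt_one hm hmM
  set θ : ℝ := 1 - m/M with hθdef
  -- basic package for fseq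
  have hpkg : ∀ n : ℕ, IntegrableOn (fseq x1 x2 k n) (Icc x1 x2)
      ∧ (∀ x ∈ Icc x1 x2, 0 < fseq x1 x2 k n x)
      ∧ 0 < ∫ y in Icc x1 x2, fseq x1 x2 k n y := by
    intro n
    induction n with
    | zero =>
      refine ⟨integrableOn_const measure_Icc_lt_top.ne, fun x _ => one_pos, ?_⟩
      simp only [fseq, integral_const, measure_univ, smul_eq_mul, mul_one]
      rw [measureReal_restrict_apply_univ, hvol']
      exact hLpos
    | succ n ih =>
      obtain ⟨hint, hpos, hIpos⟩ := ih
      have h0 : ∀ᵐ y ∂(volume.restrict (Icc x1 x2)), 0 ≤ fseq x1 x2 k n y :=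
        (ae_restrict_iff' measurableSet_Icc).2 (Eventually.of_forall fun y hy => (hpos y hy).le)
      have hint' : IntegrableOn (fseq x1 x2 k (n+1)) (Icc x1 x2) :=
        T_integrableOn hkC hbd hm hint h0
      have hpos' : ∀ x ∈ Icc x1 x2, 0 < fseq x1 x2 k (n+1) x := by
        intro x hxI
        have := T_lower hkC hbd hm hint h0 hxI
        have h2 : 0 < m * ∫ y in Icc x1 x2, fseq x1 x2 k n y := by positivity
        exact lt_of_lt_of_le h2 this
      refine ⟨hint', hpos', ?_⟩
      have hc : ∀ x ∈ Icc x1 x2,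
          m * (∫ y in Icc x1 x2, fseq x1 x2 k n y) ≤ fseq x1 x2 k (n+1) x :=
        fun x hxI => T_lower hkC hbd hm hint h0 hxI
      have hmono := integral_mono_ae (μ := volume.restrict (Icc x1 x2))
        (integrable_const (m * ∫ y in Icc x1 x2, fseq x1 x2 k n y)) hint'
        ((ae_restrict_iff' measurableSet_Icc).2 (Eventually.of_forall hc))
      rw [setIntegral_const, hvol', smul_eq_mul] at hmono
      have : 0 < L * (m * ∫ y in Icc x1 x2, fseq x1 x2 k n y) := by positivity
      linarith
  have hIpos : ∀ n, 0 < ∫ y in Icc x1 x2, fseq x1 x2 k n y := fun n => (hpkg n).2.2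
  have hg0ae : ∀ n, ∀ᵐ y ∂(volume.restrict (Icc x1 x2)), 0 ≤ fseq x1 x2 k n y :=
    fun n => (ae_restrict_iff' measurableSet_Icc).2
      (Eventually.of_forall fun y hy => ((hpkg n).2.1 y hy).le)
  have hI0 : (∫ y in Icc x1 x2, fseq x1 x2 k 0 y) = L := by
    show (∫ y in Icc x1 x2, (1:ℝ)) = L
    rw [setIntegral_const, hvol', smul_eq_mul, mul_one]
  set R : ℕ → ℝ := fun n =>
    (∫ y in Icc x1 x2, fseq x1 x2 k (n+1) y) / (∫ y in Icc x1 x2, fseq x1 x2 k n y)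
    with hRdef
  set a : ℕ → ℝ := aseq (m/M) R (m*L) with hadef
  set d0 : ℝ := (M - m) * L with hd0def
  have hd0 : 0 ≤ d0 := mul_nonneg (by linarith) hLpos.le
  set b : ℕ → ℝ := fun n => a n + θ^n * d0 with hbdef
  have ha0 : a 0 = m * L := by rw [hadef]; rfl
  have hb0 : b 0 = M * L := by
    simp only [hbdef, pow_zero, one_mul, ha0, hd0def]; ring
  have ha_succ : ∀ n, a (n+1) = a n + (m/M) * (R n - a n) := fun n => by
    rw [hadef]; rfl
  have hb_succ : ∀ n, b (n+1) = b n - (m/M) * (b n - R n) := fun n => by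
    simp only [hbdef, ha_succ n, hθdef, pow_succ]; ring
  -- one step
  have key : ∀ n : ℕ, (∀ x ∈ Icc x1 x2,
      a n * fseq x1 x2 k n x ≤ fseq x1 x2 k (n+1) x ∧
      fseq x1 x2 k (n+1) x ≤ b n * fseq x1 x2 k n x) →
      ((∀ x ∈ Icc x1 x2,
        a (n+1) * fseq x1 x2 k (n+1) x ≤ fseq x1 x2 k (n+2) x ∧
        fseq x1 x2 k (n+2) x ≤ b (n+1) * fseq x1 x2 k (n+1) x)
        ∧ a n ≤ a (n+1) ∧ b (n+1) ≤ b n) := by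
    intro n hn
    have hlo : ∀ᵐ y ∂(volume.restrict (Icc x1 x2)),
        a n * fseq x1 x2 k n y ≤ fseq x1 x2 k (n+1) y :=
      (ae_restrict_iff' measurableSet_Icc).2 (Eventually.of_forall fun y hy => (hn y hy).1)
    have hhi : ∀ᵐ y ∂(volume.restrict (Icc x1 x2)),
        fseq x1 x2 k (n+1) y ≤ b n * fseq x1 x2 k n y :=
      (ae_restrict_iff' measurableSet_Icc).2 (Eventually.of_forall fun y hy => (hn y hy).2)
    obtain ⟨h1, h2, h3⟩ := contract_step hkC hbd hm hmM (hpkg (n+1)).1 (hpkg n).1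
      (hg0ae n) (hIpos n) hlo hhi
    have hQ : (∫ y in Icc x1 x2, fseq x1 x2 k (n+1) y) /
        (∫ y in Icc x1 x2, fseq x1 x2 k n y) = R n := rfl
    rw [hQ, ← ha_succ n] at h1
    rw [hQ, ← hb_succ n] at h2
    rw [hQ, ← ha_succ n, ← hb_succ n] at h3
    exact ⟨fun x hxI => h3 x hxI, h1, h2⟩
  -- base case of invariant
  have hinv : ∀ n : ℕ, ∀ x ∈ Icc x1 x2,
      a n * fseq x1 x2 k n x ≤ fseq x1 x2 k (n+1) x ∧
      fseq x1 x2 k (n+1) x ≤ b n * fseq x1 x2 k n x := by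
    intro n
    induction n with
    | zero =>
      intro x hxI
      have hlo := T_lower hkC hbd hm (hpkg 0).1 (hg0ae 0) hxI
      have hhi := T_upper hkC hbd hm (hpkg 0).1 (hg0ae 0) hxI
      rw [hI0] at hlo hhi
      have hone : fseq x1 x2 k 0 x = 1 := rfl
      constructor
      · rw [ha0, hone, mul_one]; exact hlo
      · rw [hb0, hone, mul_one]; exact hhi
    | succ n ih => exact (key n ih).1
  have hamono : Monotone a :=
    monotone_nat_of_le_succ (fun n => (key n (hinv n)).2.1)
  have hbmono : ∀ n, b n ≤ b 0 := by
    intro n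
    induction n with
    | zero => exact le_refl _
    | succ n ih => exact le_trans (key n (hinv n)).2.2 ih
  have hsand : ∀ n, a n ≤ R n ∧ R n ≤ b n := by
    intro n
    have h1 : ∫ y in Icc x1 x2, a n * fseq x1 x2 k n y
        ≤ ∫ y in Icc x1 x2, fseq x1 x2 k (n+1) y := by
      refine integral_mono_ae ((hpkg n).1.const_mul _) (hpkg (n+1)).1 ?_
      exact (ae_restrict_iff' measurableSet_Icc).2
        (Eventually.of_forall fun y hy => (hinv n y hy).1)
    have h2 : ∫ y in Icc x1 x2, fseq x1 x2 k (n+1) y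
        ≤ ∫ y in Icc x1 x2, b n * fseq x1 x2 k n y := by
      refine integral_mono_ae (hpkg (n+1)).1 ((hpkg n).1.const_mul _) ?_
      exact (ae_restrict_iff' measurableSet_Icc).2
        (Eventually.of_forall fun y hy => (hinv n y hy).2)
    rw [integral_const_mul] at h1 h2
    constructor
    · rw [hRdef]
      rw [le_div_iff₀ (hIpos n)]
      exact h1
    · rw [hRdef]
      rw [div_le_iff₀ (hIpos n)]
      exact h2
  have haab : ∀ n, a n ≤ b n := by
    intro n
    have := (hsand n).1.trans (hsand n).2
    exact this
  have hbddA : BddAbove (Set.range a) := by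
    refine ⟨b 0, ?_⟩
    rintro _ ⟨n, rfl⟩
    exact (haab n).trans (hbmono n)
  set lam : ℝ := ⨆ n, a n with hlamdef
  have ha_tend : Filter.Tendsto a Filter.atTop (nhds lam) :=
    tendsto_atTop_ciSup hamono hbddA
  have hlam_lb : m * L ≤ lam := by
    rw [← ha0, hlamdef]; exact le_ciSup hbddA 0
  have hlam_pos : 0 < lam := lt_of_lt_of_le (by positivity) hlam_lb
  have hθtend : Filter.Tendsto (fun n : ℕ => θ^n * d0) Filter.atTop (nhds 0) := by
    have := (tendsto_pow_atTop_nhds_zero_of_lt_one hθ0 hθ1).mul_const d0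
    simpa using this
  have hb_tend : Filter.Tendsto b Filter.atTop (nhds lam) := by
    have := ha_tend.add hθtend
    simpa using this
  have hR_tend : Filter.Tendsto R Filter.atTop (nhds lam) :=
    tendsto_of_tendsto_of_tendsto_of_le_of_le ha_tend hb_tend
      (fun n => (hsand n).1) (fun n => (hsand n).2)
  -- normalised iterates
  set znum : ℕ → ℝ → ℝ :=
    fun n x => fseq x1 x2 k n x / (∫ y in Icc x1 x2, fseq x1 x2 k n y) with hzndef
  set blo : ℝ := m / (M * L) with hblodef
  set Bhi : ℝ := M / (m * L) with hBhidef
  have hblo : 0 < blo := by rw [hblodef]; positivity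
  have hBhi : 0 < Bhi := by rw [hBhidef]; positivity
  have hIbdd : ∀ n, m * (∫ y in Icc x1 x2, fseq x1 x2 k n y) * L
        ≤ (∫ y in Icc x1 x2, fseq x1 x2 k (n+1) y)
      ∧ (∫ y in Icc x1 x2, fseq x1 x2 k (n+1) y)
        ≤ M * (∫ y in Icc x1 x2, fseq x1 x2 k n y) * L := by
    intro n
    have hlo : ∀ x ∈ Icc x1 x2,
        m * (∫ y in Icc x1 x2, fseq x1 x2 k n y) ≤ fseq x1 x2 k (n+1) x :=
      fun x hxI => T_lower hkC hbd hm (hpkg n).1 (hg0ae n) hxI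
    have hhi : ∀ x ∈ Icc x1 x2,
        fseq x1 x2 k (n+1) x ≤ M * (∫ y in Icc x1 x2, fseq x1 x2 k n y) :=
      fun x hxI => T_upper hkC hbd hm (hpkg n).1 (hg0ae n) hxI
    constructor
    · have := integral_mono_ae (μ := volume.restrict (Icc x1 x2))
        (integrable_const _) (hpkg (n+1)).1
        ((ae_restrict_iff' measurableSet_Icc).2 (Eventually.of_forall hlo))
      rw [setIntegral_const, hvol', smul_eq_mul] at this
      linarith
    · have := integral_mono_ae (μ := volume.restrict (Icc x1 x2))
        (hpkg (n+1)).1 (integrable_const _)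
        ((ae_restrict_iff' measurableSet_Icc).2 (Eventually.of_forall hhi))
      rw [setIntegral_const, hvol', smul_eq_mul] at this
      linarith
  have hzbound : ∀ n, ∀ x ∈ Icc x1 x2, blo ≤ znum n x ∧ znum n x ≤ Bhi := by
    intro n x hxI
    match n with
    | 0 =>
      have h1 : znum 0 x = 1 / L := by rw [hzndef]; simp only []; rw [hI0]; rfl
      rw [h1, hblodef, hBhidef]
      constructor
      · rw [div_le_div_iff₀ (by positivity) hLpos]
        nlinarith
      · rw [div_le_div_iff₀ hLpos (by positivity)]
        nlinarith
    | n+1 =>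
      have hlo : m * (∫ y in Icc x1 x2, fseq x1 x2 k n y) ≤ fseq x1 x2 k (n+1) x :=
        T_lower hkC hbd hm (hpkg n).1 (hg0ae n) hxI
      have hhi : fseq x1 x2 k (n+1) x ≤ M * (∫ y in Icc x1 x2, fseq x1 x2 k n y) :=
        T_upper hkC hbd hm (hpkg n).1 (hg0ae n) hxI
      obtain ⟨hi1, hi2⟩ := hIbdd n
      have hIn := hIpos n
      have hIn1 := hIpos (n+1)
      constructor
      · rw [hzndef]; simp only []
        rw [hblodef, div_le_div_iff₀ (by positivity) hIn1]
        nlinarith [mul_le_mul_of_nonneg_right hlo (by positivity : (0:ℝ) ≤ M*L),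
          mul_le_mul_of_nonneg_left hi2 hm.le]
      · rw [hzndef]; simp only []
        rw [hBhidef, div_le_div_iff₀ hIn1 (by positivity)]
        nlinarith [mul_le_mul_of_nonneg_right hhi (by positivity : (0:ℝ) ≤ m*L),
          mul_le_mul_of_nonneg_left hi1 hM.le]
  set Cg : ℝ := d0 * Bhi / (m * L) with hCgdef
  have hCg0 : 0 ≤ Cg := by positivity
  have hCg' : Cg * (m * L) = d0 * Bhi := by
    rw [hCgdef]; field_simp
  have hdist : ∀ x ∈ Icc x1 x2, ∀ n : ℕ,
      dist (znum n x) (znum (n+1) x) ≤ Cg * θ^n := by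
    intro x hxI n
    obtain ⟨hv1, hv2⟩ := hinv n x hxI
    obtain ⟨hi1', hi2'⟩ := hsand n
    have hIn := hIpos n
    have hIn1 := hIpos (n+1)
    have hIlo : a n * (∫ y in Icc x1 x2, fseq x1 x2 k n y)
        ≤ (∫ y in Icc x1 x2, fseq x1 x2 k (n+1) y) := by
      have := (hsand n).1
      rw [hRdef, le_div_iff₀ hIn] at this
      exact this
    have hIhi : (∫ y in Icc x1 x2, fseq x1 x2 k (n+1) y)
        ≤ b n * (∫ y in Icc x1 x2, fseq x1 x2 k n y) := by
      have := (hsand n).2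
      rw [hRdef, div_le_iff₀ hIn] at this
      exact this
    obtain ⟨hz0lo, hz0hi⟩ := hzbound n x hxI
    obtain ⟨hz1lo, hz1hi⟩ := hzbound (n+1) x hxI
    have ha_lb : m * L ≤ a n := by rw [← ha0]; exact hamono (Nat.zero_le n)
    have hb_lb : m * L ≤ b n := le_trans ha_lb (haab n)
    have hbma : b n - a n = θ^n * d0 := by simp only [hbdef]; ring
    have hgn : fseq x1 x2 k n x = znum n x * (∫ y in Icc x1 x2, fseq x1 x2 k n y) := by
      rw [hzndef]; simp only []; rw [div_mul_cancel₀ _ hIn.ne']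
    have hgn1 : fseq x1 x2 k (n+1) x
        = znum (n+1) x * (∫ y in Icc x1 x2, fseq x1 x2 k (n+1) y) := by
      rw [hzndef]; simp only []; rw [div_mul_cancel₀ _ hIn1.ne']
    -- multiplied-out comparisons
    have h1 : znum (n+1) x * a n ≤ b n * znum n x := by
      have step : znum (n+1) x * (a n * (∫ y in Icc x1 x2, fseq x1 x2 k n y))
          ≤ b n * znum n x * (∫ y in Icc x1 x2, fseq x1 x2 k n y) := by
        calc znum (n+1) x * (a n * (∫ y in Icc x1 x2, fseq x1 x2 k n y))
            ≤ znum (n+1) x * (∫ y in Icc x1 x2, fseq x1 x2 k (n+1) y) :=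
              mul_le_mul_of_nonneg_left hIlo (le_trans hblo.le hz1lo)
        _ = fseq x1 x2 k (n+1) x := hgn1.symm
        _ ≤ b n * fseq x1 x2 k n x := hv2
        _ = b n * znum n x * (∫ y in Icc x1 x2, fseq x1 x2 k n y) := by rw [hgn]; ring
      have := le_of_mul_le_mul_right
        (by linarith [step] :
          znum (n+1) x * a n * (∫ y in Icc x1 x2, fseq x1 x2 k n y)
          ≤ b n * znum n x * (∫ y in Icc x1 x2, fseq x1 x2 k n y)) hIn
      exact this
    have h2 : a n * znum n x ≤ znum (n+1) x * b n := by
      have step : a n * znum n x * (∫ y in Icc x1 x2, fseq x1 x2 k n y)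
          ≤ znum (n+1) x * b n * (∫ y in Icc x1 x2, fseq x1 x2 k n y) := by
        calc a n * znum n x * (∫ y in Icc x1 x2, fseq x1 x2 k n y)
            = a n * fseq x1 x2 k n x := by rw [hgn]; ring
        _ ≤ fseq x1 x2 k (n+1) x := hv1
        _ = znum (n+1) x * (∫ y in Icc x1 x2, fseq x1 x2 k (n+1) y) := hgn1
        _ ≤ znum (n+1) x * (b n * (∫ y in Icc x1 x2, fseq x1 x2 k n y)) :=
              mul_le_mul_of_nonneg_left hIhi (le_trans hblo.le hz1lo)
        _ = znum (n+1) x * b n * (∫ y in Icc x1 x2, fseq x1 x2 k n y) := by ring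
      exact le_of_mul_le_mul_right step hIn
    have hθn : (0:ℝ) ≤ θ^n := pow_nonneg hθ0 n
    rw [Real.dist_eq, abs_sub_le_iff]
    constructor
    · -- znum n x - znum (n+1) x ≤ Cg * θ^n
      have hmul : (znum n x - znum (n+1) x) * b n ≤ (Cg * θ^n) * b n := by
        have e1 : (znum n x - znum (n+1) x) * b n ≤ znum n x * (b n - a n) := by
          linarith [h2]
        have e2 : znum n x * (b n - a n) ≤ Bhi * (θ^n * d0) := by
          rw [hbma]
          exact mul_le_mul_of_nonneg_right hz0hi (by positivity)
        have e3 : Bhi * (θ^n * d0) = (Cg * θ^n) * (m * L) := by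
          linear_combination -θ^n * hCg'
        have e4 : (Cg * θ^n) * (m * L) ≤ (Cg * θ^n) * b n := by
          have : (0:ℝ) ≤ Cg * θ^n := by positivity
          exact mul_le_mul_of_nonneg_left hb_lb this
        linarith
      exact le_of_mul_le_mul_right hmul (lt_of_lt_of_le (by positivity) hb_lb)
    · -- znum (n+1) x - znum n x ≤ Cg * θ^n
      have hmul : (znum (n+1) x - znum n x) * a n ≤ (Cg * θ^n) * a n := by
        have e1 : (znum (n+1) x - znum n x) * a n ≤ znum n x * (b n - a n) := by
          linarith [h1]
        have e2 : znum n x * (b n - a n) ≤ Bhi * (θ^n * d0) := by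
          rw [hbma]
          exact mul_le_mul_of_nonneg_right hz0hi (by positivity)
        have e3 : Bhi * (θ^n * d0) = (Cg * θ^n) * (m * L) := by
          linear_combination -θ^n * hCg'
        have e4 : (Cg * θ^n) * (m * L) ≤ (Cg * θ^n) * a n := by
          have : (0:ℝ) ≤ Cg * θ^n := by positivity
          exact mul_le_mul_of_nonneg_left ha_lb this
        linarith
      exact le_of_mul_le_mul_right hmul (lt_of_lt_of_le (by positivity) ha_lb)
  -- Cauchy sequences and the limit function
  have hcau : ∀ x ∈ Icc x1 x2, CauchySeq (fun n => znum n x) := by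
    intro x hxI
    exact cauchySeq_of_le_geometric θ Cg hθ1 (fun n => hdist x hxI n)
  set z : ℝ → ℝ := fun x => limUnder Filter.atTop (fun n => znum n x) with hzdef
  have htendz : ∀ x ∈ Icc x1 x2,
      Filter.Tendsto (fun n => znum n x) Filter.atTop (nhds (z x)) := by
    intro x hxI
    exact (hcau x hxI).tendsto_limUnder
  have hzlo2 : ∀ x ∈ Icc x1 x2, blo ≤ z x := fun x hxI =>
    ge_of_tendsto' (htendz x hxI) (fun n => (hzbound n x hxI).1)
  have hzhi2 : ∀ x ∈ Icc x1 x2, z x ≤ Bhi := fun x hxI =>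
    le_of_tendsto' (htendz x hxI) (fun n => (hzbound n x hxI).2)
  have hznum_meas : ∀ n, AEStronglyMeasurable (znum n) (volume.restrict (Icc x1 x2)) :=
    fun n => ((hpkg n).1.div_const _).aestronglyMeasurable
  have hz_meas : AEStronglyMeasurable z (volume.restrict (Icc x1 x2)) := by
    refine aestronglyMeasurable_of_tendsto_ae Filter.atTop hznum_meas ?_
    rw [ae_restrict_iff' measurableSet_Icc]
    filter_upwards with x hxI
    exact htendz x hxI
  have hz_int : IntegrableOn z (Icc x1 x2) := by
    refine Integrable.mono' (integrable_const Bhi) hz_meas ?_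
    rw [ae_restrict_iff' measurableSet_Icc]
    filter_upwards with x hxI
    rw [Real.norm_eq_abs, abs_of_nonneg (le_trans hblo.le (hzlo2 x hxI))]
    exact hzhi2 x hxI
  have hznum_int1 : ∀ n, (∫ y in Icc x1 x2, znum n y) = 1 := by
    intro n
    simp only [hzndef]
    rw [integral_div]
    exact div_self (hIpos n).ne'
  have hz_int1 : (∫ y in Icc x1 x2, z y) = 1 := by
    have hDCT := tendsto_integral_of_dominated_convergence
      (μ := volume.restrict (Icc x1 x2)) (F := znum) (f := z)
      (fun _ => Bhi) hznum_meas (integrable_const Bhi) ?_ ?_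
    · have h1 : Filter.Tendsto (fun n => ∫ y in Icc x1 x2, znum n y)
          Filter.atTop (nhds 1) := by
        simp only [hznum_int1]; exact tendsto_const_nhds
      exact tendsto_nhds_unique hDCT h1
    · intro n
      rw [ae_restrict_iff' measurableSet_Icc]
      filter_upwards with y hy
      rw [Real.norm_eq_abs, abs_of_nonneg (le_trans hblo.le (hzbound n y hy).1)]
      exact (hzbound n y hy).2
    · rw [ae_restrict_iff' measurableSet_Icc]
      filter_upwards with y hy
      exact htendz y hy
  have hTz : ∀ x ∈ Icc x1 x2, T x1 x2 k z x = lam * z x := by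
    intro x hxI
    have hT1 : Filter.Tendsto (fun n => ∫ y in Icc x1 x2, k x y * znum n y)
        Filter.atTop (nhds (∫ y in Icc x1 x2, k x y * z y)) := by
      refine tendsto_integral_of_dominated_convergence (fun _ => M * Bhi)
        (fun n => ?_) (integrable_const _) (fun n => ?_) ?_
      · exact ((kc_right hkC hxI).aestronglyMeasurable measurableSet_Icc).mul
          (hznum_meas n)
      · rw [ae_restrict_iff' measurableSet_Icc]
        filter_upwards with y hy
        have hk1 := (hbd x hxI y hy).1
        have hk2 := (hbd x hxI y hy).2
        have hz1 := (hzbound n y hy).1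
        have hz2 := (hzbound n y hy).2
        rw [Real.norm_eq_abs, abs_of_nonneg (by nlinarith : (0:ℝ) ≤ k x y * znum n y)]
        nlinarith
      · rw [ae_restrict_iff' measurableSet_Icc]
        filter_upwards with y hy
        exact (htendz y hy).const_mul (k x y)
    have hT2 : ∀ n, (∫ y in Icc x1 x2, k x y * znum n y) = R n * znum (n+1) x := by
      intro n
      have e1 : (∫ y in Icc x1 x2, k x y * znum n y)
          = (T x1 x2 k (fseq x1 x2 k n) x) / (∫ y in Icc x1 x2, fseq x1 x2 k n y) := by
        unfold T
        rw [← integral_div]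
        congr 1; ext y; simp only [hzndef]; ring
      rw [e1]
      have e2 : T x1 x2 k (fseq x1 x2 k n) x = fseq x1 x2 k (n+1) x := rfl
      rw [e2]
      simp only [hRdef, hzndef]
      field_simp
      rw [mul_comm (∫ y in Icc x1 x2, fseq x1 x2 k n y) (∫ y in Icc x1 x2, fseq x1 x2 k (n+1) y),
        mul_comm (fseq x1 x2 k (n+1) x), mul_div_mul_left _ _ (hIpos (n+1)).ne']
    have hT3 : Filter.Tendsto (fun n => R n * znum (n+1) x) Filter.atTop
        (nhds (lam * z x)) := by
      have hcomp : Filter.Tendsto (fun n => znum (n+1) x) Filter.atTop (nhds (z x)) := by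
        have := (htendz x hxI).comp (Filter.tendsto_add_atTop_nat 1)
        exact this
      exact hR_tend.mul hcomp
    have hT1' : Filter.Tendsto (fun n => R n * znum (n+1) x) Filter.atTop
        (nhds (∫ y in Icc x1 x2, k x y * z y)) := by
      have he : (fun n => ∫ y in Icc x1 x2, k x y * znum n y)
          = (fun n => R n * znum (n+1) x) := funext hT2
      rwa [he] at hT1
    exact tendsto_nhds_unique hT1' hT3
  exact ⟨z, lam, hlam_pos, hz_int, fun x hxI => ⟨hzlo2 x hxI, hzhi2 x hxI⟩, hTz, hz_int1⟩

end Thm22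

open MeasureTheory Set

set_option maxHeartbeats 1000000 in
/-- Theorem 2.2: for a continuous strictly positive kernel `k`,
constant vulnerability `A` and no saturation (`β = 0`), the model admits exactly
one positive stationary state `(z*, F*)` (uniqueness of `z*` up to a.e.
equality), characterised by `F*·A·z*(x) = ∫ k(x,y) z*(y) dy` a.e. and
`∫ z* = μ/(K·A)`. -/
theorem unique_positive_stationary_state_constant_vulnerability_beta_zero
    (x1 x2 : ℝ) (hx : x1 < x2)
    (k : ℝ → ℝ → ℝ)
    (hkC : ContinuousOn (Function.uncurry k) (Icc x1 x2 ×ˢ Icc x1 x2))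
    (hkP : ∀ x ∈ Icc x1 x2, ∀ y ∈ Icc x1 x2, 0 < k x y)
    (A K μ : ℝ) (hA : 0 < A) (hK : 0 < K) (hμ : 0 < μ) :
    (∃ (zstar : ℝ → ℝ) (Fstar : ℝ),
      IntegrableOn zstar (Icc x1 x2) ∧
      (∀ᵐ x ∂(volume.restrict (Icc x1 x2)), 0 < zstar x) ∧
      0 < Fstar ∧
      (∀ᵐ x ∂(volume.restrict (Icc x1 x2)),
        Fstar * A * zstar x = ∫ y in Icc x1 x2, k x y * zstar y) ∧
      (∫ x in Icc x1 x2, zstar x) = μ / (K * A)) ∧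
    (∀ (z z' : ℝ → ℝ) (F F' : ℝ),
      (IntegrableOn z (Icc x1 x2) ∧
       (∀ᵐ x ∂(volume.restrict (Icc x1 x2)), 0 < z x) ∧
       0 < F ∧
       (∀ᵐ x ∂(volume.restrict (Icc x1 x2)),
         F * A * z x = ∫ y in Icc x1 x2, k x y * z y) ∧
       (∫ x in Icc x1 x2, z x) = μ / (K * A)) →
      (IntegrableOn z' (Icc x1 x2) ∧
       (∀ᵐ x ∂(volume.restrict (Icc x1 x2)), 0 < z' x) ∧
       0 < F' ∧
       (∀ᵐ x ∂(volume.restrict (Icc x1 x2)),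
         F' * A * z' x = ∫ y in Icc x1 x2, k x y * z' y) ∧
       (∫ x in Icc x1 x2, z' x) = μ / (K * A)) →
      F = F' ∧ z =ᵐ[volume.restrict (Icc x1 x2)] z') := by
  classical
  -- extremal values of the kernel
  have hcomp : IsCompact (Icc x1 x2 ×ˢ Icc x1 x2) := isCompact_Icc.prod isCompact_Icc
  have hne : (Icc x1 x2 ×ˢ Icc x1 x2).Nonempty :=
    ⟨(x1, x1), ⟨⟨le_refl x1, hx.le⟩, ⟨le_refl x1, hx.le⟩⟩⟩
  obtain ⟨pmin, hpmin, hmin'⟩ := hcomp.exists_isMinOn hne hkC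
  have hmin := isMinOn_iff.mp hmin'
  obtain ⟨pmax, hpmax, hmax'⟩ := hcomp.exists_isMaxOn hne hkC
  have hmax := isMaxOn_iff.mp hmax'
  set m : ℝ := Function.uncurry k pmin with hmdef
  set M : ℝ := Function.uncurry k pmax with hMdef
  have hm : 0 < m := hkP pmin.1 hpmin.1 pmin.2 hpmin.2
  have hbd : ∀ x ∈ Icc x1 x2, ∀ y ∈ Icc x1 x2, m ≤ k x y ∧ k x y ≤ M :=
    fun x hx' y hy => ⟨hmin (x, y) ⟨hx', hy⟩, hmax (x, y) ⟨hx', hy⟩⟩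
  have hmM : m ≤ M := hmin pmax hpmax
  set c0 : ℝ := μ / (K * A) with hc0def
  have hc0 : 0 < c0 := by rw [hc0def]; positivity
  obtain ⟨z, lam, hlam, hz_int, hzb, hzeig, hzint1⟩ :=
    Thm22.eigen_exists hx hkC hbd hm hmM
  have hzposI : ∀ x ∈ Icc x1 x2, 0 < z x := by
    intro x hxI
    have h1 := (hzb x hxI).1
    have hden : 0 < m / (M * (x2 - x1)) := by
      have hM : 0 < M := lt_of_lt_of_le hm hmM
      have : 0 < x2 - x1 := by linarith
      positivity
    linarith
  constructor
  · -- existence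
    refine ⟨fun x => c0 * z x, lam / A, hz_int.const_mul c0, ?_, by positivity, ?_, ?_⟩
    · rw [ae_restrict_iff' measurableSet_Icc]
      filter_upwards with x hxI
      have := hzposI x hxI
      positivity
    · rw [ae_restrict_iff' measurableSet_Icc]
      filter_upwards with x hxI
      have h2 : (∫ y in Icc x1 x2, k x y * z y) = lam * z x := hzeig x hxI
      have h1 : (∫ y in Icc x1 x2, k x y * (c0 * z y))
          = c0 * ∫ y in Icc x1 x2, k x y * z y := by
        rw [← integral_const_mul]
        congr 1; ext y; ring
      rw [h1, h2, div_mul_cancel₀ _ hA.ne']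
      ring
    · rw [integral_const_mul, hzint1, mul_one]
  · -- uniqueness
    rintro z1 z2 F F' ⟨hi1, hp1, hF1, he1, hn1⟩ ⟨hi2, hp2, hF2, he2, hn2⟩
    have h01 : ∀ᵐ y ∂(volume.restrict (Icc x1 x2)), 0 ≤ z1 y := by
      filter_upwards [hp1] with y hy; exact hy.le
    have h02 : ∀ᵐ y ∂(volume.restrict (Icc x1 x2)), 0 ≤ z2 y := by
      filter_upwards [hp2] with y hy; exact hy.le
    set lam1 : ℝ := F * A with hl1def
    set lam2 : ℝ := F' * A with hl2def
    have hlam1 : 0 < lam1 := mul_pos hF1 hA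
    have hlam2 : 0 < lam2 := mul_pos hF2 hA
    set zh1 : ℝ → ℝ := fun x => (∫ y in Icc x1 x2, k x y * z1 y) / lam1 with hzh1def
    set zh2 : ℝ → ℝ := fun x => (∫ y in Icc x1 x2, k x y * z2 y) / lam2 with hzh2def
    have hzae1 : z1 =ᵐ[volume.restrict (Icc x1 x2)] zh1 := by
      filter_upwards [he1] with x hx'
      rw [hzh1def]
      simp only []
      rw [← hx', hl1def]
      field_simp
    have hzae2 : z2 =ᵐ[volume.restrict (Icc x1 x2)] zh2 := by
      filter_upwards [he2] with x hx'
      rw [hzh2def]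
      simp only []
      rw [← hx', hl2def]
      field_simp
    have hTeq1 : ∀ x, (∫ y in Icc x1 x2, k x y * zh1 y) = ∫ y in Icc x1 x2, k x y * z1 y := by
      intro x
      refine integral_congr_ae ?_
      filter_upwards [hzae1] with y hy
      rw [hy]
    have hTeq2 : ∀ x, (∫ y in Icc x1 x2, k x y * zh2 y) = ∫ y in Icc x1 x2, k x y * z2 y := by
      intro x
      refine integral_congr_ae ?_
      filter_upwards [hzae2] with y hy
      rw [hy]
    have heigh1 : ∀ x ∈ Icc x1 x2, Thm22.T x1 x2 k zh1 x = lam1 * zh1 x := by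
      intro x _
      show (∫ y in Icc x1 x2, k x y * zh1 y) = lam1 * zh1 x
      rw [hTeq1 x, hzh1def]
      field_simp
    have heigh2 : ∀ x ∈ Icc x1 x2, Thm22.T x1 x2 k zh2 x = lam2 * zh2 x := by
      intro x _
      show (∫ y in Icc x1 x2, k x y * zh2 y) = lam2 * zh2 x
      rw [hTeq2 x, hzh2def]
      field_simp
    have hzh1_int : IntegrableOn zh1 (Icc x1 x2) := by
      have := (Thm22.T_integrableOn hkC hbd hm hi1 h01).div_const lam1
      exact this
    have hzh2_int : IntegrableOn zh2 (Icc x1 x2) := by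
      have := (Thm22.T_integrableOn hkC hbd hm hi2 h02).div_const lam2
      exact this
    have hzh1_0 : ∀ᵐ y ∂(volume.restrict (Icc x1 x2)), 0 ≤ zh1 y := by
      filter_upwards [hzae1, h01] with y hy h0y
      rw [← hy]; exact h0y
    have hzh2_0 : ∀ᵐ y ∂(volume.restrict (Icc x1 x2)), 0 ≤ zh2 y := by
      filter_upwards [hzae2, h02] with y hy h0y
      rw [← hy]; exact h0y
    have hzh1_int1 : (∫ y in Icc x1 x2, zh1 y) = c0 := by
      rw [← integral_congr_ae hzae1, hn1]
    have hzh2_int1 : (∫ y in Icc x1 x2, zh2 y) = c0 := by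
      rw [← integral_congr_ae hzae2, hn2]
    obtain ⟨hlameq, hzheq⟩ := Thm22.eigen_unique hx hkC hbd hm hmM hc0
      hlam1 hlam2 hzh1_int hzh2_int hzh1_0 hzh2_0 hzh1_int1 hzh2_int1 heigh1 heigh2
    constructor
    · have : F * A = F' * A := hlameq
      exact mul_right_cancel₀ hA.ne' this
    · have hmid : zh1 =ᵐ[volume.restrict (Icc x1 x2)] zh2 := by
        rw [Filter.EventuallyEq, ae_restrict_iff' measurableSet_Icc]
        exact Eventually.of_forall hzheq
      exact (hzae1.trans hmid).trans hzae2.symm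
end

section
/- Let x1 < x2, h = x2 − x1, let a : [x1,x2] → ℝ be continuous and strictly positive, let R, K, μ > 0, β ≥ 0, set I1 = ∫_{x1}^{x2} dx/a(x), and assume Kh − μβI1 > 0. Consider the constant inheritance kernel k ≡ R/h and the positive stationary state z*(x) = μ/((Kh − μβI1)·a(x)), F* = K·R·I1/(Kh − μβI1), Z* = μ·I1/(Kh − μβI1). Let λ ∈ ℂ satisfy λ ≠ −μ and λ + a(x)·R·I1/h ≠ 0 for all x ∈ [x1,x2]. Then there exist an integrable function w : [x1,x2] → ℂ and G ∈ ℂ with ∫_{x1}^{x2} w(x) dx = 1 satisfying, for a.e. x, 0 = w(x)·(λ + a(x)·R·I1/h) − R/h − βμR·I1/(K·h²) + G·μ/(K·h), and 0 = −(K·R·I1/h)·∫_{x1}^{x2} a(x) w(x) dx + βμR·I1/h + G·λ, if and only if λ satisfies the characteristic equation ∫_{x1}^{x2} [ R/h + βμR·I1/(K·h²) + μ(λ−R)/((λ+μ)·h) ] / (λ + a(x)·R·I1/h) dx = 1. -/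
open MeasureTheory Set

/-- Theorem 3.1: for the constant kernel `k ≡ R/h`, a complex
number `λ` (with `λ ≠ −μ` and `λ + a(x)R·I1/h ≠ 0` on `[x1,x2]`) is an
eigenvalue of the linearisation at the positive stationary state — i.e. the
normalised eigenvalue problem in `(w, G)` has a solution — if and only if `λ`
satisfies the scalar characteristic equation. -/
theorem constant_kernel_eigenvalue_iff_characteristic_equation
    (x1 x2 h : ℝ) (hx : x1 < x2) (hh : h = x2 - x1)
    (a : ℝ → ℝ) (haC : ContinuousOn a (Icc x1 x2))
    (haP : ∀ x ∈ Icc x1 x2, 0 < a x)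
    (R K μ β : ℝ) (hR : 0 < R) (hK : 0 < K) (hμ : 0 < μ) (hβ : 0 ≤ β)
    (I1 : ℝ) (hI1 : I1 = ∫ x in Icc x1 x2, 1 / a x)
    (hpos : 0 < K * h - μ * β * I1)
    (zstar : ℝ → ℝ) (hzstar : zstar = fun x => μ / ((K * h - μ * β * I1) * a x))
    (Fstar : ℝ) (hFstar : Fstar = K * R * I1 / (K * h - μ * β * I1))
    (Zstar : ℝ) (hZstar : Zstar = μ * I1 / (K * h - μ * β * I1))
    (lam : ℂ) (hlam : lam ≠ -(μ : ℂ))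
    (hlam' : ∀ x ∈ Icc x1 x2, lam + ((a x * R * I1 / h : ℝ) : ℂ) ≠ 0) :
    (∃ (w : ℝ → ℂ) (G : ℂ),
      IntegrableOn w (Icc x1 x2) ∧
      (∫ x in Icc x1 x2, w x) = 1 ∧
      (∀ᵐ x ∂(volume.restrict (Icc x1 x2)),
        0 = w x * (lam + ((a x * R * I1 / h : ℝ) : ℂ))
          - ((R / h : ℝ) : ℂ) - ((β * μ * R * I1 / (K * h ^ 2) : ℝ) : ℂ)
          + G * ((μ / (K * h) : ℝ) : ℂ)) ∧
      0 = -(((K * R * I1 / h : ℝ)) : ℂ) * (∫ x in Icc x1 x2, (a x : ℂ) * w x)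
          + ((β * μ * R * I1 / h : ℝ) : ℂ) + G * lam)
    ↔
    (∫ x in Icc x1 x2,
        (((R / h : ℝ) : ℂ) + ((β * μ * R * I1 / (K * h ^ 2) : ℝ) : ℂ)
            + (μ : ℂ) * (lam - (R : ℂ)) / ((lam + (μ : ℂ)) * (h : ℂ)))
          / (lam + ((a x * R * I1 / h : ℝ) : ℂ))) = 1 := by
  have hh0 : (0:ℝ) < h := by rw [hh]; linarith
  -- positivity of I1
  have hane : ∀ x ∈ Icc x1 x2, a x ≠ 0 := fun x hx => (haP x hx).ne'
  have hinva : ContinuousOn (fun x => 1 / a x) (Icc x1 x2) :=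
    continuousOn_const.div haC hane
  have hinvaInt : IntegrableOn (fun x => 1 / a x) (Icc x1 x2) :=
    hinva.integrableOn_compact isCompact_Icc
  have hI1pos : 0 < I1 := by
    have hsub : Icc x1 x2 ⊆ (Function.support fun x => 1 / a x) ∩ Icc x1 x2 := by
      intro x hx
      exact ⟨Function.mem_support.2 (by simpa [one_div] using inv_ne_zero (hane x hx)), hx⟩
    rw [hI1]
    refine (MeasureTheory.setIntegral_pos_iff_support_of_nonneg_ae ?_ hinvaInt).2 ?_
    · filter_upwards [ae_restrict_mem measurableSet_Icc] with x hx
      exact le_of_lt (one_div_pos.2 (haP x hx))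
    · refine lt_of_lt_of_le ?_ (measure_mono hsub)
      rw [Real.volume_Icc]
      exact ENNReal.ofReal_pos.2 (by linarith)
  -- complex nonzero constants
  have hcne : (h:ℂ) ≠ 0 := Complex.ofReal_ne_zero.2 hh0.ne'
  have hRne : (R:ℂ) ≠ 0 := Complex.ofReal_ne_zero.2 hR.ne'
  have hKne : (K:ℂ) ≠ 0 := Complex.ofReal_ne_zero.2 hK.ne'
  have hmune : (μ:ℂ) ≠ 0 := Complex.ofReal_ne_zero.2 hμ.ne'
  have hI1ne : (I1:ℂ) ≠ 0 := Complex.ofReal_ne_zero.2 hI1pos.ne'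
  have hlamμ : lam + (μ:ℂ) ≠ 0 := by
    intro hc; exact hlam (by linear_combination hc)
  have hdc : ContinuousOn (fun x => lam + ((a x * R * I1 / h : ℝ) : ℂ)) (Icc x1 x2) := by
    exact continuousOn_const.add
      (Complex.continuous_ofReal.comp_continuousOn
        (((haC.mul continuousOn_const).mul continuousOn_const).div_const h))
  have hinv : IntegrableOn (fun x => (lam + ((a x * R * I1 / h : ℝ) : ℂ))⁻¹) (Icc x1 x2) :=
    (hdc.inv₀ hlam').integrableOn_compact isCompact_Icc
  have hvol : (volume (Icc x1 x2)).toReal = h := by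
    rw [Real.volume_Icc, ENNReal.toReal_ofReal (by linarith), hh]
  have hfin : volume (Icc x1 x2) < ⊤ := measure_Icc_lt_top
  set C : ℂ := ((R / h : ℝ) : ℂ) + ((β * μ * R * I1 / (K * h ^ 2) : ℝ) : ℂ) with hCdef
  set N : ℂ := C + (μ : ℂ) * (lam - (R : ℂ)) / ((lam + (μ : ℂ)) * (h : ℂ)) with hNdef
  set m : ℂ := ((μ / (K * h) : ℝ) : ℂ) with hmdef
  set J : ℂ := ∫ x in Icc x1 x2, (lam + ((a x * R * I1 / h : ℝ) : ℂ))⁻¹ with hJdef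
  have hIN : (∫ x in Icc x1 x2, N / (lam + ((a x * R * I1 / h : ℝ) : ℂ))) = N * J := by
    rw [hJdef, ← integral_const_mul]
    exact integral_congr_ae (Filter.Eventually.of_forall fun x => div_eq_mul_inv N _)
  have hcoef : -((K * R * I1 / h : ℝ):ℂ) * ((h:ℂ)/((R:ℂ)*(I1:ℂ))) = -(K:ℂ) := by
    push_cast; field_simp
  constructor
  · rintro ⟨w, G, hwInt, hW, hae, hG⟩
    set N' : ℂ := C - G * m with hN'def
    have hwae : ∀ᵐ x ∂(volume.restrict (Icc x1 x2)),
        w x = N' * (lam + ((a x * R * I1 / h : ℝ) : ℂ))⁻¹ := by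
      filter_upwards [hae, ae_restrict_mem measurableSet_Icc] with x hx hxm
      have hdx := hlam' x hxm
      have hwd : w x * (lam + ((a x * R * I1 / h : ℝ) : ℂ)) = N' := by
        rw [hN'def, hCdef, hmdef]; linear_combination -hx
      rw [← hwd, mul_inv_cancel_right₀ hdx]
    have hJ1 : N' * J = 1 := by
      have h1 : (∫ x in Icc x1 x2, w x)
          = ∫ x in Icc x1 x2, N' * (lam + ((a x * R * I1 / h : ℝ) : ℂ))⁻¹ :=
        integral_congr_ae hwae
      rw [integral_const_mul, ← hJdef] at h1
      rw [← h1, hW]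
    have hawae : (fun x => (a x : ℂ) * w x) =ᵐ[volume.restrict (Icc x1 x2)]
        fun x => ((h:ℂ)/((R:ℂ)*(I1:ℂ))) * (N' - lam * w x) := by
      filter_upwards [hae, ae_restrict_mem measurableSet_Icc] with x hx hxm
      have hwd : w x * (lam + ((a x * R * I1 / h : ℝ) : ℂ)) = N' := by
        rw [hN'def, hCdef, hmdef]; linear_combination -hx
      push_cast at hwd ⊢
      field_simp at hwd ⊢
      linear_combination hwd
    have hIaw : (∫ x in Icc x1 x2, (a x : ℂ) * w x)
        = ((h:ℂ)/((R:ℂ)*(I1:ℂ))) * (N' * (h:ℂ) - lam) := by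
      rw [integral_congr_ae hawae, integral_const_mul,
          integral_sub ((integrableOn_const (C := N') hfin.ne)) (hwInt.const_mul lam),
          setIntegral_const, integral_const_mul, hW, measureReal_def, hvol, mul_one, Complex.real_smul]
      ring
    rw [hIaw] at hG
    have hG2 : (0:ℂ) = -(K:ℂ) * (N' * (h:ℂ) - lam)
        + ((β * μ * R * I1 / h : ℝ) : ℂ) + G * lam := by
      linear_combination hG + (N' * (h:ℂ) - lam) * hcoef
    have hN'h : N' * (K:ℂ) * (h:ℂ)
        = (K:ℂ) * (R:ℂ) + ((β * μ * R * I1 / h : ℝ) : ℂ) - G * (μ:ℂ) := by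
      rw [hN'def, hCdef, hmdef]
      push_cast
      field_simp [hKne, hcne, hRne, hI1ne, hmune, hlamμ]
    have hGG : (K:ℂ) * (lam - (R:ℂ)) + G * (lam + (μ:ℂ)) = 0 := by
      linear_combination -hG2 + hN'h
    have hGval : G = -((K:ℂ) * (lam - (R:ℂ))) / (lam + (μ:ℂ)) := by
      field_simp [hlamμ]
      linear_combination hGG
    have hN'N : N' = N := by
      rw [hN'def, hNdef, hCdef, hmdef, hGval]
      push_cast
      field_simp [hKne, hcne, hRne, hI1ne, hmune, hlamμ]
      ring
    rw [hIN, ← hN'N, hJ1]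
  · intro hchar
    rw [hIN] at hchar
    refine ⟨fun x => N * (lam + ((a x * R * I1 / h : ℝ) : ℂ))⁻¹,
      -(K:ℂ) * (lam - (R:ℂ)) / (lam + (μ:ℂ)), hinv.const_mul N, ?_, ?_, ?_⟩
    · rw [integral_const_mul, ← hJdef]; exact hchar
    · have hcancel : (-(K:ℂ) * (lam - (R:ℂ)) / (lam + (μ:ℂ))) * m
          = -((μ:ℂ) * (lam - (R:ℂ)) / ((lam + (μ:ℂ)) * (h:ℂ))) := by
        rw [hmdef]
        push_cast
        rw [div_mul_div_comm, ← neg_div,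
          div_eq_div_iff (mul_ne_zero hlamμ (mul_ne_zero hKne hcne)) (mul_ne_zero hlamμ hcne)]
        ring
      filter_upwards [ae_restrict_mem measurableSet_Icc] with x hxm
      have hdx := hlam' x hxm
      rw [mul_assoc, inv_mul_cancel₀ hdx, mul_one, hcancel, hNdef, hCdef]
      ring
    · have key : (∫ x in Icc x1 x2,
          (a x : ℂ) * (N * (lam + ((a x * R * I1 / h : ℝ) : ℂ))⁻¹))
          = ((h:ℂ)/((R:ℂ)*(I1:ℂ))) * (N * (h:ℂ) - lam) := by
        rw [setIntegral_congr_fun measurableSet_Icc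
          (g := fun x => ((h:ℂ)/((R:ℂ)*(I1:ℂ)))
            * (N - lam * (N * (lam + ((a x * R * I1 / h : ℝ) : ℂ))⁻¹)))]
        · rw [integral_const_mul,
            integral_sub ((integrableOn_const (C := N) hfin.ne))
              ((hinv.const_mul N).const_mul lam),
            setIntegral_const, integral_const_mul, integral_const_mul, ← hJdef,
            hchar, mul_one, measureReal_def, hvol, Complex.real_smul]
          ring
        · intro x hxm
          have hdx := hlam' x hxm
          have hdxu : (lam + ((a x * R * I1 / h : ℝ) : ℂ))
              * (lam + ((a x * R * I1 / h : ℝ) : ℂ))⁻¹ = 1 := mul_inv_cancel₀ hdx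
          have hsc : ((h:ℂ)/((R:ℂ)*(I1:ℂ))) * ((a x * R * I1 / h : ℝ):ℂ) = (a x : ℂ) := by
            push_cast; field_simp [hKne, hcne, hRne, hI1ne, hmune, hlamμ]
          linear_combination (((h:ℂ)/((R:ℂ)*(I1:ℂ))) * N) * hdxu
            - (N * (lam + ((a x * R * I1 / h : ℝ):ℂ))⁻¹) * hsc
      have hC1 : ((R / h : ℝ):ℂ) * (h:ℂ) = (R:ℂ) := by
        push_cast; field_simp
      have hC2 : ((β * μ * R * I1 / (K * h ^ 2) : ℝ):ℂ) * ((K:ℂ) * (h:ℂ))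
          = ((β * μ * R * I1 / h : ℝ):ℂ) := by
        push_cast; field_simp [hKne, hcne]
      have hX : (μ:ℂ) * (lam - (R:ℂ)) / ((lam + (μ:ℂ)) * (h:ℂ)) * ((lam + (μ:ℂ)) * (h:ℂ))
          = (μ:ℂ) * (lam - (R:ℂ)) :=
        div_mul_cancel₀ _ (mul_ne_zero hlamμ hcne)
      have hGm : (-(K:ℂ) * (lam - (R:ℂ)) / (lam + (μ:ℂ))) * (lam + (μ:ℂ))
          = -(K:ℂ) * (lam - (R:ℂ)) := div_mul_cancel₀ _ hlamμ
      have hT : (-(K:ℂ) * (N * (h:ℂ) - lam) + ((β * μ * R * I1 / h : ℝ):ℂ)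
          + (-(K:ℂ) * (lam - (R:ℂ)) / (lam + (μ:ℂ))) * lam) * (lam + (μ:ℂ)) = 0 := by
        rw [hNdef, hCdef]
        linear_combination (-(K:ℂ) * (lam + (μ:ℂ))) * hC1 + (-(lam + (μ:ℂ))) * hC2
          + (-(K:ℂ)) * hX + lam * hGm
      have h2 : (0:ℂ) = -(K:ℂ) * (N * (h:ℂ) - lam) + ((β * μ * R * I1 / h : ℝ):ℂ)
          + (-(K:ℂ) * (lam - (R:ℂ)) / (lam + (μ:ℂ))) * lam :=
        ((mul_eq_zero.mp hT).resolve_right hlamμ).symm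
      rw [key]
      linear_combination h2 - (N * (h:ℂ) - lam) * hcoef
end

section
/- Let x1 < x2, h = x2 − x1, let a : [x1,x2] → ℝ be continuous and strictly positive, let R, K, μ > 0, set I1 = ∫_{x1}^{x2} dx/a(x) and g(x) = a(x)·R·I1/h, and let ω > 0 be real. Then the equation ∫_{x1}^{x2} [ R/h + μ(iω−R)/((iω+μ)·h) ] / (iω + g(x)) dx = 1 holds if and only if both ∫_{x1}^{x2} ω²/(ω² + g(x)²) dx = h·μ/(R+μ) and ∫_{x1}^{x2} g(x)/(ω² + g(x)²) dx = h/(R+μ). -/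
open MeasureTheory Set Complex

lemma hopf_pointwise_aux (R μ h gx ω : ℝ) (hω : ω ≠ 0) (hh : h ≠ 0) :
    (((R / h : ℝ) : ℂ)
        + (μ : ℂ) * (Complex.I * (ω : ℂ) - (R : ℂ))
          / ((Complex.I * (ω : ℂ) + (μ : ℂ)) * (h : ℂ)))
      / (Complex.I * (ω : ℂ) + (gx : ℂ))
    = (((R+μ)/(h*(ω^2+μ^2)) * (μ * (ω^2/(ω^2+gx^2)) + ω^2 * (gx/(ω^2+gx^2))) : ℝ) : ℂ)
      + Complex.I * (((R+μ)/(h*(ω^2+μ^2)) * ω * (μ * (gx/(ω^2+gx^2)) - ω^2/(ω^2+gx^2)) : ℝ) : ℂ) := by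
  have h3 : (ω^2 + gx^2 : ℝ) ≠ 0 := by positivity
  have h4 : (ω^2 + μ^2 : ℝ) ≠ 0 := by positivity
  have h3c : ((ω:ℂ)^2 + (gx:ℂ)^2) ≠ 0 := by exact_mod_cast h3
  have h4c : ((ω:ℂ)^2 + (μ:ℂ)^2) ≠ 0 := by exact_mod_cast h4
  have hhc : (h:ℂ) ≠ 0 := by exact_mod_cast hh
  have h1 : (Complex.I * (ω : ℂ) + (μ : ℂ)) ≠ 0 := by
    intro hc
    have := congrArg Complex.im hc
    simp at this
    exact hω this
  have h2 : (Complex.I * (ω : ℂ) + (gx : ℂ)) ≠ 0 := by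
    intro hc
    have := congrArg Complex.im hc
    simp at this
    exact hω this
  have e1 : (((R / h : ℝ) : ℂ)
        + (μ : ℂ) * (Complex.I * (ω : ℂ) - (R : ℂ))
          / ((Complex.I * (ω : ℂ) + (μ : ℂ)) * (h : ℂ)))
      = ((R:ℂ)+(μ:ℂ)) * (Complex.I * (ω:ℂ)) / ((Complex.I * (ω : ℂ) + (μ : ℂ)) * (h : ℂ)) := by
    push_cast
    field_simp
    ring
  have e2 : (((R+μ)/(h*(ω^2+μ^2)) * (μ * (ω^2/(ω^2+gx^2)) + ω^2 * (gx/(ω^2+gx^2))) : ℝ) : ℂ)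
      + Complex.I * (((R+μ)/(h*(ω^2+μ^2)) * ω * (μ * (gx/(ω^2+gx^2)) - ω^2/(ω^2+gx^2)) : ℝ) : ℂ)
      = (((R:ℂ)+μ)*((ω:ℂ)^2*((μ:ℂ)+(gx:ℂ))) + Complex.I*(((R:ℂ)+μ)*((ω:ℂ)*((μ:ℂ)*gx-(ω:ℂ)^2))))
        / ((h:ℂ)*(((ω:ℂ)^2+(μ:ℂ)^2)*((ω:ℂ)^2+(gx:ℂ)^2))) := by
    rw [eq_div_iff (by exact mul_ne_zero hhc (mul_ne_zero h4c h3c))]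
    push_cast
    field_simp
  rw [e1, e2, div_div, div_eq_div_iff (mul_ne_zero (mul_ne_zero h1 hhc) h2)
    (mul_ne_zero hhc (mul_ne_zero h4c h3c))]
  linear_combination (((R:ℂ)+μ)*(h:ℂ)*(ω:ℂ)*(-(ω:ℂ)^2*((μ:ℂ)*gx-(ω:ℂ)^2)*Complex.I
    - (ω:ℂ)*(μ:ℂ)*gx*((μ:ℂ)+gx))) * Complex.I_sq

/-- for `β = 0` and constant kernel `k ≡ R/h`, the characteristic
equation at a purely imaginary `λ = iω` (with `ω > 0`) holds if and only if the
pair of real Hopf-bifurcation equations holds. Here `g(x) = a(x)·R·I1/h`. -/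
theorem hopf_bifurcation_equations_constant_kernel
    (x1 x2 h : ℝ) (hx : x1 < x2) (hh : h = x2 - x1)
    (a : ℝ → ℝ) (haC : ContinuousOn a (Icc x1 x2))
    (haP : ∀ x ∈ Icc x1 x2, 0 < a x)
    (R K μ : ℝ) (hR : 0 < R) (hK : 0 < K) (hμ : 0 < μ)
    (I1 : ℝ) (hI1 : I1 = ∫ x in Icc x1 x2, 1 / a x)
    (g : ℝ → ℝ) (hg : g = fun x => a x * R * I1 / h)
    (ω : ℝ) (hω : 0 < ω) :
    (∫ x in Icc x1 x2,
        (((R / h : ℝ) : ℂ)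
            + (μ : ℂ) * (Complex.I * (ω : ℂ) - (R : ℂ))
              / ((Complex.I * (ω : ℂ) + (μ : ℂ)) * (h : ℂ)))
          / (Complex.I * (ω : ℂ) + ((g x : ℝ) : ℂ))) = 1
    ↔
    ((∫ x in Icc x1 x2, ω ^ 2 / (ω ^ 2 + (g x) ^ 2)) = h * μ / (R + μ) ∧
     (∫ x in Icc x1 x2, g x / (ω ^ 2 + (g x) ^ 2)) = h / (R + μ)) := by
  have hh0 : (0:ℝ) < h := by rw [hh]; linarith
  have hωne : ω ≠ 0 := ne_of_gt hω
  have hgC : ContinuousOn g (Icc x1 x2) := by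
    rw [hg]
    exact ((haC.mul continuousOn_const).mul continuousOn_const).div_const h
  have hdenC : ContinuousOn (fun x => ω^2 + g x ^2) (Icc x1 x2) :=
    continuousOn_const.add (hgC.pow 2)
  have hdenne : ∀ x, (ω^2 + g x ^2 : ℝ) ≠ 0 := fun x => by positivity
  have hu : IntegrableOn (fun x => ω^2 / (ω^2 + g x ^2)) (Icc x1 x2) :=
    (continuousOn_const.div hdenC (fun x _ => hdenne x)).integrableOn_Icc
  have hv : IntegrableOn (fun x => g x / (ω^2 + g x ^2)) (Icc x1 x2) :=
    (hgC.div hdenC (fun x _ => hdenne x)).integrableOn_Icc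
  set c : ℝ := (R+μ)/(h*(ω^2+μ^2)) with hc
  set u : ℝ → ℝ := fun x => ω^2 / (ω^2 + g x ^2) with hu'
  set v : ℝ → ℝ := fun x => g x / (ω^2 + g x ^2) with hv'
  set p : ℝ → ℝ := fun x => c * (μ * u x + ω^2 * v x) with hp'
  set q : ℝ → ℝ := fun x => c * ω * (μ * v x - u x) with hq'
  have hpI : IntegrableOn p (Icc x1 x2) :=
    (((hu.const_mul μ).add (hv.const_mul (ω^2))).const_mul c)
  have hqI : IntegrableOn q (Icc x1 x2) := by
    have h1 : IntegrableOn (fun x => c*ω*μ * v x - c*ω * u x) (Icc x1 x2) :=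
      (hv.const_mul (c*ω*μ)).sub (hu.const_mul (c*ω))
    exact h1.congr (ae_of_all _ fun x => by simp only [hq']; ring)
  have key : ∀ x, (((R / h : ℝ) : ℂ)
            + (μ : ℂ) * (Complex.I * (ω : ℂ) - (R : ℂ))
              / ((Complex.I * (ω : ℂ) + (μ : ℂ)) * (h : ℂ)))
          / (Complex.I * (ω : ℂ) + ((g x : ℝ) : ℂ))
        = ((p x : ℝ) : ℂ) + Complex.I * ((q x : ℝ) : ℂ) := by
    intro x
    simpa [hp', hq', hu', hv', hc] using hopf_pointwise_aux R μ h (g x) ω hωne (ne_of_gt hh0)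
  have hint : (∫ x in Icc x1 x2,
        (((R / h : ℝ) : ℂ)
            + (μ : ℂ) * (Complex.I * (ω : ℂ) - (R : ℂ))
              / ((Complex.I * (ω : ℂ) + (μ : ℂ)) * (h : ℂ)))
          / (Complex.I * (ω : ℂ) + ((g x : ℝ) : ℂ)))
      = (((∫ x in Icc x1 x2, p x) : ℝ) : ℂ)
        + Complex.I * (((∫ x in Icc x1 x2, q x) : ℝ) : ℂ) := by
    simp only [key]
    have hp2 : Integrable (fun x => ((p x : ℝ) : ℂ)) (volume.restrict (Icc x1 x2)) := hpI.ofReal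
    have hq2 : Integrable (fun x => Complex.I * ((q x : ℝ) : ℂ))
        (volume.restrict (Icc x1 x2)) := (hqI.ofReal).const_mul Complex.I
    have ep : ∫ x in Icc x1 x2, ((p x : ℝ) : ℂ) = (((∫ x in Icc x1 x2, p x) : ℝ) : ℂ) := by
      simpa using Complex.ofRealCLM.integral_comp_comm hpI
    have eq' : ∫ x in Icc x1 x2, ((q x : ℝ) : ℂ) = (((∫ x in Icc x1 x2, q x) : ℝ) : ℂ) := by
      simpa using Complex.ofRealCLM.integral_comp_comm hqI
    rw [integral_add hp2 hq2, integral_const_mul, ep, eq']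
  rw [hint]
  set B : ℝ := ∫ x in Icc x1 x2, u x with hB
  set A : ℝ := ∫ x in Icc x1 x2, v x with hA
  have hPint : (∫ x in Icc x1 x2, p x) = c * (μ * B + ω^2 * A) := by
    simp only [hp']
    rw [integral_const_mul, integral_add (hu.const_mul μ) (hv.const_mul (ω^2)),
      integral_const_mul, integral_const_mul]
  have hQint : (∫ x in Icc x1 x2, q x) = c * ω * (μ * A - B) := by
    have h1 : (∫ x in Icc x1 x2, q x) = ∫ x in Icc x1 x2, (c*ω*μ * v x - c*ω * u x) :=
      setIntegral_congr_fun measurableSet_Icc (fun x _ => by simp only [hq']; ring)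
    rw [h1, integral_sub ((hv.const_mul (c*ω*μ))) (hu.const_mul (c*ω)),
      integral_const_mul, integral_const_mul]
    ring
  rw [hPint, hQint]
  have hiff : (((c * (μ * B + ω^2 * A) : ℝ) : ℂ)
        + Complex.I * ((c * ω * (μ * A - B) : ℝ) : ℂ) = 1)
      ↔ (c * (μ * B + ω^2 * A) = 1 ∧ c * ω * (μ * A - B) = 0) := by
    constructor
    · intro hE
      constructor
      · have := congrArg Complex.re hE
        simp only [Complex.add_re, Complex.mul_re, Complex.I_re, Complex.I_im,
          Complex.ofReal_re, Complex.ofReal_im, Complex.one_re] at this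
        linarith
      · have := congrArg Complex.im hE
        simp only [Complex.add_im, Complex.mul_im, Complex.I_re, Complex.I_im,
          Complex.ofReal_re, Complex.ofReal_im, Complex.one_im] at this
        linarith
    · rintro ⟨hP, hQ⟩
      rw [hP, hQ]
      simp
  rw [hiff]
  have hd : h * (ω^2 + μ^2) ≠ 0 := by positivity
  have hRμ : R + μ ≠ 0 := by positivity
  have hpos : (0:ℝ) < ω^2 + μ^2 := by positivity
  constructor
  · rintro ⟨e1, e2⟩
    have hcω : c * ω ≠ 0 := by
      rw [hc]; positivity
    have e2' : μ * A - B = 0 := by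
      rcases mul_eq_zero.mp e2 with h' | h'
      · exact absurd h' hcω
      · exact h'
    have hBA : B = μ * A := by linarith
    rw [hc] at e1
    rw [div_mul_eq_mul_div, div_eq_one_iff_eq hd] at e1
    have hAval : A = h / (R + μ) := by
      rw [eq_div_iff hRμ]
      have hm : (A * (R + μ)) * (ω^2 + μ^2) = h * (ω^2 + μ^2) := by
        linear_combination e1 - μ * (R + μ) * hBA
      exact mul_right_cancel₀ (ne_of_gt hpos) hm
    constructor
    · rw [hBA, hAval]; field_simp
    · exact hAval
  · rintro ⟨e1, e2⟩
    constructor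
    · rw [hc, e1, e2]; field_simp; ring
    · rw [hc, e1, e2]
      field_simp
      ring
end

section
/- Let R, μ, a0, h > 0 and let a1 ∈ ℝ with a1 ≠ 0. Set A3 = 2R, A2 = R·(12a0² + a1²h²)·(R+μ)/(12a0²), A1 = 2R²μ, A0 = R³μ. Then every complex root λ of the quartic equation λ⁴ + A3·λ³ + A2·λ² + A1·λ + A0 = 0 satisfies Re(λ) < 0. -/
/-- Routh–Hurwitz stability of the quartic characteristic polynomial
arising from the constant-kernel model with linear vulnerability and small trait
interval: every complex root has negative real part. -/
theorem quartic_characteristic_roots_have_negative_real_part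
    (R μ a0 h a1 : ℝ) (hR : 0 < R) (hμ : 0 < μ) (ha0 : 0 < a0) (hh : 0 < h)
    (ha1 : a1 ≠ 0)
    (A3 A2 A1 A0 : ℝ)
    (hA3 : A3 = 2 * R)
    (hA2 : A2 = R * (12 * a0 ^ 2 + a1 ^ 2 * h ^ 2) * (R + μ) / (12 * a0 ^ 2))
    (hA1 : A1 = 2 * R ^ 2 * μ)
    (hA0 : A0 = R ^ 3 * μ) :
    ∀ lam : ℂ,
      lam ^ 4 + (A3 : ℂ) * lam ^ 3 + (A2 : ℂ) * lam ^ 2 + (A1 : ℂ) * lam + (A0 : ℂ) = 0 →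
      lam.re < 0 := by
  -- rewrite A2 as R*(R+μ) + R*s with s > 0
  set s : ℝ := a1 ^ 2 * h ^ 2 * (R + μ) / (12 * a0 ^ 2) with hs_def
  have ha0' : (12 : ℝ) * a0 ^ 2 ≠ 0 := by positivity
  have hs : 0 < s := by
    have h1 : 0 < a1 ^ 2 := by positivity
    have : 0 < a1 ^ 2 * h ^ 2 * (R + μ) := by positivity
    exact div_pos this (by positivity)
  have hA2' : A2 = R * (R + μ) + R * s := by
    rw [hA2, hs_def]; field_simp
  intro lam heq
  by_contra hx0
  push_neg at hx0
  obtain ⟨x, y⟩ := lam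
  simp only [Complex.lt_def] at *
  have hx : (0 : ℝ) ≤ x := hx0
  simp [Complex.ext_iff, pow_succ, Complex.mul_re, Complex.mul_im] at heq
  obtain ⟨hre, him⟩ := heq
  subst hA3 hA1 hA0
  rw [hA2'] at hre him
  by_cases hy : y = 0
  · subst hy
    nlinarith [pow_nonneg hx 4, pow_nonneg hx 3, pow_nonneg hx 2, sq_nonneg x,
      mul_pos hR hμ, mul_pos (mul_pos hR hR) hμ, mul_pos hR hs,
      mul_nonneg (mul_nonneg hx hR.le) hs.le,
      mul_nonneg (mul_nonneg (mul_nonneg hx hR.le) hR.le) hμ.le,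
      mul_nonneg (pow_nonneg hx 2) (mul_nonneg hR.le (add_pos hR hμ).le),
      mul_nonneg (pow_nonneg hx 2) (mul_nonneg hR.le hs.le),
      mul_nonneg (pow_nonneg hx 3) hR.le,
      mul_pos (mul_pos (mul_pos hR hR) hR) hμ]
  · -- imaginary part: y * G = 0, so G = 0
    have hG : 4 * x ^ 3 + 6 * R * x ^ 2 + 2 * (R * (R + μ) + R * s) * x
        + 2 * R ^ 2 * μ - y ^ 2 * (4 * x + 2 * R) = 0 := by
      have h2 : y * (4 * x ^ 3 + 6 * R * x ^ 2 + 2 * (R * (R + μ) + R * s) * x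
          + 2 * R ^ 2 * μ - y ^ 2 * (4 * x + 2 * R)) = 0 := by ring_nf; ring_nf at him; linarith
      rcases mul_eq_zero.1 h2 with h | h
      · exact absurd h hy
      · exact h
    -- u := y^2 satisfies u*(4x+2R) = P
    have hu : y ^ 2 * (4 * x + 2 * R)
        = 4 * x ^ 3 + 6 * R * x ^ 2 + 2 * (R * (R + μ) + R * s) * x + 2 * R ^ 2 * μ := by
      linarith
    -- real part equation
    have hE1 : x ^ 4 - 6 * x ^ 2 * y ^ 2 + y ^ 4 + 2 * R * (x ^ 3 - 3 * x * y ^ 2)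
        + (R * (R + μ) + R * s) * (x ^ 2 - y ^ 2) + 2 * R ^ 2 * μ * x + R ^ 3 * μ = 0 := by
      ring_nf; ring_nf at hre; linarith
    -- the Routh–Hurwitz combination F = E1 * (4x+2R)^2, rewritten using hu
    have hF : (x ^ 4 + 2 * R * x ^ 3 + (R * (R + μ) + R * s) * x ^ 2 + 2 * R ^ 2 * μ * x
          + R ^ 3 * μ) * (4 * x + 2 * R) ^ 2
        - (6 * x ^ 2 + 6 * R * x + (R * (R + μ) + R * s))
          * (y ^ 2 * (4 * x + 2 * R)) * (4 * x + 2 * R)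
        + (y ^ 2 * (4 * x + 2 * R)) ^ 2
        = (x ^ 4 - 6 * x ^ 2 * y ^ 2 + y ^ 4 + 2 * R * (x ^ 3 - 3 * x * y ^ 2)
          + (R * (R + μ) + R * s) * (x ^ 2 - y ^ 2) + 2 * R ^ 2 * μ * x + R ^ 3 * μ)
          * (4 * x + 2 * R) ^ 2 := by ring
    rw [hu, hE1, zero_mul] at hF
    -- Now hF : polynomial in x, R, μ, s equals 0; but it is strictly negative.
    have k0 : 0 < 4 * R ^ 4 * μ * s := by positivity
    have k1 : 0 ≤ x * (4 * R ^ 3 * s ^ 2 + 8 * R ^ 3 * μ * s + 4 * R ^ 3 * μ ^ 2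
        + 8 * R ^ 4 * s + 8 * R ^ 4 * μ + 4 * R ^ 5) := by positivity
    have k2 : 0 ≤ x ^ 2 * (4 * R ^ 2 * s ^ 2 + 8 * R ^ 2 * μ * s + 4 * R ^ 2 * μ ^ 2
        + 40 * R ^ 3 * s + 40 * R ^ 3 * μ + 36 * R ^ 4) := by positivity
    have k3 : 0 ≤ x ^ 3 * (64 * R ^ 2 * s + 64 * R ^ 2 * μ + 128 * R ^ 3) := by positivity
    have k4 : 0 ≤ x ^ 4 * (32 * R * s + 32 * R * μ + 224 * R ^ 2) := by positivity
    have k5 : 0 ≤ x ^ 5 * (192 * R) := by positivity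
    have k6 : 0 ≤ x ^ 6 * 64 := by positivity
    linarith [hF, k0, k1, k2, k3, k4, k5, k6]
end

section
/- Let x1 < x2, h = x2 − x1, let a, k : [x1,x2] → ℝ be continuous and strictly positive, let K, μ > 0, β ≥ 0, set I1 = ∫_{x1}^{x2} dx/a(x) and I2 = ∫_{x1}^{x2} k(x)/a(x) dx, assume Kh − μβI1 > 0, and consider the inheritance kernel k(x,y) = k(y) with positive stationary state z*(x) = μ/((Kh − μβI1)·a(x)), F* = K·h·I2/(Kh − μβI1), Z* = μ·I1/(Kh − μβI1). Let λ ∈ ℂ satisfy λ ≠ −μ, λ + a(x)·I2 ≠ 0 for all x ∈ [x1,x2], and λ·I3(λ) ≠ λ + μ, where I3(λ) = ∫_{x1}^{x2} k(x)/(λ + a(x)·I2) dx. Then there exist an integrable function w : [x1,x2] → ℂ and G ∈ ℂ with ∫_{x1}^{x2} w(x) dx = 1 satisfying, for a.e. x, 0 = w(x)·(λ + a(x)·I2) − ∫_{x1}^{x2} k(y) w(y) dy − βμI2/(Kh) + G·μ/(Kh), and 0 = −K·I2·∫_{x1}^{x2} a(x) w(x) dx + βμI2 + G·λ, if and only if λ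 satisfies the characteristic equation −μ·(I2·β·(λ+μ) + λ·K) / ((λ·I3(λ) − λ − μ)·K·h) · ∫_{x1}^{x2} dx/(λ + a(x)·I2) = 1. -/
open MeasureTheory Set

/-- Theorem 3.2: for the kernel `k(x,y) = k(y)` depending only on
the second variable, a complex `λ` (satisfying the stated non-degeneracy
conditions) is an eigenvalue of the linearisation at the positive stationary
state — i.e. the normalised eigenvalue problem in `(w, G)` has a solution — if
and only if `λ` satisfies the scalar characteristic equation. -/
theorem kernel_of_y_eigenvalue_iff_characteristic_equation
    (x1 x2 h : ℝ) (hx : x1 < x2) (hh : h = x2 - x1)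
    (a k : ℝ → ℝ)
    (haC : ContinuousOn a (Icc x1 x2)) (haP : ∀ x ∈ Icc x1 x2, 0 < a x)
    (hkC : ContinuousOn k (Icc x1 x2)) (hkP : ∀ x ∈ Icc x1 x2, 0 < k x)
    (K μ β : ℝ) (hK : 0 < K) (hμ : 0 < μ) (hβ : 0 ≤ β)
    (I1 I2 : ℝ) (hI1 : I1 = ∫ x in Icc x1 x2, 1 / a x)
    (hI2 : I2 = ∫ x in Icc x1 x2, k x / a x)
    (hpos : 0 < K * h - μ * β * I1)
    (zstar : ℝ → ℝ) (hzstar : zstar = fun x => μ / ((K * h - μ * β * I1) * a x))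
    (Fstar : ℝ) (hFstar : Fstar = K * h * I2 / (K * h - μ * β * I1))
    (Zstar : ℝ) (hZstar : Zstar = μ * I1 / (K * h - μ * β * I1))
    (lam : ℂ) (hlam : lam ≠ -(μ : ℂ))
    (hlam' : ∀ x ∈ Icc x1 x2, lam + ((a x * I2 : ℝ) : ℂ) ≠ 0)
    (I3 : ℂ) (hI3 : I3 = ∫ x in Icc x1 x2, (k x : ℂ) / (lam + ((a x * I2 : ℝ) : ℂ)))
    (hI3' : lam * I3 ≠ lam + (μ : ℂ)) :
    (∃ (w : ℝ → ℂ) (G : ℂ),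
      IntegrableOn w (Icc x1 x2) ∧
      (∫ x in Icc x1 x2, w x) = 1 ∧
      (∀ᵐ x ∂(volume.restrict (Icc x1 x2)),
        0 = w x * (lam + ((a x * I2 : ℝ) : ℂ))
          - (∫ y in Icc x1 x2, (k y : ℂ) * w y)
          - ((β * μ * I2 / (K * h) : ℝ) : ℂ)
          + G * ((μ / (K * h) : ℝ) : ℂ)) ∧
      0 = -((K * I2 : ℝ) : ℂ) * (∫ x in Icc x1 x2, (a x : ℂ) * w x)
          + ((β * μ * I2 : ℝ) : ℂ) + G * lam)
    ↔
    -(μ : ℂ) * ((I2 : ℂ) * (β : ℂ) * (lam + (μ : ℂ)) + lam * (K : ℂ))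
        / ((lam * I3 - lam - (μ : ℂ)) * (K : ℂ) * (h : ℂ))
        * (∫ x in Icc x1 x2, 1 / (lam + ((a x * I2 : ℝ) : ℂ))) = 1 := by
  have hx12 : x1 ≤ x2 := hx.le
  have hmeas : MeasurableSet (Icc x1 x2) := measurableSet_Icc
  have hh0 : 0 < h := by rw [hh]; linarith
  have hKc : (K : ℂ) ≠ 0 := by exact_mod_cast hK.ne'
  have hhc : (h : ℂ) ≠ 0 := by exact_mod_cast hh0.ne'
  have hμc : (μ : ℂ) ≠ 0 := by exact_mod_cast hμ.ne'
  have hKhc : (K : ℂ) * h ≠ 0 := mul_ne_zero hKc hhc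
  -- positivity of I2
  have hI2pos : 0 < I2 := by
    rw [hI2, integral_Icc_eq_integral_Ioc, ← intervalIntegral.integral_of_le hx12]
    apply intervalIntegral.intervalIntegral_pos_of_pos_on
    · apply ContinuousOn.intervalIntegrable
      rw [uIcc_of_le hx12]
      exact hkC.div haC (fun x hx => (haP x hx).ne')
    · intro x hxm
      exact div_pos (hkP x (Ioo_subset_Icc_self hxm)) (haP x (Ioo_subset_Icc_self hxm))
    · exact hx
  set f : ℝ → ℂ := fun x => (lam + ((a x * I2 : ℝ) : ℂ))⁻¹ with hf
  have hfC : ContinuousOn f (Icc x1 x2) := by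
    apply ContinuousOn.inv₀
    · exact continuousOn_const.add
        (Complex.continuous_ofReal.comp_continuousOn (haC.mul continuousOn_const))
    · exact hlam'
  have hfi : IntegrableOn f (Icc x1 x2) := hfC.integrableOn_Icc
  have hkCc : ContinuousOn (fun x => (k x : ℂ)) (Icc x1 x2) :=
    Complex.continuous_ofReal.comp_continuousOn hkC
  have haCc : ContinuousOn (fun x => (a x : ℂ)) (Icc x1 x2) :=
    Complex.continuous_ofReal.comp_continuousOn haC
  set J : ℂ := ∫ x in Icc x1 x2, f x with hJ
  have hJeq : (∫ x in Icc x1 x2, 1 / (lam + ((a x * I2 : ℝ) : ℂ))) = J := by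
    simp only [hJ, hf, one_div]
  have hI3f : I3 = ∫ x in Icc x1 x2, (k x : ℂ) * f x := by
    simp only [hI3, hf, div_eq_mul_inv]
  -- volume of Icc
  have hvol : (volume (Icc x1 x2)).toReal = h := by
    rw [Real.volume_Icc, ENNReal.toReal_ofReal (by linarith : (0:ℝ) ≤ x2 - x1), hh]
  have hone : (∫ _x in Icc x1 x2, (1 : ℂ)) = (h : ℂ) := by
    rw [setIntegral_const, measureReal_def, hvol, Complex.real_smul, mul_one]
  -- key integral identity: I2 * ∫ a f = h - lam * J
  have hA : (I2 : ℂ) * (∫ x in Icc x1 x2, (a x : ℂ) * f x) = (h : ℂ) - lam * J := by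
    rw [← MeasureTheory.integral_const_mul]
    have hcong : ∫ x in Icc x1 x2, (I2 : ℂ) * ((a x : ℂ) * f x) =
        ∫ x in Icc x1 x2, ((1 : ℂ) - lam * f x) := by
      apply setIntegral_congr_fun hmeas
      intro x hxm
      have h0 := hlam' x hxm
      push_cast at h0
      simp only [hf]
      push_cast
      field_simp
      rw [eq_sub_iff_add_eq, ← add_div, add_comm ((I2 : ℂ) * (a x : ℂ)) lam, div_self (by rwa [mul_comm] at h0)]
    rw [hcong, integral_sub (integrableOn_const (C := (1 : ℂ)) measure_Icc_lt_top.ne)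
      (hfi.const_mul lam), hone, MeasureTheory.integral_const_mul, hJ]
  have hD : lam * I3 - lam - (μ : ℂ) ≠ 0 := by
    intro h0
    exact hI3' (by linear_combination h0)
  have hDKh : (lam * I3 - lam - (μ : ℂ)) * (K : ℂ) * (h : ℂ) ≠ 0 :=
    mul_ne_zero (mul_ne_zero hD hKc) hhc
  have hc1 : ((β * μ * I2 / (K * h) : ℝ) : ℂ) * ((K : ℂ) * h) = (β : ℂ) * μ * I2 := by
    push_cast
    exact div_mul_cancel₀ _ hKhc
  have hc2 : ((μ / (K * h) : ℝ) : ℂ) * ((K : ℂ) * h) = (μ : ℂ) := by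
    push_cast
    exact div_mul_cancel₀ _ hKhc
  constructor
  · rintro ⟨w, G, hwI, hwint, hae, heq2⟩
    set C : ℂ := (∫ y in Icc x1 x2, (k y : ℂ) * w y) + ((β * μ * I2 / (K * h) : ℝ) : ℂ)
      - G * ((μ / (K * h) : ℝ) : ℂ) with hC
    have hwf : ∀ᵐ x ∂(volume.restrict (Icc x1 x2)), w x = C * f x := by
      filter_upwards [hae, ae_restrict_mem hmeas] with x hxe hxm
      have h0 := hlam' x hxm
      simp only [hf]
      rw [eq_mul_inv_iff_mul_eq₀ h0, hC]
      linear_combination -hxe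
    have hW : C * J = 1 := by
      rw [← hwint, hJ, ← MeasureTheory.integral_const_mul]
      exact (integral_congr_ae hwf).symm
    have hkint : (∫ y in Icc x1 x2, (k y : ℂ) * w y) = C * I3 := by
      rw [hI3f, ← MeasureTheory.integral_const_mul]
      apply integral_congr_ae
      filter_upwards [hwf] with x hxw
      rw [hxw]; ring
    have haint : (∫ x in Icc x1 x2, (a x : ℂ) * w x)
        = C * (∫ x in Icc x1 x2, (a x : ℂ) * f x) := by
      rw [← MeasureTheory.integral_const_mul]
      apply integral_congr_ae
      filter_upwards [hwf] with x hxw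
      rw [hxw]; ring
    have heq2' : G * lam = (K : ℂ) * C * ((h : ℂ) - lam * J) - (β : ℂ) * μ * I2 := by
      rw [haint] at heq2
      push_cast at heq2
      linear_combination -heq2 + (K : ℂ) * C * hA
    have heq3 : C * ((K : ℂ) * h) = C * I3 * ((K : ℂ) * h) + (β : ℂ) * μ * I2 - G * μ := by
      linear_combination ((K : ℂ) * h) * hC + ((K : ℂ) * h) * hkint + hc1 - G * hc2
    have key : C * ((K : ℂ) * h) * (lam * I3 - lam - (μ : ℂ))
        + (μ : ℂ) * ((I2 : ℂ) * β * (lam + μ) + lam * K) = 0 := by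
      linear_combination (-lam) * heq3 + (μ : ℂ) * heq2' - (K : ℂ) * lam * μ * hW
    rw [hJeq, div_mul_eq_mul_div, div_eq_one_iff_eq hDKh]
    linear_combination (-J) * key + ((lam * I3 - lam - (μ : ℂ)) * K * h) * hW
  · intro hchar
    rw [hJeq, div_mul_eq_mul_div, div_eq_one_iff_eq hDKh] at hchar
    have hJ0 : J ≠ 0 := by
      intro h0
      rw [h0, mul_zero] at hchar
      exact hDKh hchar.symm
    set C : ℂ := J⁻¹ with hCdef
    have hW : C * J = 1 := inv_mul_cancel₀ hJ0
    have key : C * ((K : ℂ) * h) * (lam * I3 - lam - (μ : ℂ))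
        + (μ : ℂ) * ((I2 : ℂ) * β * (lam + μ) + lam * K) = 0 := by
      apply mul_right_cancel₀ hJ0
      linear_combination ((K : ℂ) * h * (lam * I3 - lam - (μ : ℂ))) * hW - hchar
    set G : ℂ := (C * (I3 - 1) * ((K : ℂ) * h) + (β : ℂ) * μ * I2) / μ with hGdef
    have hGμ : G * μ = C * (I3 - 1) * ((K : ℂ) * h) + (β : ℂ) * μ * I2 :=
      div_mul_cancel₀ _ hμc
    have heq2'' : G * lam * μ = ((K : ℂ) * C * ((h : ℂ) - lam * J) - (β : ℂ) * μ * I2) * μ := by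
      linear_combination lam * hGμ + (μ : ℂ) * K * lam * hW + key
    have heq2v : G * lam = (K : ℂ) * C * ((h : ℂ) - lam * J) - (β : ℂ) * μ * I2 :=
      mul_right_cancel₀ hμc heq2''
    refine ⟨fun x => C * f x, G, hfi.const_mul C, ?_, ?_, ?_⟩
    · rw [MeasureTheory.integral_const_mul, ← hJ]
      exact hW
    · have hkint2 : (∫ y in Icc x1 x2, (k y : ℂ) * (C * f y)) = C * I3 := by
        rw [hI3f, ← MeasureTheory.integral_const_mul]
        exact setIntegral_congr_fun hmeas (fun x _ => by ring)
      filter_upwards [ae_restrict_mem hmeas] with x hxm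
      have h0 := hlam' x hxm
      have hfx : C * f x * (lam + ((a x * I2 : ℝ) : ℂ)) = C := by
        simp only [hf]
        rw [mul_assoc, inv_mul_cancel₀ h0, mul_one]
      rw [hkint2, hfx]
      have h2 : (C - C * I3 - ((β * μ * I2 / (K * h) : ℝ) : ℂ)
          + G * ((μ / (K * h) : ℝ) : ℂ)) * ((K : ℂ) * h) * μ = 0 := by
        linear_combination (-(μ : ℂ)) * hc1 + ((μ : ℂ) * G) * hc2 + (μ : ℂ) * hGμ
      have h3 := (mul_eq_zero.mp h2).resolve_right hμc
      have h4 := (mul_eq_zero.mp h3).resolve_right hKhc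
      linear_combination -h4
    · have hai2 : (∫ x in Icc x1 x2, (a x : ℂ) * (C * f x))
          = C * (∫ x in Icc x1 x2, (a x : ℂ) * f x) := by
        rw [← MeasureTheory.integral_const_mul]
        exact setIntegral_congr_fun hmeas (fun x _ => by ring)
      rw [hai2]
      push_cast
      linear_combination (K : ℂ) * C * hA - heq2v
end

section
/- Let x1 < x2, let k_i, kbar_i : [x1,x2] → ℝ (i = 1,…,n) be continuous and nonnegative, let a be continuous and strictly positive, let β ≥ 0, K, μ > 0, and let the inheritance kernel be k(x,y) = Σ_{i=1}^{n} k_i(x) kbar_i(y). Let F* > 0 and Z1, …, Z_{n+2} > 0 satisfy μ/K = Z2/(1+βZ1), F*·Z1/(1+βZ1) = Σ_{i=1}^{n} Z_{i+2}·∫ k_i/a, F*·Z2/(1+βZ1) = Σ_{i=1}^{n} Z_{i+2}·∫ k_i, and F*·Z_{j+2}/(1+βZ1) = Σ_{i=1}^{n} Z_{i+2}·∫ kbar_j k_i/a for j = 1,…,n, and set z*(x) = (1+βZ1)·Σ_{i=1}^{n} Z_{i+2} k_i(x)/(F*·a(x)). Let λ ∈ ℂ satisfy λ ≠ −μ and λ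 + F*a(x)/(1+βZ1) ≠ 0 for all x, set I_{0i} = ∫_{x1}^{x2} k_i(x) dx and I_{ij}(λ) = ∫_{x1}^{x2} k_i(x) kbar_j(x)/(λ + F*a(x)/(1+βZ1)) dx, and suppose the linear system B_j = Σ_{i=1}^{n} B_i·I_{ij}(λ) + [ β/(1+βZ1) + K·(λ − Σ_{i=1}^{n} B_i I_{0i})/((λ+μ)·F*) ]·Σ_{i=1}^{n} Z_{i+2}·I_{ij}(λ), j = 1,…,n, has a unique solution B ∈ ℂⁿ. Then there exist an integrable function w : [x1,x2] → ℂ and G ∈ ℂ with ∫_{x1}^{x2} w(x) dx = 1 satisfying, for a.e. x, 0 = w(x)·(λ + F*a(x)/(1+βZ1)) − Σ_{i=1}^{n} k_i(x)·∫_{x1}^{x2} kbar_i(y) w(y) dy − F*βa(x)z*(x)/(1+βZ1)² + G·a(x)z*(x)/(1+βZ1), and 0 = −K·∫_{x1}^{x2} F*a(x)w(x)/(1+βZ1) dx + F*βμ/(1+βZ1) + G·λ, if and only if λ satisfies the characteristic equation ∫_{x1}^{x2} [ Σ_{i=1}^{n} B_i k_i(x) + ( β/(1+βZ1) + K·(λ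 − Σ_{i=1}^{n} B_i I_{0i})/((λ+μ)·F*) )·Σ_{i=1}^{n} Z_{i+2} k_i(x) ] / (λ + F*a(x)/(1+βZ1)) dx = 1. -/
open MeasureTheory Set Finset

private lemma sum_int_aux {x1 x2 : ℝ} {n : ℕ} (f : Fin n → ℝ → ℂ)
    (hf : ∀ i, IntegrableOn (f i) (Icc x1 x2)) (C : Fin n → ℂ) :
    ∫ x in Icc x1 x2, ∑ i, C i * f i x = ∑ i, C i * ∫ x in Icc x1 x2, f i x := by
  rw [integral_finset_sum _ (fun i _ => (hf i).const_mul _)]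
  exact Finset.sum_congr rfl fun i _ => integral_const_mul _ _

set_option maxHeartbeats 1000000 in
/-- Theorem 3.3: for the finite-rank kernel
`k(x,y) = Σ_i k_i(x) kbar_i(y)`, given a strictly positive solution
`(Z1, Z2, Zv, F*)` of the scalar stationary system (with `Zv i = Z_{i+2}`),
the corresponding stationary density `z*`, and a complex `λ` for which the
auxiliary linear system for `B` has a unique solution, the normalised
eigenvalue problem in `(w, G)` for the linearisation at `(z*, F*)` has a
solution if and only if `λ` satisfies the characteristic equation. -/
theorem finite_rank_kernel_eigenvalue_iff_characteristic_equation
    (x1 x2 : ℝ) (hx : x1 < x2) (n : ℕ)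
    (k kbar : Fin n → ℝ → ℝ)
    (hkC : ∀ i, ContinuousOn (k i) (Icc x1 x2))
    (hkbarC : ∀ i, ContinuousOn (kbar i) (Icc x1 x2))
    (hkN : ∀ i, ∀ x ∈ Icc x1 x2, 0 ≤ k i x)
    (hkbarN : ∀ i, ∀ x ∈ Icc x1 x2, 0 ≤ kbar i x)
    (a : ℝ → ℝ) (haC : ContinuousOn a (Icc x1 x2))
    (haP : ∀ x ∈ Icc x1 x2, 0 < a x)
    (β K μ : ℝ) (hβ : 0 ≤ β) (hK : 0 < K) (hμ : 0 < μ)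
    (F Z1 Z2 : ℝ) (Zv : Fin n → ℝ)
    (hF : 0 < F) (hZ1 : 0 < Z1) (hZ2 : 0 < Z2) (hZv : ∀ i, 0 < Zv i)
    (heq1 : μ / K = Z2 / (1 + β * Z1))
    (heq2 : F * Z1 / (1 + β * Z1)
      = ∑ i, Zv i * ∫ x in Icc x1 x2, k i x / a x)
    (heq3 : F * Z2 / (1 + β * Z1)
      = ∑ i, Zv i * ∫ x in Icc x1 x2, k i x)
    (heq4 : ∀ j, F * Zv j / (1 + β * Z1)
      = ∑ i, Zv i * ∫ x in Icc x1 x2, kbar j x * k i x / a x)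
    (zstar : ℝ → ℝ)
    (hzstar : zstar = fun x => (1 + β * Z1) * (∑ i, Zv i * k i x) / (F * a x))
    (lam : ℂ) (hlam : lam ≠ -(μ : ℂ))
    (hlam' : ∀ x ∈ Icc x1 x2, lam + ((F * a x / (1 + β * Z1) : ℝ) : ℂ) ≠ 0)
    (I0 : Fin n → ℝ) (hI0 : ∀ i, I0 i = ∫ x in Icc x1 x2, k i x)
    (I : Fin n → Fin n → ℂ)
    (hI : ∀ i j, I i j = ∫ x in Icc x1 x2,
      ((k i x * kbar j x : ℝ) : ℂ) / (lam + ((F * a x / (1 + β * Z1) : ℝ) : ℂ)))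
    (B : Fin n → ℂ)
    (hB : ∀ j, B j = (∑ i, B i * I i j)
      + (((β / (1 + β * Z1) : ℝ) : ℂ)
          + (K : ℂ) * (lam - ∑ i, B i * ((I0 i : ℝ) : ℂ)) / ((lam + (μ : ℂ)) * (F : ℂ)))
        * ∑ i, ((Zv i : ℝ) : ℂ) * I i j)
    (hBuniq : ∀ B' : Fin n → ℂ,
      (∀ j, B' j = (∑ i, B' i * I i j)
        + (((β / (1 + β * Z1) : ℝ) : ℂ)
            + (K : ℂ) * (lam - ∑ i, B' i * ((I0 i : ℝ) : ℂ)) / ((lam + (μ : ℂ)) * (F : ℂ)))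
          * ∑ i, ((Zv i : ℝ) : ℂ) * I i j) → B' = B) :
    (∃ (w : ℝ → ℂ) (G : ℂ),
      IntegrableOn w (Icc x1 x2) ∧
      (∫ x in Icc x1 x2, w x) = 1 ∧
      (∀ᵐ x ∂(volume.restrict (Icc x1 x2)),
        0 = w x * (lam + ((F * a x / (1 + β * Z1) : ℝ) : ℂ))
          - (∑ i, ((k i x : ℝ) : ℂ) * ∫ y in Icc x1 x2, ((kbar i y : ℝ) : ℂ) * w y)
          - ((F * β * a x * zstar x / (1 + β * Z1) ^ 2 : ℝ) : ℂ)
          + G * ((a x * zstar x / (1 + β * Z1) : ℝ) : ℂ)) ∧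
      0 = -(K : ℂ) * (∫ x in Icc x1 x2, ((F * a x / (1 + β * Z1) : ℝ) : ℂ) * w x)
          + ((F * β * μ / (1 + β * Z1) : ℝ) : ℂ) + G * lam)
    ↔
    (∫ x in Icc x1 x2,
        ((∑ i, B i * ((k i x : ℝ) : ℂ))
            + (((β / (1 + β * Z1) : ℝ) : ℂ)
                + (K : ℂ) * (lam - ∑ i, B i * ((I0 i : ℝ) : ℂ))
                  / ((lam + (μ : ℂ)) * (F : ℂ)))
              * ∑ i, ((Zv i : ℝ) : ℂ) * ((k i x : ℝ) : ℂ))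
          / (lam + ((F * a x / (1 + β * Z1) : ℝ) : ℂ))) = 1 := by
  
  -- basic positivity / nonvanishing facts
  have hc1 : (0:ℝ) < 1 + β * Z1 := by nlinarith
  have hc1c : ((1 + β * Z1 : ℝ) : ℂ) ≠ 0 := Complex.ofReal_ne_zero.mpr hc1.ne'
  have hc1c' : (1 : ℂ) + (β:ℂ) * (Z1:ℂ) ≠ 0 := by push_cast at hc1c; exact hc1c
  have hFc : (F : ℂ) ≠ 0 := Complex.ofReal_ne_zero.mpr hF.ne'
  have hKc : (K : ℂ) ≠ 0 := Complex.ofReal_ne_zero.mpr hK.ne'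
  have hlamu : lam + (μ:ℂ) ≠ 0 := fun h => hlam (eq_neg_of_add_eq_zero_left h)
  -- continuity / integrability helpers
  have hLC : ContinuousOn (fun x => lam + ((F * a x / (1 + β * Z1) : ℝ) : ℂ)) (Icc x1 x2) :=
    continuousOn_const.add (Complex.continuous_ofReal.comp_continuousOn
      ((continuousOn_const.mul haC).div_const _))
  have hphiI : ∀ i j : Fin n, IntegrableOn
      (fun x => ((k i x * kbar j x : ℝ) : ℂ) / (lam + ((F * a x / (1 + β * Z1) : ℝ) : ℂ)))
      (Icc x1 x2) := fun i j =>
    ((Complex.continuous_ofReal.comp_continuousOn ((hkC i).mul (hkbarC j))).div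
      hLC hlam').integrableOn_Icc
  have hkI : ∀ i : Fin n, IntegrableOn (fun x => ((k i x : ℝ) : ℂ)) (Icc x1 x2) := fun i =>
    (Complex.continuous_ofReal.comp_continuousOn (hkC i)).integrableOn_Icc
  -- ∑ Zv * I0 = F μ / K (cast form)
  have hZIc : ∑ i, ((Zv i : ℝ):ℂ) * ((I0 i : ℝ):ℂ) = (F:ℂ) * (μ:ℂ) / (K:ℂ) := by
    have h3 : ∑ i, Zv i * I0 i = F * Z2 / (1 + β * Z1) := by
      simp_rw [hI0]; exact heq3.symm
    have h4 : ∑ i, Zv i * I0 i = F * μ / K := by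
      rw [h3, mul_div_assoc, ← heq1, mul_div_assoc]
    have := congrArg (fun r : ℝ => (r : ℂ)) h4
    push_cast at this
    exact this
  -- z* rewrites
  have hz1 : ∀ x ∈ Icc x1 x2,
      F * β * a x * zstar x / (1 + β * Z1) ^ 2
        = β / (1 + β * Z1) * ∑ i, Zv i * k i x := by
    intro x hx
    have ha := (haP x hx).ne'
    rw [hzstar]
    field_simp
  have hz2 : ∀ x ∈ Icc x1 x2,
      a x * zstar x / (1 + β * Z1) = (∑ i, Zv i * k i x) / F := by
    intro x hx
    have ha := (haP x hx).ne'
    rw [hzstar]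
    field_simp
  -- pointwise sum lemmas
  have hptN : ∀ (C : Fin n → ℂ) (d : ℂ) (x : ℝ),
      (∑ i, C i * ((k i x : ℝ) : ℂ)) + d * ∑ i, ((Zv i : ℝ) : ℂ) * ((k i x : ℝ) : ℂ)
        = ∑ i, (C i + d * ((Zv i : ℝ) : ℂ)) * ((k i x : ℝ) : ℂ) := by
    intro C d x
    rw [Finset.mul_sum, ← Finset.sum_add_distrib]
    exact Finset.sum_congr rfl fun i _ => by ring
  have hsplit : ∀ (C : Fin n → ℂ) (d : ℂ) (v : Fin n → ℂ),
      ∑ i, (C i + d * ((Zv i : ℝ) : ℂ)) * v i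
        = (∑ i, C i * v i) + d * ∑ i, ((Zv i : ℝ) : ℂ) * v i := by
    intro C d v
    rw [Finset.mul_sum, ← Finset.sum_add_distrib]
    exact Finset.sum_congr rfl fun i _ => by ring
  have hptE : ∀ (E : Fin n → ℂ) (g : ℝ → ℝ) (x : ℝ),
      (∑ i, E i * ((k i x : ℝ) : ℂ)) * ((g x : ℝ) : ℂ)
          / (lam + ((F * a x / (1 + β * Z1) : ℝ) : ℂ))
        = ∑ i, E i * (((k i x * g x : ℝ) : ℂ)
            / (lam + ((F * a x / (1 + β * Z1) : ℝ) : ℂ))) := by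
    intro E g x
    rw [Finset.sum_mul, Finset.sum_div]
    refine Finset.sum_congr rfl fun i _ => ?_
    push_cast
    ring
  -- the two key integral evaluations for a generic coefficient vector E
  have hIkerE : ∀ (E : Fin n → ℂ) (j : Fin n),
      ∫ y in Icc x1 x2, ∑ i, E i * (((k i y * kbar j y : ℝ) : ℂ)
          / (lam + ((F * a y / (1 + β * Z1) : ℝ) : ℂ)))
        = ∑ i, E i * I i j := by
    intro E j
    rw [sum_int_aux _ (fun i => hphiI i j)]
    exact Finset.sum_congr rfl fun i _ => by rw [← hI]
  have hIN : ∀ (E : Fin n → ℂ),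
      ∫ x in Icc x1 x2, ∑ i, E i * ((k i x : ℝ) : ℂ) = ∑ i, E i * ((I0 i : ℝ) : ℂ) := by
    intro E
    rw [sum_int_aux _ hkI]
    refine Finset.sum_congr rfl fun i _ => ?_
    rw [hI0]
    congr 1
    exact integral_ofReal
  have e2 : ∀ (P G' : ℂ),
      -(K:ℂ) * (P + (((β / (1 + β * Z1) : ℝ) : ℂ) - G' / (F:ℂ))
            * ((F:ℂ) * (μ:ℂ) / (K:ℂ)) - lam)
        = -(K:ℂ) * (P - lam) - ((F * β * μ / (1 + β * Z1) : ℝ) : ℂ) + G' * (μ:ℂ) := by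
    intro P G'
    push_cast
    field_simp
    ring
  constructor
  · -- forward direction
    rintro ⟨w, G, hint, hnorm, hae, hscal⟩
    set B' : Fin n → ℂ := fun j => ∫ y in Icc x1 x2, ((kbar j y : ℝ) : ℂ) * w y with hB'def
    have hB'e : ∀ j, (∫ y in Icc x1 x2, ((kbar j y : ℝ) : ℂ) * w y) = B' j := fun j => rfl
    set d : ℂ := ((β / (1 + β * Z1) : ℝ) : ℂ) - G / (F:ℂ) with hd0
    -- a.e. identity for w * L
    have hwL : ∀ᵐ x ∂(volume.restrict (Icc x1 x2)),
        w x * (lam + ((F * a x / (1 + β * Z1) : ℝ) : ℂ))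
          = ∑ i, (B' i + d * ((Zv i : ℝ) : ℂ)) * ((k i x : ℝ) : ℂ) := by
      filter_upwards [hae, ae_restrict_mem measurableSet_Icc] with x h0 hx
      rw [hz1 x hx, hz2 x hx] at h0
      simp only [hB'e] at h0
      rw [← hptN B' d x, hd0]
      have hcm : ∑ i, ((k i x : ℝ):ℂ) * B' i = ∑ i, B' i * ((k i x : ℝ):ℂ) :=
        Finset.sum_congr rfl fun i _ => mul_comm _ _
      rw [hcm] at h0
      push_cast at h0 ⊢
      linear_combination -h0
    have hwdiv : ∀ᵐ x ∂(volume.restrict (Icc x1 x2)),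
        w x = (∑ i, (B' i + d * ((Zv i : ℝ) : ℂ)) * ((k i x : ℝ) : ℂ))
          / (lam + ((F * a x / (1 + β * Z1) : ℝ) : ℂ)) := by
      filter_upwards [hwL, ae_restrict_mem measurableSet_Icc] with x h1 hx
      rw [eq_div_iff (hlam' x hx)]
      exact h1
    -- system for B'
    have hsys : ∀ j, B' j = ∑ i, (B' i + d * ((Zv i : ℝ) : ℂ)) * I i j := by
      intro j
      rw [← hB'e j, ← hIkerE (fun i => B' i + d * ((Zv i : ℝ) : ℂ)) j]
      refine integral_congr_ae ?_
      filter_upwards [hwdiv] with y h1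
      rw [h1, ← hptE _ (kbar j) y]
      ring
    -- integral of w * L
    have hNC : ContinuousOn (fun x => ∑ i, (B' i + d * ((Zv i : ℝ) : ℂ)) * ((k i x : ℝ) : ℂ))
        (Icc x1 x2) :=
      continuousOn_finset_sum _ fun i _ =>
        continuousOn_const.mul (Complex.continuous_ofReal.comp_continuousOn (hkC i))
    have hWLint : Integrable
        (fun x => w x * (lam + ((F * a x / (1 + β * Z1) : ℝ) : ℂ)))
        (volume.restrict (Icc x1 x2)) :=
      (hNC.integrableOn_Icc).congr (Filter.EventuallyEq.symm hwL)
    have hintFa : ∫ x in Icc x1 x2, ((F * a x / (1 + β * Z1) : ℝ) : ℂ) * w x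
        = (∑ i, (B' i + d * ((Zv i : ℝ) : ℂ)) * ((I0 i : ℝ) : ℂ)) - lam := by
      have hFa : ∀ x : ℝ, ((F * a x / (1 + β * Z1) : ℝ) : ℂ) * w x
          = w x * (lam + ((F * a x / (1 + β * Z1) : ℝ) : ℂ)) - lam * w x := fun x => by ring
      calc ∫ x in Icc x1 x2, ((F * a x / (1 + β * Z1) : ℝ) : ℂ) * w x
          = ∫ x in Icc x1 x2,
            (w x * (lam + ((F * a x / (1 + β * Z1) : ℝ) : ℂ)) - lam * w x) := by
            simp only [hFa]
        _ = (∫ x in Icc x1 x2, w x * (lam + ((F * a x / (1 + β * Z1) : ℝ) : ℂ)))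
            - lam * ∫ x in Icc x1 x2, w x := by
            rw [integral_sub hWLint (hint.const_mul lam), integral_const_mul]
        _ = (∑ i, (B' i + d * ((Zv i : ℝ) : ℂ)) * ((I0 i : ℝ) : ℂ)) - lam := by
            rw [integral_congr_ae hwL, hIN, hnorm, mul_one]
    rw [hintFa, hsplit B' d (fun i => ((I0 i : ℝ) : ℂ)), hZIc, hd0,
      e2 (∑ i, B' i * ((I0 i : ℝ) : ℂ)) G] at hscal
    -- solve for G
    have hG : G * (lam + (μ:ℂ)) = (K:ℂ) * ((∑ i, B' i * ((I0 i : ℝ) : ℂ)) - lam) := by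
      linear_combination -hscal
    have hGF : G / (F:ℂ)
        = -((K:ℂ) * (lam - ∑ i, B' i * ((I0 i : ℝ) : ℂ))) / ((lam + (μ:ℂ)) * (F:ℂ)) := by
      rw [div_eq_div_iff hFc (mul_ne_zero hlamu hFc)]
      linear_combination (F:ℂ) * hG
    have hd : d = ((β / (1 + β * Z1) : ℝ) : ℂ)
        + (K : ℂ) * (lam - ∑ i, B' i * ((I0 i : ℝ) : ℂ)) / ((lam + (μ : ℂ)) * (F : ℂ)) := by
      rw [hd0, hGF]
      ring
    have hBB : B' = B := by
      refine hBuniq B' fun j => ?_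
      rw [hsys j, hsplit B' d (I · j), hd]
    -- conclude the characteristic equation
    have hd' : d = ((β / (1 + β * Z1) : ℝ) : ℂ)
        + (K : ℂ) * (lam - ∑ i, B i * ((I0 i : ℝ) : ℂ)) / ((lam + (μ : ℂ)) * (F : ℂ)) := by
      rw [hd, hBB]
    have hfeq : ∀ x : ℝ,
        ((∑ i, B i * ((k i x : ℝ) : ℂ))
            + (((β / (1 + β * Z1) : ℝ) : ℂ)
                + (K : ℂ) * (lam - ∑ i, B i * ((I0 i : ℝ) : ℂ))
                  / ((lam + (μ : ℂ)) * (F : ℂ)))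
              * ∑ i, ((Zv i : ℝ) : ℂ) * ((k i x : ℝ) : ℂ))
          / (lam + ((F * a x / (1 + β * Z1) : ℝ) : ℂ))
        = (∑ i, (B' i + d * ((Zv i : ℝ) : ℂ)) * ((k i x : ℝ) : ℂ))
          / (lam + ((F * a x / (1 + β * Z1) : ℝ) : ℂ)) := by
      intro x
      rw [hBB, hd', hptN B _ x]
    calc ∫ x in Icc x1 x2,
          ((∑ i, B i * ((k i x : ℝ) : ℂ))
              + (((β / (1 + β * Z1) : ℝ) : ℂ)
                  + (K : ℂ) * (lam - ∑ i, B i * ((I0 i : ℝ) : ℂ))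
                    / ((lam + (μ : ℂ)) * (F : ℂ)))
                * ∑ i, ((Zv i : ℝ) : ℂ) * ((k i x : ℝ) : ℂ))
            / (lam + ((F * a x / (1 + β * Z1) : ℝ) : ℂ))
        = ∫ x in Icc x1 x2,
            (∑ i, (B' i + d * ((Zv i : ℝ) : ℂ)) * ((k i x : ℝ) : ℂ))
              / (lam + ((F * a x / (1 + β * Z1) : ℝ) : ℂ)) :=
          integral_congr_ae (Filter.Eventually.of_forall hfeq)
      _ = ∫ x in Icc x1 x2, w x := (integral_congr_ae hwdiv).symm
      _ = 1 := hnorm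
  · -- backward direction
    intro hchar
    set coeff : ℂ := ((β / (1 + β * Z1) : ℝ) : ℂ)
        + (K : ℂ) * (lam - ∑ i, B i * ((I0 i : ℝ) : ℂ)) / ((lam + (μ : ℂ)) * (F : ℂ))
      with hcoeff
    set w : ℝ → ℂ := fun x =>
      ((∑ i, B i * ((k i x : ℝ) : ℂ)) + coeff * ∑ i, ((Zv i : ℝ) : ℂ) * ((k i x : ℝ) : ℂ))
        / (lam + ((F * a x / (1 + β * Z1) : ℝ) : ℂ)) with hwdef
    set G : ℂ := (K:ℂ) * ((∑ i, B i * ((I0 i : ℝ) : ℂ)) - lam) / (lam + (μ:ℂ)) with hGdef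
    have hco : coeff = ((β / (1 + β * Z1) : ℝ) : ℂ) - G / (F:ℂ) := by
      rw [hcoeff, hGdef]
      field_simp
      ring
    have hwC : ContinuousOn w (Icc x1 x2) := by
      rw [hwdef]
      refine ContinuousOn.div ?_ hLC hlam'
      exact (continuousOn_finset_sum _ fun i _ =>
          continuousOn_const.mul (Complex.continuous_ofReal.comp_continuousOn (hkC i))).add
        (continuousOn_const.mul (continuousOn_finset_sum _ fun i _ =>
          continuousOn_const.mul (Complex.continuous_ofReal.comp_continuousOn (hkC i))))
    have hwint : IntegrableOn w (Icc x1 x2) := hwC.integrableOn_Icc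
    -- the kbar integrals of w
    have hker : ∀ j : Fin n, (∫ y in Icc x1 x2, ((kbar j y : ℝ) : ℂ) * w y) = B j := by
      intro j
      have hpw : ∀ y : ℝ, ((kbar j y : ℝ) : ℂ) * w y
          = ∑ i, (B i + coeff * ((Zv i : ℝ) : ℂ)) * (((k i y * kbar j y : ℝ) : ℂ)
              / (lam + ((F * a y / (1 + β * Z1) : ℝ) : ℂ))) := by
        intro y
        simp only [hwdef]
        rw [hptN B coeff y, ← hptE _ (kbar j) y]
        ring
      rw [integral_congr_ae (Filter.Eventually.of_forall hpw),
        hIkerE (fun i => B i + coeff * ((Zv i : ℝ) : ℂ)) j,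
        hsplit B coeff (I · j)]
      exact (hB j).symm
    -- pointwise identity for w * L on Icc
    have hwLb : ∀ᵐ x ∂(volume.restrict (Icc x1 x2)),
        w x * (lam + ((F * a x / (1 + β * Z1) : ℝ) : ℂ))
          = ∑ i, (B i + coeff * ((Zv i : ℝ) : ℂ)) * ((k i x : ℝ) : ℂ) := by
      filter_upwards [ae_restrict_mem measurableSet_Icc] with x hx
      simp only [hwdef]
      rw [div_mul_cancel₀ _ (hlam' x hx)]
      exact hptN B coeff x
    refine ⟨w, G, hwint, hchar, ?_, ?_⟩
    · -- the a.e. eigen-equation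
      filter_upwards [hwLb, ae_restrict_mem measurableSet_Icc] with x hwx hx
      rw [hz1 x hx, hz2 x hx]
      simp only [hker]
      rw [hwx]
      have hcm : ∑ i, ((k i x : ℝ):ℂ) * B i = ∑ i, B i * ((k i x : ℝ):ℂ) :=
        Finset.sum_congr rfl fun i _ => mul_comm _ _
      rw [hcm, ← hptN B coeff x, hco]
      push_cast
      ring
    · -- the scalar equation
      have hNC2 : ContinuousOn
          (fun x => ∑ i, (B i + coeff * ((Zv i : ℝ) : ℂ)) * ((k i x : ℝ) : ℂ)) (Icc x1 x2) :=
        continuousOn_finset_sum _ fun i _ =>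
          continuousOn_const.mul (Complex.continuous_ofReal.comp_continuousOn (hkC i))
      have hWLint : Integrable
          (fun x => w x * (lam + ((F * a x / (1 + β * Z1) : ℝ) : ℂ)))
          (volume.restrict (Icc x1 x2)) :=
        (hNC2.integrableOn_Icc).congr (Filter.EventuallyEq.symm hwLb)
      have hintFa : ∫ x in Icc x1 x2, ((F * a x / (1 + β * Z1) : ℝ) : ℂ) * w x
          = (∑ i, (B i + coeff * ((Zv i : ℝ) : ℂ)) * ((I0 i : ℝ) : ℂ)) - lam := by
        have hFa : ∀ x : ℝ, ((F * a x / (1 + β * Z1) : ℝ) : ℂ) * w x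
            = w x * (lam + ((F * a x / (1 + β * Z1) : ℝ) : ℂ)) - lam * w x := fun x => by ring
        calc ∫ x in Icc x1 x2, ((F * a x / (1 + β * Z1) : ℝ) : ℂ) * w x
            = ∫ x in Icc x1 x2,
              (w x * (lam + ((F * a x / (1 + β * Z1) : ℝ) : ℂ)) - lam * w x) := by
              simp only [hFa]
          _ = (∫ x in Icc x1 x2, w x * (lam + ((F * a x / (1 + β * Z1) : ℝ) : ℂ)))
              - lam * ∫ x in Icc x1 x2, w x := by
              rw [integral_sub hWLint (hwint.const_mul lam), integral_const_mul]
          _ = (∑ i, (B i + coeff * ((Zv i : ℝ) : ℂ)) * ((I0 i : ℝ) : ℂ)) - lam := by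
              rw [integral_congr_ae hwLb, hIN,
                show (∫ x in Icc x1 x2, w x) = 1 from hchar, mul_one]
      rw [hintFa, hsplit B coeff (fun i => ((I0 i : ℝ) : ℂ)), hZIc, hco,
        e2 (∑ i, B i * ((I0 i : ℝ) : ℂ)) G]
      have hGb : G * (lam + (μ:ℂ)) = (K:ℂ) * ((∑ i, B i * ((I0 i : ℝ) : ℂ)) - lam) := by
        rw [hGdef]
        exact div_mul_cancel₀ _ hlamu
      linear_combination -hGb
end

section
/- Let x1 < x2, let k : [x1,x2]² → ℝ be measurable with 0 ≤ k(x,y) ≤ kbar for some constant kbar and all (x,y), and let c > 0 satisfy c ≤ ∫_{x1}^{x2} k(x,y) dy for every x ∈ [x1,x2]. Then the bounded linear operator T on L¹(x1,x2) defined by (Tw)(x) = (1/c)·∫_{x1}^{x2} k(x,y) w(y) dy satisfies ‖Tⁿ‖ ≥ 1 for every integer n ≥ 1, and consequently its spectral radius satisfies r(T) ≥ 1. -/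
open MeasureTheory Set

open scoped ENNReal NNReal

section Aux

variable {E : Type*} [NormedAddCommGroup E] [Lattice E] [HasSolidNorm E] [IsOrderedAddMonoid E]
  [NormedSpace ℝ E] [CompleteSpace E]

set_option maxHeartbeats 1000000 in
set_option synthInstance.maxHeartbeats 400000 in
theorem aux_positive_operator_main
    (hsm : ∀ (t : ℝ) (f : E), 0 ≤ t → 0 ≤ f → 0 ≤ t • f)
    (T : E →L[ℝ] E) (hTpos : ∀ f : E, 0 ≤ f → 0 ≤ T f)
    (u : E) (hu : 0 < ‖u‖) (hu0 : 0 ≤ u) (hTu : u ≤ T u) :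
    (∀ n : ℕ, 1 ≤ n → 1 ≤ ‖T ^ n‖) ∧ 1 ≤ spectralRadius ℝ T := by
  have hTmono : ∀ f g : E, f ≤ g → T f ≤ T g := by
    intro f g h
    have h2 := hTpos (g - f) (sub_nonneg.mpr h)
    rw [map_sub] at h2
    exact sub_nonneg.mp h2
  have hpowpos : ∀ (n : ℕ) (f : E), 0 ≤ f → 0 ≤ (T ^ n) f := by
    intro n
    induction n with
    | zero => intro f hf; simpa using hf
    | succ n ih =>
      intro f hf
      rw [pow_succ, ContinuousLinearMap.mul_apply]
      exact ih _ (hTpos f hf)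
  have hpowu : ∀ n : ℕ, u ≤ (T ^ n) u := by
    intro n
    induction n with
    | zero => simp
    | succ n ih =>
      have h1 : T u ≤ T ((T ^ n) u) := hTmono _ _ ih
      rw [pow_succ', ContinuousLinearMap.mul_apply]
      exact hTu.trans h1
  have norm_le_of_le : ∀ f g : E, 0 ≤ f → f ≤ g → ‖f‖ ≤ ‖g‖ := by
    intro f g hf hfg
    refine HasSolidNorm.solid ?_
    rw [abs_of_nonneg hf, abs_of_nonneg (hf.trans hfg)]
    exact hfg
  have part1 : ∀ n : ℕ, 1 ≤ n → 1 ≤ ‖T ^ n‖ := by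
    intro n _
    have h1 : ‖u‖ ≤ ‖(T ^ n) u‖ := norm_le_of_le _ _ hu0 (hpowu n)
    have h2 : ‖(T ^ n) u‖ ≤ ‖T ^ n‖ * ‖u‖ := (T ^ n).le_opNorm u
    nlinarith
  refine ⟨part1, ?_⟩
  by_contra hcon
  push_neg at hcon
  have hunit : ∀ l : ℝ, 1 ≤ l → IsUnit (algebraMap ℝ (E →L[ℝ] E) l - T) := by
    intro l hl
    have hln : (1 : ℝ≥0∞) ≤ (‖l‖₊ : ℝ≥0∞) := by
      have : (1 : ℝ≥0) ≤ ‖l‖₊ := by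
        rw [← NNReal.coe_le_coe, coe_nnnorm, Real.norm_eq_abs, NNReal.coe_one,
          abs_of_nonneg (by linarith)]
        exact hl
      exact_mod_cast this
    have hmem := spectrum.mem_resolventSet_of_spectralRadius_lt (a := T) (k := l)
      (lt_of_lt_of_le hcon hln)
    rwa [spectrum.mem_resolventSet_iff] at hmem
  set Rl : ℝ → (E →L[ℝ] E) := fun l => Ring.inverse (algebraMap ℝ (E →L[ℝ] E) l - T) with hRl
  have hmul : ∀ l : ℝ, 1 ≤ l → (algebraMap ℝ (E →L[ℝ] E) l - T) * Rl l = 1 :=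
    fun l hl => Ring.mul_inverse_cancel _ (hunit l hl)
  have hmul' : ∀ l : ℝ, 1 ≤ l → Rl l * (algebraMap ℝ (E →L[ℝ] E) l - T) = 1 :=
    fun l hl => Ring.inverse_mul_cancel _ (hunit l hl)
  -- descent step
  have step : ∀ b m : ℝ, 1 ≤ m → m ≤ b → (∀ f : E, 0 ≤ f → 0 ≤ Rl b f) →
      (b - m) * ‖Rl b‖ < 1 → ∀ f : E, 0 ≤ f → 0 ≤ Rl m f := by
    intro b m hm hmb hbpos hnorm f hf
    have hb1 : (1:ℝ) ≤ b := hm.trans hmb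
    set A0 : E →L[ℝ] E := algebraMap ℝ (E →L[ℝ] E) b - T with hA0
    set R0 : E →L[ℝ] E := Rl b with hR0
    have h1 : A0 * R0 = 1 := hmul b hb1
    have h2 : R0 * A0 = 1 := hmul' b hb1
    set x : E →L[ℝ] E := (b - m) • R0 with hxdef
    have hx : ‖x‖ < 1 := by
      have h5 := norm_smul (b - m) R0
      rw [Real.norm_eq_abs, abs_of_nonneg (by linarith : (0:ℝ) ≤ b - m)] at h5
      rw [hxdef, h5]
      exact hnorm
    have hxu : IsUnit ((1 : E →L[ℝ] E) - x) := isUnit_one_sub_of_norm_lt_one hx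
    set RI : E →L[ℝ] E := Ring.inverse ((1 : E →L[ℝ] E) - x) with hRI
    have hxi1 : ((1 : E →L[ℝ] E) - x) * RI = 1 := Ring.mul_inverse_cancel _ hxu
    have hxi2 : RI * ((1 : E →L[ℝ] E) - x) = 1 := Ring.inverse_mul_cancel _ hxu
    have key : algebraMap ℝ (E →L[ℝ] E) m - T = ((1 : E →L[ℝ] E) - x) * A0 := by
      rw [sub_mul, one_mul, hxdef, smul_mul_assoc, h2, hA0,
        Algebra.algebraMap_eq_smul_one, Algebra.algebraMap_eq_smul_one, sub_smul]
      abel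
    have hinv : Rl m = R0 * RI := by
      have p1 : (((1 : E →L[ℝ] E) - x) * A0) * (R0 * RI) = 1 := by
        rw [mul_assoc, ← mul_assoc A0, h1, one_mul, hxi1]
      have p2 : (R0 * RI) * (((1 : E →L[ℝ] E) - x) * A0) = 1 := by
        rw [mul_assoc, ← mul_assoc RI, hxi2, one_mul, h2]
      show Ring.inverse (algebraMap ℝ (E →L[ℝ] E) m - T) = R0 * RI
      rw [key]
      exact Ring.inverse_unit ⟨((1 : E →L[ℝ] E) - x) * A0, R0 * RI, p1, p2⟩
    have hR0pow : ∀ (n : ℕ) (g : E), 0 ≤ g → 0 ≤ (R0 ^ n) g := by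
      intro n
      induction n with
      | zero => intro g hg; simpa using hg
      | succ n ih =>
        intro g hg
        rw [pow_succ, ContinuousLinearMap.mul_apply]
        exact ih _ (hbpos g hg)
    have hsum : HasSum (fun n : ℕ => x ^ n) RI := hasSum_geom_series_inverse x hx
    have happ : HasSum (fun n : ℕ => R0 ((x ^ n) f)) (R0 (RI f)) :=
      (hsum.mapL (ContinuousLinearMap.apply ℝ E f)).mapL R0
    have hRmf : Rl m f = R0 (RI f) := by
      rw [hinv, ContinuousLinearMap.mul_apply]
    rw [hRmf]
    refine hasSum_le (fun n => ?_) hasSum_zero happ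
    have hxn : (x ^ n) f = (b - m) ^ n • ((R0 ^ n) f) := by
      rw [hxdef, smul_pow, ContinuousLinearMap.smul_apply]
    rw [hxn, ContinuousLinearMap.map_smul]
    exact hsm _ _ (pow_nonneg (by linarith) n) (hbpos _ (hR0pow n f hf))
  -- base case at Λ
  set lam : ℝ := ‖T‖ + 2 with hlam
  have hlam1 : (1:ℝ) ≤ lam := by
    have := norm_nonneg T; simp only [hlam]; linarith
  have hlam0 : (0:ℝ) < lam := by have := norm_nonneg T; linarith
  have hbase : ∀ f : E, 0 ≤ f → 0 ≤ Rl lam f := by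
    intro f hf
    set x : E →L[ℝ] E := lam⁻¹ • T with hxdef
    have hx : ‖x‖ < 1 := by
      have h5 := norm_smul lam⁻¹ T
      rw [Real.norm_eq_abs, abs_of_nonneg (by positivity : (0:ℝ) ≤ lam⁻¹)] at h5
      rw [hxdef, h5, inv_mul_lt_iff₀ hlam0, mul_one]
      simp only [hlam]; linarith
    have hxu : IsUnit ((1 : E →L[ℝ] E) - x) := isUnit_one_sub_of_norm_lt_one hx
    set RI : E →L[ℝ] E := Ring.inverse ((1 : E →L[ℝ] E) - x) with hRI
    have hxi1 : ((1 : E →L[ℝ] E) - x) * RI = 1 := Ring.mul_inverse_cancel _ hxu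
    have hxi2 : RI * ((1 : E →L[ℝ] E) - x) = 1 := Ring.inverse_mul_cancel _ hxu
    have key : algebraMap ℝ (E →L[ℝ] E) lam - T = (lam • (1 : E →L[ℝ] E)) * ((1 : E →L[ℝ] E) - x) := by
      rw [smul_mul_assoc, one_mul, smul_sub, hxdef, smul_smul,
        mul_inv_cancel₀ (ne_of_gt hlam0), one_smul, Algebra.algebraMap_eq_smul_one]
    have hinv : Rl lam = lam⁻¹ • RI := by
      have p1 : ((lam • (1 : E →L[ℝ] E)) * ((1 : E →L[ℝ] E) - x)) * (lam⁻¹ • RI) = 1 := by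
        rw [smul_mul_assoc, one_mul, smul_mul_smul_comm, mul_inv_cancel₀ (ne_of_gt hlam0),
          hxi1, one_smul]
      have p2 : (lam⁻¹ • RI) * ((lam • (1 : E →L[ℝ] E)) * ((1 : E →L[ℝ] E) - x)) = 1 := by
        rw [smul_mul_assoc (lam:ℝ) (1 : E →L[ℝ] E), one_mul, smul_mul_smul_comm,
          inv_mul_cancel₀ (ne_of_gt hlam0), hxi2, one_smul]
      show Ring.inverse (algebraMap ℝ (E →L[ℝ] E) lam - T) = lam⁻¹ • RI
      rw [key]
      exact Ring.inverse_unit ⟨(lam • (1 : E →L[ℝ] E)) * ((1 : E →L[ℝ] E) - x), lam⁻¹ • RI, p1, p2⟩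
    have hsum : HasSum (fun n : ℕ => x ^ n) RI := hasSum_geom_series_inverse x hx
    have happ : HasSum (fun n : ℕ => (x ^ n) f) (RI f) :=
      hsum.mapL (ContinuousLinearMap.apply ℝ E f)
    have hRIf : 0 ≤ RI f := by
      refine hasSum_le (fun n => ?_) hasSum_zero happ
      have hxn : (x ^ n) f = (lam⁻¹) ^ n • ((T ^ n) f) := by
        rw [hxdef, smul_pow, ContinuousLinearMap.smul_apply]
      rw [hxn]
      exact hsm _ _ (pow_nonneg (by positivity) n) (hpowpos n f hf)
    have : Rl lam f = lam⁻¹ • RI f := by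
      rw [hinv, ContinuousLinearMap.smul_apply]
    rw [this]
    exact hsm _ _ (by positivity) hRIf
  -- continuity of the resolvent applied to a vector
  have hRcont : ∀ (f : E) (l : ℝ), 1 ≤ l → ContinuousAt (fun s : ℝ => Rl s f) l := by
    intro f l hl
    have h1 : Continuous (fun s : ℝ => algebraMap ℝ (E →L[ℝ] E) s - T) :=
      (continuous_algebraMap ℝ (E →L[ℝ] E)).sub continuous_const
    have h2 : ContinuousAt Ring.inverse (algebraMap ℝ (E →L[ℝ] E) l - T) := by
      have := NormedRing.inverse_continuousAt (hunit l hl).unit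
      rwa [IsUnit.unit_spec] at this
    have t1 : Filter.Tendsto (fun s : ℝ => algebraMap ℝ (E →L[ℝ] E) s - T) (nhds l)
        (nhds (algebraMap ℝ (E →L[ℝ] E) l - T)) := h1.tendsto l
    have t3 : Filter.Tendsto
        (Ring.inverse ∘ (fun s : ℝ => algebraMap ℝ (E →L[ℝ] E) s - T)) (nhds l)
        (nhds (Ring.inverse (algebraMap ℝ (E →L[ℝ] E) l - T))) := Filter.Tendsto.comp h2 t1
    have t4 : Filter.Tendsto (fun M : E →L[ℝ] E => M f)
        (nhds (Ring.inverse (algebraMap ℝ (E →L[ℝ] E) l - T)))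
        (nhds ((Ring.inverse (algebraMap ℝ (E →L[ℝ] E) l - T)) f)) :=
      ((ContinuousLinearMap.apply ℝ E f).continuous.tendsto _)
    exact t4.comp t3
  -- the continuation set
  set B : Set ℝ := {l : ℝ | l ∈ Icc 1 lam ∧ ∀ m ∈ Icc l lam, ∀ f : E, 0 ≤ f → 0 ≤ Rl m f}
    with hB
  have hlamB : lam ∈ B := by
    refine ⟨⟨hlam1, le_refl _⟩, ?_⟩
    intro m hm f hf
    have : m = lam := le_antisymm hm.2 hm.1
    rw [this]; exact hbase f hf
  have hne : B.Nonempty := ⟨lam, hlamB⟩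
  have hbdd : BddBelow B := ⟨1, fun l hl => hl.1.1⟩
  set b : ℝ := sInf B with hbdef
  have hb1 : 1 ≤ b := le_csInf hne fun l hl => hl.1.1
  have hblam : b ≤ lam := csInf_le hbdd hlamB
  have hPb : ∀ f : E, 0 ≤ f → 0 ≤ Rl b f := by
    intro f hf
    have hbcl : b ∈ closure B := csInf_mem_closure hne hbdd
    have hnebot : (nhdsWithin b B).NeBot := mem_closure_iff_nhdsWithin_neBot.mp hbcl
    have htend : Filter.Tendsto (fun s : ℝ => Rl s f) (nhdsWithin b B) (nhds (Rl b f)) :=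
      ((hRcont f b hb1).continuousWithinAt (s := B))
    refine ge_of_tendsto htend ?_
    filter_upwards [eventually_mem_nhdsWithin] with s hs
    exact hs.2 s ⟨le_refl _, hs.1.2⟩ f hf
  have hbB : b ∈ B := by
    refine ⟨⟨hb1, hblam⟩, ?_⟩
    intro m hm f hf
    rcases eq_or_lt_of_le hm.1 with h | h
    · rw [← h]; exact hPb f hf
    · obtain ⟨l, hlB, hlm⟩ := exists_lt_of_csInf_lt hne h
      exact hlB.2 m ⟨le_of_lt hlm, hm.2⟩ f hf
  have hb_eq : b = 1 := by
    by_contra hbne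
    have hb : 1 < b := lt_of_le_of_ne hb1 (Ne.symm hbne)
    set N : ℝ := ‖Rl b‖ with hN
    have hN0 : 0 ≤ N := norm_nonneg _
    set δ : ℝ := min ((b - 1) / 2) (1 / (2 * (N + 1))) with hδ
    have hδ0 : 0 < δ := by
      exact lt_min (by linarith) (by positivity)
    set μ : ℝ := b - δ with hμ
    have hμ1 : 1 ≤ μ := by
      have : δ ≤ (b - 1) / 2 := min_le_left _ _
      simp only [hμ]; linarith
    have hμB : μ ∈ B := by
      refine ⟨⟨hμ1, by linarith⟩, ?_⟩
      intro m hm f hf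
      rcases le_or_gt b m with h | h
      · exact hbB.2 m ⟨h, hm.2⟩ f hf
      · refine step b m (hμ1.trans hm.1) (le_of_lt h) hPb ?_ f hf
        have h1 : b - m ≤ δ := by simp only [hμ] at hm; linarith [hm.1]
        have h2 : δ ≤ 1 / (2 * (N + 1)) := min_le_right _ _
        have h3 : (b - m) * N ≤ δ * N := by nlinarith
        have h4 : δ * N < 1 := by
          have : δ * N ≤ (1 / (2 * (N + 1))) * N := by nlinarith
          have h5 : (1 / (2 * (N + 1))) * N < 1 := by
            rw [div_mul_eq_mul_div, div_lt_one (by positivity)]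
            nlinarith
          linarith
        linarith
    have : b ≤ μ := csInf_le hbdd hμB
    simp only [hμ] at this
    linarith
  -- final contradiction using the resolvent at 1
  have hP1 : ∀ f : E, 0 ≤ f → 0 ≤ Rl 1 f := by
    rw [hb_eq] at hPb; exact hPb
  set f : E := Rl 1 u with hf
  have hf0 : 0 ≤ f := hP1 u hu0
  have hfu : f - T f = u := by
    have h1 := hmul 1 (le_refl _)
    have h2 : ((algebraMap ℝ (E →L[ℝ] E) 1 - T) * Rl 1) u = (1 : E →L[ℝ] E) u := by rw [h1]
    rw [ContinuousLinearMap.mul_apply] at h2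
    simp only [map_one, ContinuousLinearMap.sub_apply, ContinuousLinearMap.one_apply] at h2
    exact h2
  have hclaim : ∀ n : ℕ, (n : ℝ) • u ≤ f := by
    intro n
    induction n with
    | zero => simpa using hf0
    | succ n ih =>
      have e1 : T ((n:ℝ) • u) ≤ T f := hTmono _ _ ih
      have e2 : (n:ℝ) • u ≤ (n:ℝ) • (T u) := by
        have h := hsm (n:ℝ) (T u - u) (Nat.cast_nonneg n) (sub_nonneg.mpr hTu)
        rw [smul_sub] at h
        exact sub_nonneg.mp h
      have e3 : (n:ℝ) • (T u) = T ((n:ℝ) • u) := (map_smul T (n:ℝ) u).symm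
      have e4 : (n:ℝ) • u ≤ T f := le_trans e2 (e3 ▸ e1)
      have e5 : ((n+1 : ℕ) : ℝ) • u = (n:ℝ) • u + u := by
        push_cast
        rw [add_smul, one_smul]
      rw [e5]
      have e6 : T f + u = f := by rw [← hfu]; abel
      calc (n:ℝ) • u + u ≤ T f + u := add_le_add e4 (le_refl u)
        _ = f := e6
  have hnorm : ∀ n : ℕ, (n : ℝ) * ‖u‖ ≤ ‖f‖ := by
    intro n
    have h0 : 0 ≤ (n:ℝ) • u := hsm _ _ (Nat.cast_nonneg n) hu0
    have h1 : ‖(n:ℝ) • u‖ ≤ ‖f‖ := by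
      refine HasSolidNorm.solid ?_
      rw [abs_of_nonneg h0, abs_of_nonneg (h0.trans (hclaim n))]
      exact hclaim n
    rwa [norm_smul, Real.norm_natCast] at h1
  obtain ⟨n, hn⟩ := exists_nat_gt (‖f‖ / ‖u‖)
  have := hnorm n
  rw [div_lt_iff₀ hu] at hn
  linarith

end Aux

/-- if the measurable kernel `k` is bounded, `0 ≤ k ≤ kbar`, and
its row integrals are bounded below by `c > 0`, then the integral operator
`(Tw)(x) = (1/c)·∫ k(x,y) w(y) dy` on `L¹(x1,x2)` satisfies `‖Tⁿ‖ ≥ 1` for all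
`n ≥ 1`, and hence its spectral radius is at least `1`. -/
theorem normalised_integral_operator_spectral_radius_ge_one
    (x1 x2 : ℝ) (hx : x1 < x2)
    (k : ℝ → ℝ → ℝ) (hkM : Measurable (Function.uncurry k))
    (kbar : ℝ) (hk0 : ∀ x y, 0 ≤ k x y) (hkb : ∀ x y, k x y ≤ kbar)
    (c : ℝ) (hc : 0 < c)
    (hrow : ∀ x ∈ Icc x1 x2, c ≤ ∫ y in Icc x1 x2, k x y)
    (T : Lp ℝ 1 (volume.restrict (Icc x1 x2)) →L[ℝ]
         Lp ℝ 1 (volume.restrict (Icc x1 x2)))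
    (hT : ∀ w : Lp ℝ 1 (volume.restrict (Icc x1 x2)),
      (T w : ℝ → ℝ) =ᵐ[volume.restrict (Icc x1 x2)]
        fun x => (1 / c) * ∫ y in Icc x1 x2, k x y * w y) :
    (∀ n : ℕ, 1 ≤ n → 1 ≤ ‖T ^ n‖) ∧ 1 ≤ spectralRadius ℝ T := by
  have hμuniv : (volume.restrict (Icc x1 x2)) univ = ENNReal.ofReal (x2 - x1) := by
    rw [Measure.restrict_apply_univ, Real.volume_Icc]
  have hμfin : (volume.restrict (Icc x1 x2)) univ ≠ ⊤ := by rw [hμuniv]; exact ENNReal.ofReal_ne_top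
  set u : Lp ℝ 1 (volume.restrict (Icc x1 x2)) := indicatorConstLp 1 MeasurableSet.univ hμfin (1:ℝ) with hudef
  have hu_ae : (u : ℝ → ℝ) =ᵐ[volume.restrict (Icc x1 x2)] fun _ => (1:ℝ) := by
    have h1 := indicatorConstLp_coeFn (μ := volume.restrict (Icc x1 x2)) (p := 1)
      (hs := MeasurableSet.univ) (hμs := hμfin) (c := (1:ℝ))
    filter_upwards [h1] with y hy
    rw [hy, indicator_univ]
  have hsm : ∀ (t : ℝ) (f : Lp ℝ 1 (volume.restrict (Icc x1 x2))), 0 ≤ t → 0 ≤ f → 0 ≤ t • f := by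
    intro t f ht hf
    refine (Lp.coeFn_nonneg _).mp ?_
    filter_upwards [Lp.coeFn_smul t f, (Lp.coeFn_nonneg f).mpr hf] with y h1 h2
    rw [Pi.zero_apply] at h2 ⊢
    rw [h1, Pi.smul_apply, smul_eq_mul]
    exact mul_nonneg ht h2
  have hu0 : 0 ≤ u := by
    refine (Lp.coeFn_nonneg _).mp ?_
    filter_upwards [hu_ae] with y hy
    rw [Pi.zero_apply, hy]
    exact zero_le_one
  have hu_norm : 0 < ‖u‖ := by
    rw [hudef, norm_indicatorConstLp one_ne_zero ENNReal.one_ne_top]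
    rw [measureReal_restrict_apply_univ, Real.volume_real_Icc_of_le hx.le]
    simp only [norm_one, one_mul, ENNReal.toReal_one]
    rw [div_one, Real.rpow_one]
    linarith
  have hTpos : ∀ f : Lp ℝ 1 (volume.restrict (Icc x1 x2)), 0 ≤ f → 0 ≤ T f := by
    intro f hf
    have hf' := (Lp.coeFn_nonneg f).mpr hf
    refine (Lp.coeFn_nonneg _).mp ?_
    have hpt : ∀ x : ℝ, 0 ≤ (1/c) * ∫ y in Icc x1 x2, k x y * f y := by
      intro x
      apply mul_nonneg (by positivity)
      apply integral_nonneg_of_ae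
      filter_upwards [hf'] with y hy
      rw [Pi.zero_apply] at hy
      exact mul_nonneg (hk0 x y) hy
    filter_upwards [hT f] with x hx
    rw [Pi.zero_apply, hx]
    exact hpt x
  have hTu : u ≤ T u := by
    refine (Lp.coeFn_le u (T u)).mp ?_
    have hint : ∀ x : ℝ, (∫ y in Icc x1 x2, k x y * u y) = ∫ y in Icc x1 x2, k x y := by
      intro x
      refine integral_congr_ae ?_
      filter_upwards [hu_ae] with y hy
      rw [hy, mul_one]
    filter_upwards [hT u, hu_ae, ae_restrict_mem measurableSet_Icc] with x hTx hux hmem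
    rw [hux, hTx, hint x]
    have hr := hrow x hmem
    have h2 : (1/c) * c ≤ (1/c) * ∫ y in Icc x1 x2, k x y :=
      mul_le_mul_of_nonneg_left hr (by positivity)
    rw [one_div] at h2 ⊢
    rwa [inv_mul_cancel₀ (ne_of_gt hc)] at h2
  exact aux_positive_operator_main hsm T hTpos u hu_norm hu0 hTu
end

section
/- Let x1 < x2, let k_i, kbar_i : [x1,x2] → ℝ (i = 1,…,n) be continuous and nonnegative, let a be continuous and strictly positive, let β ≥ 0, K, μ > 0, and let k(x,y) = Σ_{i=1}^{n} k_i(x) kbar_i(y). Suppose F > 0 and Z1, …, Z_{n+2} > 0 satisfy the scalar system: μ/K = Z2/(1+βZ1); F·Z1/(1+βZ1) = Σ_{i=1}^{n} Z_{i+2}·∫_{x1}^{x2} k_i(x)/a(x) dx; F·Z2/(1+βZ1) = Σ_{i=1}^{n} Z_{i+2}·∫_{x1}^{x2} k_i(x) dx; and F·Z_{j+2}/(1+βZ1) = Σ_{i=1}^{n} Z_{i+2}·∫_{x1}^{x2} kbar_j(x) k_i(x)/a(x) dx for j = 1,…,n. Define z*(x) = (1+βZ1)·Σ_{i=1}^{n}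 Z_{i+2} k_i(x)/(F·a(x)) and F* = F. Then ∫_{x1}^{x2} z* = Z1, ∫_{x1}^{x2} a z* = Z2, ∫_{x1}^{x2} kbar_j z* = Z_{j+2} for each j, and (z*, F*) is a stationary state of the model: ∫_{x1}^{x2} k(x,y) z*(y) dy = F* a(x) z*(x)/(1 + β∫_{x1}^{x2} z*) for every x and μ/K = (∫_{x1}^{x2} a z*)/(1 + β∫_{x1}^{x2} z*). -/
open MeasureTheory Set Finset

/-- every strictly positive solution of the `(n+3)`-dimensional
scalar stationary system for the finite-rank kernel `k(x,y) = Σ_i k_i(x) kbar_i(y)`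
yields, via `z*(x) = (1+βZ1)·Σ_i Z_{i+2} k_i(x)/(F·a(x))`, a positive stationary
state of the structured predator–prey model. Here `Zv i` denotes `Z_{i+2}`. -/
theorem scalar_system_solution_gives_stationary_state
    (x1 x2 : ℝ) (hx : x1 < x2) (n : ℕ)
    (k kbar : Fin n → ℝ → ℝ)
    (hkC : ∀ i, ContinuousOn (k i) (Icc x1 x2))
    (hkbarC : ∀ i, ContinuousOn (kbar i) (Icc x1 x2))
    (hkN : ∀ i, ∀ x ∈ Icc x1 x2, 0 ≤ k i x)
    (hkbarN : ∀ i, ∀ x ∈ Icc x1 x2, 0 ≤ kbar i x)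
    (a : ℝ → ℝ) (haC : ContinuousOn a (Icc x1 x2))
    (haP : ∀ x ∈ Icc x1 x2, 0 < a x)
    (β K μ : ℝ) (hβ : 0 ≤ β) (hK : 0 < K) (hμ : 0 < μ)
    (F Z1 Z2 : ℝ) (Zv : Fin n → ℝ)
    (hF : 0 < F) (hZ1 : 0 < Z1) (hZ2 : 0 < Z2) (hZv : ∀ i, 0 < Zv i)
    (heq1 : μ / K = Z2 / (1 + β * Z1))
    (heq2 : F * Z1 / (1 + β * Z1)
      = ∑ i, Zv i * ∫ x in Icc x1 x2, k i x / a x)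
    (heq3 : F * Z2 / (1 + β * Z1)
      = ∑ i, Zv i * ∫ x in Icc x1 x2, k i x)
    (heq4 : ∀ j, F * Zv j / (1 + β * Z1)
      = ∑ i, Zv i * ∫ x in Icc x1 x2, kbar j x * k i x / a x)
    (zstar : ℝ → ℝ)
    (hzstar : zstar = fun x => (1 + β * Z1) * (∑ i, Zv i * k i x) / (F * a x))
    (Fstar : ℝ) (hFstar : Fstar = F) :
    (∫ x in Icc x1 x2, zstar x) = Z1 ∧
    (∫ x in Icc x1 x2, a x * zstar x) = Z2 ∧
    (∀ j, (∫ x in Icc x1 x2, kbar j x * zstar x) = Zv j) ∧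
    (∀ x ∈ Icc x1 x2,
      (∫ y in Icc x1 x2, (∑ i, k i x * kbar i y) * zstar y)
        = Fstar * a x * zstar x / (1 + β * ∫ s in Icc x1 x2, zstar s)) ∧
    μ / K = (∫ x in Icc x1 x2, a x * zstar x)
        / (1 + β * ∫ s in Icc x1 x2, zstar s) := by
  have hden : (0:ℝ) < 1 + β * Z1 := by positivity
  have hden' : (1 + β * Z1) ≠ 0 := hden.ne'
  have hF' : F ≠ 0 := hF.ne'
  -- zstar is continuous on Icc
  have hzC : ContinuousOn zstar (Icc x1 x2) := by
    rw [hzstar]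
    apply ContinuousOn.div
    · exact continuousOn_const.mul (continuousOn_finset_sum _ fun i _ =>
        continuousOn_const.mul (hkC i))
    · exact continuousOn_const.mul haC
    · intro x hx'
      exact mul_ne_zero hF' (haP x hx').ne'
  -- key computation lemma
  have key : ∀ g : ℝ → ℝ, ContinuousOn g (Icc x1 x2) →
      (∫ x in Icc x1 x2, g x * zstar x)
        = ∑ i, ((1 + β * Z1) / F * Zv i) * ∫ x in Icc x1 x2, g x * k i x / a x := by
    intro g hgC
    have hEq : ∀ x ∈ Icc x1 x2,
        g x * zstar x = ∑ i, ((1 + β * Z1) / F * Zv i) * (g x * k i x / a x) := by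
      intro x hx'
      have hax : a x ≠ 0 := (haP x hx').ne'
      simp only [hzstar, div_eq_mul_inv, Finset.mul_sum, Finset.sum_mul]
      refine Finset.sum_congr rfl fun i _ => ?_
      field_simp
    rw [setIntegral_congr_fun measurableSet_Icc hEq]
    rw [integral_finset_sum _ (fun i _ => ?_)]
    · exact Finset.sum_congr rfl fun i _ => MeasureTheory.integral_const_mul _ _
    · apply ContinuousOn.integrableOn_Icc
      exact continuousOn_const.mul ((hgC.mul (hkC i)).div haC
        fun x hx' => (haP x hx').ne')
  -- first integral
  have h1 : (∫ x in Icc x1 x2, zstar x) = Z1 := by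
    have := key (fun _ => 1) continuousOn_const
    simp only [one_mul] at this
    rw [this]
    have : ∑ i, ((1 + β * Z1) / F * Zv i) * ∫ x in Icc x1 x2, k i x / a x
        = (1 + β * Z1) / F * ∑ i, Zv i * ∫ x in Icc x1 x2, k i x / a x := by
      rw [Finset.mul_sum]; exact Finset.sum_congr rfl fun i _ => by ring
    rw [this, ← heq2]
    field_simp
  -- second integral
  have h2 : (∫ x in Icc x1 x2, a x * zstar x) = Z2 := by
    have := key a haC
    rw [this]
    have hinner : ∀ i : Fin n, (∫ x in Icc x1 x2, a x * k i x / a x)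
        = ∫ x in Icc x1 x2, k i x := by
      intro i
      refine setIntegral_congr_fun measurableSet_Icc fun x hx' => ?_
      have hax : a x ≠ 0 := (haP x hx').ne'
      field_simp
    have : ∑ i, ((1 + β * Z1) / F * Zv i) * ∫ x in Icc x1 x2, a x * k i x / a x
        = (1 + β * Z1) / F * ∑ i, Zv i * ∫ x in Icc x1 x2, k i x := by
      rw [Finset.mul_sum]
      exact Finset.sum_congr rfl fun i _ => by rw [hinner i]; ring
    rw [this, ← heq3]
    field_simp
  -- third family of integrals
  have h3 : ∀ j, (∫ x in Icc x1 x2, kbar j x * zstar x) = Zv j := by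
    intro j
    rw [key (kbar j) (hkbarC j)]
    have : ∑ i, ((1 + β * Z1) / F * Zv i) * ∫ x in Icc x1 x2, kbar j x * k i x / a x
        = (1 + β * Z1) / F * ∑ i, Zv i * ∫ x in Icc x1 x2, kbar j x * k i x / a x := by
      rw [Finset.mul_sum]; exact Finset.sum_congr rfl fun i _ => by ring
    rw [this, ← heq4 j]
    field_simp
  refine ⟨h1, h2, h3, ?_, ?_⟩
  · intro x hx'
    have hax : a x ≠ 0 := (haP x hx').ne'
    have hLHS : (∫ y in Icc x1 x2, (∑ i, k i x * kbar i y) * zstar y)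
        = ∑ i, k i x * Zv i := by
      have hEq : ∀ y ∈ Icc x1 x2,
          (∑ i, k i x * kbar i y) * zstar y = ∑ i, k i x * (kbar i y * zstar y) := by
        intro y hy
        rw [Finset.sum_mul]
        exact Finset.sum_congr rfl fun i _ => by ring
      rw [setIntegral_congr_fun measurableSet_Icc hEq]
      rw [integral_finset_sum _ (fun i _ => ?_)]
      · exact Finset.sum_congr rfl fun i _ => by
          rw [MeasureTheory.integral_const_mul, h3 i]
      · exact ContinuousOn.integrableOn_Icc
          (continuousOn_const.mul ((hkbarC i).mul hzC))
    rw [hLHS, h1, hFstar, hzstar]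
    field_simp
    exact Finset.sum_congr rfl fun i _ => mul_comm _ _
  · rw [h1, h2, heq1]
end

section
/- Let x1 < x2, let k : [x1,x2]² → ℝ and a : [x1,x2] → ℝ be continuous and strictly positive, and let β ≥ 0, K, μ > 0. Suppose κ* ∈ L¹(x1,x2) is strictly positive a.e. and F* > 0, Z* > 0 satisfy: κ*(x) = ((1+βZ*)/F*)·∫_{x1}^{x2} k(x,y)·κ*(y)/a(y) dy for a.e. x; F* = (K/μ)·∫_{x1}^{x2} κ*(x) dx; F* − β·∫_{x1}^{x2} κ*(x)/a(x) dx > 0; and Z* = (∫_{x1}^{x2} κ*(x)/a(x) dx)/(F* − β·∫_{x1}^{x2} κ*(x)/a(x) dx). Then, setting z*(x) = (1+βZ*)·κ*(x)/(F*·a(x)), the pair (z*, F*) is a positive stationary state of the model: z* ∈ L¹ is strictly positive a.e., ∫_{x1}^{x2} z* = Z*, ∫_{x1}^{x2} k(x,y) z*(y) dy = κ*(x) = F* a(x) z*(x)/(1 + βZ*) for a.e. x, and μ/K = (∫_{x1}^{x2} a z*)/(1 + βZ*). -/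
open MeasureTheory Set

/-- a positive solution `(κ*, F*, Z*)` of the reformulated
steady-state problem for a general kernel yields, via
`z*(x) = (1+βZ*)·κ*(x)/(F*·a(x))`, a positive stationary state of the model. -/
theorem general_kernel_reformulation_gives_stationary_state
    (x1 x2 : ℝ) (hx : x1 < x2)
    (k : ℝ → ℝ → ℝ)
    (hkC : ContinuousOn (Function.uncurry k) (Icc x1 x2 ×ˢ Icc x1 x2))
    (hkP : ∀ x ∈ Icc x1 x2, ∀ y ∈ Icc x1 x2, 0 < k x y)
    (a : ℝ → ℝ) (haC : ContinuousOn a (Icc x1 x2))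
    (haP : ∀ x ∈ Icc x1 x2, 0 < a x)
    (β K μ : ℝ) (hβ : 0 ≤ β) (hK : 0 < K) (hμ : 0 < μ)
    (κstar : ℝ → ℝ) (Fstar Zstar : ℝ)
    (hκI : IntegrableOn κstar (Icc x1 x2))
    (hκP : ∀ᵐ x ∂(volume.restrict (Icc x1 x2)), 0 < κstar x)
    (hF : 0 < Fstar) (hZ : 0 < Zstar)
    (heq1 : ∀ᵐ x ∂(volume.restrict (Icc x1 x2)),
      κstar x = ((1 + β * Zstar) / Fstar)
        * ∫ y in Icc x1 x2, k x y * κstar y / a y)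
    (heq2 : Fstar = (K / μ) * ∫ x in Icc x1 x2, κstar x)
    (heq3 : 0 < Fstar - β * ∫ x in Icc x1 x2, κstar x / a x)
    (heq4 : Zstar = (∫ x in Icc x1 x2, κstar x / a x)
        / (Fstar - β * ∫ x in Icc x1 x2, κstar x / a x))
    (zstar : ℝ → ℝ)
    (hzstar : zstar = fun x => (1 + β * Zstar) * κstar x / (Fstar * a x)) :
    IntegrableOn zstar (Icc x1 x2) ∧
    (∀ᵐ x ∂(volume.restrict (Icc x1 x2)), 0 < zstar x) ∧
    (∫ x in Icc x1 x2, zstar x) = Zstar ∧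
    (∀ᵐ x ∂(volume.restrict (Icc x1 x2)),
      (∫ y in Icc x1 x2, k x y * zstar y) = κstar x ∧
      κstar x = Fstar * a x * zstar x / (1 + β * Zstar)) ∧
    μ / K = (∫ x in Icc x1 x2, a x * zstar x) / (1 + β * Zstar) := by
  have hc0 : 0 < 1 + β * Zstar := by positivity
  have hFne : Fstar ≠ 0 := hF.ne'
  -- minimum of a on Icc
  obtain ⟨x0, hx0, hmin'⟩ :=
    isCompact_Icc.exists_isMinOn ⟨x1, le_refl x1, hx.le⟩ haC
  have hm : 0 < a x0 := haP x0 hx0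
  have hmem : ∀ᵐ x ∂(volume.restrict (Icc x1 x2)), x ∈ Icc x1 x2 :=
    ae_restrict_mem measurableSet_Icc
  have haesm : AEStronglyMeasurable a (volume.restrict (Icc x1 x2)) :=
    haC.aestronglyMeasurable measurableSet_Icc
  -- zstar rewritten
  have hz' : zstar = fun x => (a x)⁻¹ * ((1 + β * Zstar) / Fstar * κstar x) := by
    rw [hzstar]; funext x
    rw [div_eq_mul_inv, div_eq_mul_inv, mul_inv]
    ring
  have hint : IntegrableOn zstar (Icc x1 x2) := by
    rw [hz']
    exact ((hκI.const_mul _).bdd_mul (c := (a x0)⁻¹) haesm.aemeasurable.inv.aestronglyMeasurable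
      (hmem.mono fun x hxm => by
        rw [Real.norm_eq_abs, abs_of_nonneg (inv_nonneg.2 (haP x hxm).le)]
        exact inv_anti₀ hm (hmin' hxm)))
  refine ⟨hint, ?_, ?_, ?_, ?_⟩
  · filter_upwards [hκP, hmem] with x h1 h2
    rw [hzstar]
    have := haP x h2
    positivity
  · -- integral of zstar equals Zstar
    have h1 : (∫ x in Icc x1 x2, zstar x)
        = ((1 + β * Zstar) / Fstar) * ∫ x in Icc x1 x2, κstar x / a x := by
      rw [← integral_const_mul]
      refine integral_congr_ae (Filter.Eventually.of_forall fun x => ?_)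
      rw [hzstar]
      simp only [div_eq_mul_inv, mul_inv]
      ring
    set I := ∫ x in Icc x1 x2, κstar x / a x with hI
    have hD : Fstar - β * I ≠ 0 := heq3.ne'
    rw [h1, heq4]
    field_simp
    ring
  · -- a.e. equalities
    filter_upwards [heq1, hmem] with x h1 h2
    constructor
    · have hcong : (∫ y in Icc x1 x2, k x y * zstar y)
          = ((1 + β * Zstar) / Fstar) * ∫ y in Icc x1 x2, k x y * κstar y / a y := by
        rw [← integral_const_mul]
        refine integral_congr_ae (Filter.Eventually.of_forall fun y => ?_)
        rw [hzstar]
        simp only [div_eq_mul_inv, mul_inv]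
        ring
      rw [hcong, ← h1]
    · have ha : a x ≠ 0 := (haP x h2).ne'
      rw [hzstar]
      field_simp
  · -- the last scalar identity
    have h2 : (∫ x in Icc x1 x2, a x * zstar x)
        = ((1 + β * Zstar) / Fstar) * ∫ x in Icc x1 x2, κstar x := by
      rw [← integral_const_mul]
      refine integral_congr_ae ?_
      filter_upwards [hmem] with x hxm
      have ha : a x ≠ 0 := (haP x hxm).ne'
      rw [hzstar]
      field_simp
    have hκint : (∫ x in Icc x1 x2, κstar x) = μ * Fstar / K := by
      rw [heq2]; field_simp
    rw [h2, hκint]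
    field_simp
end
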